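/- arXiv:1401.2946 — 6 statements merged into one kernel-verified Lean document; each statement's English description precedes it below -/
import Mathlib

section
/- If |f'| is harmonically quasi-convex on [a,b], then for all x ∈ [a,b], λ ∈ [0,1] and α > 0: |I_{f,g}(x,λ,α,a,b)| ≤ ((x−a)^{α+1}/((ax)^{α−1} x²)) · max{|f'(x)|, |f'(a)|} · C₂(α,λ,1,a,x) + ((b−x)^{α+1}/((bx)^{α−1} b²)) · max{|f'(x)|, |f'(b)|} · C₃(α,λ,1,x,b). -/
open Real MeasureTheory Set intervalIntegral

/-- Riemann–Liouville left fractional integral `J_{u+}^α h (y)`. -/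
noncomputable def RLplus (α u y : ℝ) (h : ℝ → ℝ) : ℝ :=
  (1 / Real.Gamma α) * ∫ t in u..y, (y - t) ^ (α - 1) * h t

/-- Riemann–Liouville right fractional integral `J_{v−}^α h (y)`. -/
noncomputable def RLminus (α v y : ℝ) (h : ℝ → ℝ) : ℝ :=
  (1 / Real.Gamma α) * ∫ t in y..v, (t - y) ^ (α - 1) * h t

/-- The quantity `I_{f,g}(x, λ, α, a, b)` with `g u = 1/u`. -/
noncomputable def Ifg (f : ℝ → ℝ) (x lam α a b : ℝ) : ℝ :=
  (1 - lam) * (((x - a) / (a * x)) ^ α + ((b - x) / (b * x)) ^ α) * f x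
    + lam * (((x - a) / (a * x)) ^ α * f a + ((b - x) / (b * x)) ^ α * f b)
    - Real.Gamma (α + 1) *
        (RLplus α (1 / x) (1 / a) (fun u => f (1 / u))
          + RLminus α (1 / x) (1 / b) (fun u => f (1 / u)))

/-- `C₁(α, λ) = (2αλ^{1+1/α} + 1)/(α+1) − λ`. -/
noncomputable def C1 (α lam : ℝ) : ℝ :=
  (2 * α * lam ^ (1 + 1 / α) + 1) / (α + 1) - lam

/-- `C₂(α, λ, q, a, x) = x^{2q} ∫₀¹ |t^α − λ| (t a + (1−t) x)^{−2q} dt`. -/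
noncomputable def C2 (α lam q a x : ℝ) : ℝ :=
  x ^ (2 * q) * ∫ t in (0:ℝ)..1, |t ^ α - lam| * (t * a + (1 - t) * x) ^ (-(2 * q))

/-- `C₃(α, λ, q, x, b) = b^{2q} ∫₀¹ |t^α − λ| (t b + (1−t) x)^{−2q} dt`. -/
noncomputable def C3 (α lam q x b : ℝ) : ℝ :=
  b ^ (2 * q) * ∫ t in (0:ℝ)..1, |t ^ α - lam| * (t * b + (1 - t) * x) ^ (-(2 * q))

/-- `h` is harmonically quasi-convex on `[a, b] ⊆ (0, ∞)`. -/
def HarmQuasiConvexOn (a b : ℝ) (h : ℝ → ℝ) : Prop :=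
  ∀ u ∈ Icc a b, ∀ v ∈ Icc a b, ∀ t ∈ Icc (0:ℝ) 1,
    h (u * v / (t * u + (1 - t) * v)) ≤ max (h u) (h v)


lemma inv_image_Icc {p q : ℝ} (hp : 0 < p) (hpq : p ≤ q) :
    (fun u : ℝ => u⁻¹) '' Icc q⁻¹ p⁻¹ = Icc p q := by
  have hq : 0 < q := lt_of_lt_of_le hp hpq
  ext v
  simp only [mem_image, mem_Icc]
  constructor
  · rintro ⟨u, ⟨h1, h2⟩, rfl⟩
    have hu : 0 < u := lt_of_lt_of_le (inv_pos.2 hq) h1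
    exact ⟨by simpa using inv_anti₀ hu h2, by simpa using inv_anti₀ (inv_pos.2 hq) h1⟩
  · rintro ⟨h1, h2⟩
    have hv : 0 < v := lt_of_lt_of_le hp h1
    exact ⟨v⁻¹, ⟨inv_anti₀ hv h2, inv_anti₀ hp h1⟩, inv_inv v⟩

lemma mem_Icc_inv {p q u : ℝ} (hp : 0 < p) (hpq : p ≤ q) (hu : u ∈ Icc q⁻¹ p⁻¹) :
    0 < u ∧ u⁻¹ ∈ Icc p q := by
  have hq : 0 < q := lt_of_lt_of_le hp hpq
  have hu0 : 0 < u := lt_of_lt_of_le (inv_pos.2 hq) hu.1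
  refine ⟨hu0, ?_⟩
  rw [← inv_image_Icc hp hpq]
  exact ⟨u, hu, rfl⟩

lemma psi_II {f' : ℝ → ℝ} {p q : ℝ} (hp : 0 < p) (hpq : p ≤ q)
    (hint : IntervalIntegrable f' volume p q) :
    IntervalIntegrable (fun u => f' u⁻¹ / u ^ 2) volume q⁻¹ p⁻¹ := by
  have hq : 0 < q := lt_of_lt_of_le hp hpq
  have hcd : q⁻¹ ≤ p⁻¹ := inv_anti₀ hp hpq
  rw [intervalIntegrable_iff_integrableOn_Icc_of_le hcd]
  have hmeas : MeasurableSet (Icc q⁻¹ p⁻¹) := measurableSet_Icc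
  have hderiv : ∀ u ∈ Icc q⁻¹ p⁻¹,
      HasDerivWithinAt (fun u : ℝ => u⁻¹) (-(u ^ 2)⁻¹) (Icc q⁻¹ p⁻¹) u := by
    intro u hu
    exact (hasDerivAt_inv (mem_Icc_inv hp hpq hu).1.ne').hasDerivWithinAt
  have hinj : InjOn (fun u : ℝ => u⁻¹) (Icc q⁻¹ p⁻¹) := by
    intro u hu v hv h
    have hu0 := (mem_Icc_inv hp hpq hu).1
    have hv0 := (mem_Icc_inv hp hpq hv).1
    simpa [inv_inv] using congrArg Inv.inv h
  have := (integrableOn_image_iff_integrableOn_abs_deriv_smul hmeas hderiv hinj f').mp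
  rw [inv_image_Icc hp hpq] at this
  have h2 := this ((intervalIntegrable_iff_integrableOn_Icc_of_le hpq).mp hint)
  have heq : (fun u : ℝ => |(-(u ^ 2)⁻¹)| • f' u⁻¹) = fun u => f' u⁻¹ / u ^ 2 := by
    funext u
    rw [abs_neg, abs_inv, abs_pow, sq_abs, smul_eq_mul, div_eq_mul_inv, mul_comm]
  rwa [heq] at h2

lemma cont_f_inv {f f' : ℝ → ℝ} {p q : ℝ} (hp : 0 < p) (hpq : p ≤ q)
    (hf : ∀ u ∈ Icc p q, HasDerivAt f (f' u) u) :
    ContinuousOn (fun u : ℝ => f u⁻¹) (Icc q⁻¹ p⁻¹) := by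
  intro u hu
  obtain ⟨hu0, hui⟩ := mem_Icc_inv hp hpq hu
  exact (((hf _ hui).continuousAt).comp ((continuousAt_inv₀ hu0.ne'))).continuousWithinAt

lemma hasDerivAt_f_inv {f f' : ℝ → ℝ} {p q : ℝ} (hp : 0 < p) (hpq : p ≤ q)
    (hf : ∀ u ∈ Icc p q, HasDerivAt f (f' u) u) {u : ℝ} (hu : u ∈ Icc q⁻¹ p⁻¹) :
    HasDerivAt (fun u : ℝ => f u⁻¹) (-(f' u⁻¹ / u ^ 2)) u := by
  obtain ⟨hu0, hui⟩ := mem_Icc_inv hp hpq hu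
  have := (hf _ hui).comp u (hasDerivAt_inv hu0.ne')
  exact this.congr_deriv (by
  ring)

lemma ftc_inv {f f' : ℝ → ℝ} {p q : ℝ} (hp : 0 < p) (hpq : p ≤ q)
    (hf : ∀ u ∈ Icc p q, HasDerivAt f (f' u) u)
    (hint : IntervalIntegrable f' volume p q) :
    ∫ u in q⁻¹..p⁻¹, -(f' u⁻¹ / u ^ 2) = f p - f q := by
  have hcd : q⁻¹ ≤ p⁻¹ := inv_anti₀ hp hpq
  have h := intervalIntegral.integral_eq_sub_of_hasDerivAt
    (f := fun u : ℝ => f u⁻¹) (f' := fun u => -(f' u⁻¹ / u ^ 2))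
    (a := q⁻¹) (b := p⁻¹)
    (fun u hu => hasDerivAt_f_inv hp hpq hf (by rwa [uIcc_of_le hcd] at hu))
    ((psi_II hp hpq hint).neg)
  rw [h]; simp

lemma kernel_left_II {p q α : ℝ} (hα : 0 < α) :
    IntervalIntegrable (fun u : ℝ => (p⁻¹ - u) ^ (α - 1)) volume q⁻¹ p⁻¹ := by
  have h := (intervalIntegral.intervalIntegrable_rpow' (a := p⁻¹ - q⁻¹) (b := 0)
    (by linarith : (-1:ℝ) < α - 1)).comp_sub_left p⁻¹
  simpa using h

lemma kernel_right_II {p q α : ℝ} (hα : 0 < α) :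
    IntervalIntegrable (fun u : ℝ => (u - q⁻¹) ^ (α - 1)) volume q⁻¹ p⁻¹ := by
  have h := (intervalIntegral.intervalIntegrable_rpow' (a := 0) (b := p⁻¹ - q⁻¹)
    (by linarith : (-1:ℝ) < α - 1)).comp_sub_right q⁻¹
  simpa using h

lemma key_left {f f' : ℝ → ℝ} {p q α : ℝ} (hp : 0 < p) (hpq : p ≤ q) (hα : 0 < α)
    (hf : ∀ u ∈ Icc p q, HasDerivAt f (f' u) u)
    (hint : IntervalIntegrable f' volume p q) :
    ∫ u in q⁻¹..p⁻¹,
        ((p⁻¹ - u) ^ (α - 1) * f u⁻¹ + (p⁻¹ - u) ^ α / α * (f' u⁻¹ / u ^ 2))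
      = (p⁻¹ - q⁻¹) ^ α * f q / α := by
  have hcd : q⁻¹ ≤ p⁻¹ := inv_anti₀ hp hpq
  have hcont : ContinuousOn (fun u : ℝ => -((p⁻¹ - u) ^ α / α * f u⁻¹)) (Icc q⁻¹ p⁻¹) := by
    refine ContinuousOn.neg (ContinuousOn.mul (ContinuousOn.div_const ?_ α) (cont_f_inv hp hpq hf))
    exact (continuous_const.sub continuous_id).continuousOn.rpow_const
      (fun u _ => Or.inr hα.le)
  have hderiv : ∀ u ∈ Ioo q⁻¹ p⁻¹,
      HasDerivAt (fun u : ℝ => -((p⁻¹ - u) ^ α / α * f u⁻¹))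
        ((p⁻¹ - u) ^ (α - 1) * f u⁻¹ + (p⁻¹ - u) ^ α / α * (f' u⁻¹ / u ^ 2)) u := by
    intro u hu
    have hmem : u ∈ Icc q⁻¹ p⁻¹ := Ioo_subset_Icc_self hu
    have h1 : HasDerivAt (fun u : ℝ => (p⁻¹ - u) ^ α)
        ((-1) * α * (p⁻¹ - u) ^ (α - 1)) u := by
      exact ((hasDerivAt_id u).const_sub p⁻¹).rpow_const (Or.inl (by simp; linarith [hu.2]))
    have h2 := hasDerivAt_f_inv hp hpq hf hmem
    have := ((h1.div_const α).mul h2).neg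
    exact this.congr_deriv (by
    field_simp
    ring)
  have hint2 : IntervalIntegrable
      (fun u => (p⁻¹ - u) ^ (α - 1) * f u⁻¹ + (p⁻¹ - u) ^ α / α * (f' u⁻¹ / u ^ 2))
      volume q⁻¹ p⁻¹ := by
    refine IntervalIntegrable.add ?_ ?_
    · exact (kernel_left_II hα).mul_continuousOn (by rw [uIcc_of_le hcd]; exact cont_f_inv hp hpq hf)
    · refine (psi_II hp hpq hint).continuousOn_mul ?_
      rw [uIcc_of_le hcd]
      exact ContinuousOn.div_const ((continuous_const.sub continuous_id).continuousOn.rpow_const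
        (fun u _ => Or.inr hα.le)) α
  have h := intervalIntegral.integral_eq_sub_of_hasDerivAt_of_le hcd hcont hderiv hint2
  rw [h]
  have : (p⁻¹ - p⁻¹ : ℝ) ^ α = 0 := by
    rw [sub_self, Real.zero_rpow hα.ne']
  simp only [this, inv_inv]
  ring

lemma key_right {f f' : ℝ → ℝ} {p q α : ℝ} (hp : 0 < p) (hpq : p ≤ q) (hα : 0 < α)
    (hf : ∀ u ∈ Icc p q, HasDerivAt f (f' u) u)
    (hint : IntervalIntegrable f' volume p q) :
    ∫ u in q⁻¹..p⁻¹,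
        ((u - q⁻¹) ^ (α - 1) * f u⁻¹ - (u - q⁻¹) ^ α / α * (f' u⁻¹ / u ^ 2))
      = (p⁻¹ - q⁻¹) ^ α * f p / α := by
  have hcd : q⁻¹ ≤ p⁻¹ := inv_anti₀ hp hpq
  have hcont : ContinuousOn (fun u : ℝ => (u - q⁻¹) ^ α / α * f u⁻¹) (Icc q⁻¹ p⁻¹) := by
    refine ContinuousOn.mul (ContinuousOn.div_const ?_ α) (cont_f_inv hp hpq hf)
    exact (continuous_id.sub continuous_const).continuousOn.rpow_const
      (fun u _ => Or.inr hα.le)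
  have hderiv : ∀ u ∈ Ioo q⁻¹ p⁻¹,
      HasDerivAt (fun u : ℝ => (u - q⁻¹) ^ α / α * f u⁻¹)
        ((u - q⁻¹) ^ (α - 1) * f u⁻¹ - (u - q⁻¹) ^ α / α * (f' u⁻¹ / u ^ 2)) u := by
    intro u hu
    have hmem : u ∈ Icc q⁻¹ p⁻¹ := Ioo_subset_Icc_self hu
    have h1 : HasDerivAt (fun u : ℝ => (u - q⁻¹) ^ α)
        (1 * α * (u - q⁻¹) ^ (α - 1)) u := by
      exact ((hasDerivAt_id u).sub_const q⁻¹).rpow_const (Or.inl (by simp; linarith [hu.1]))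
    have h2 := hasDerivAt_f_inv hp hpq hf hmem
    have := (h1.div_const α).mul h2
    exact this.congr_deriv (by
    field_simp
    ring)
  have hint2 : IntervalIntegrable
      (fun u => (u - q⁻¹) ^ (α - 1) * f u⁻¹ - (u - q⁻¹) ^ α / α * (f' u⁻¹ / u ^ 2))
      volume q⁻¹ p⁻¹ := by
    refine IntervalIntegrable.sub ?_ ?_
    · exact (kernel_right_II hα).mul_continuousOn (by rw [uIcc_of_le hcd]; exact cont_f_inv hp hpq hf)
    · refine (psi_II hp hpq hint).continuousOn_mul ?_
      rw [uIcc_of_le hcd]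
      exact ContinuousOn.div_const ((continuous_id.sub continuous_const).continuousOn.rpow_const
        (fun u _ => Or.inr hα.le)) α
  have h := intervalIntegral.integral_eq_sub_of_hasDerivAt_of_le hcd hcont hderiv hint2
  rw [h]
  have : (q⁻¹ - q⁻¹ : ℝ) ^ α = 0 := by
    rw [sub_self, Real.zero_rpow hα.ne']
  simp only [this, inv_inv]
  ring

lemma identity_left {f f' : ℝ → ℝ} {p q α lam : ℝ} (hp : 0 < p) (hpq : p ≤ q) (hα : 0 < α)
    (hf : ∀ u ∈ Icc p q, HasDerivAt f (f' u) u)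
    (hint : IntervalIntegrable f' volume p q) :
    ((q - p) / (p * q)) ^ α * ((1 - lam) * f q + lam * f p)
        - Real.Gamma (α + 1) * RLplus α (1 / q) (1 / p) (fun u => f (1 / u))
      = ∫ u in q⁻¹..p⁻¹,
          ((p⁻¹ - u) ^ α - lam * ((q - p) / (p * q)) ^ α) * (f' u⁻¹ / u ^ 2) := by
  have hq : 0 < q := lt_of_lt_of_le hp hpq
  have hcd : q⁻¹ ≤ p⁻¹ := inv_anti₀ hp hpq
  have hΓ : Real.Gamma α ≠ 0 := (Real.Gamma_pos_of_pos hα).ne'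
  have hK : (q - p) / (p * q) = p⁻¹ - q⁻¹ := by field_simp
  have hψc : ContinuousOn (fun u : ℝ => (p⁻¹ - u) ^ α) (Icc q⁻¹ p⁻¹) :=
    (continuous_const.sub continuous_id).continuousOn.rpow_const (fun u _ => Or.inr hα.le)
  have i1 : IntervalIntegrable (fun u : ℝ => (p⁻¹ - u) ^ (α - 1) * f u⁻¹) volume q⁻¹ p⁻¹ :=
    (kernel_left_II hα).mul_continuousOn (by rw [uIcc_of_le hcd]; exact cont_f_inv hp hpq hf)
  have i2 : IntervalIntegrable (fun u : ℝ => (p⁻¹ - u) ^ α / α * (f' u⁻¹ / u ^ 2))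
      volume q⁻¹ p⁻¹ :=
    (psi_II hp hpq hint).continuousOn_mul
      (by rw [uIcc_of_le hcd]; exact hψc.div_const α)
  have i2' : IntervalIntegrable (fun u : ℝ => (p⁻¹ - u) ^ α * (f' u⁻¹ / u ^ 2))
      volume q⁻¹ p⁻¹ :=
    (psi_II hp hpq hint).continuousOn_mul (by rw [uIcc_of_le hcd]; exact hψc)
  have hkey := key_left hp hpq hα hf hint
  rw [intervalIntegral.integral_add i1 i2, eq_div_iff hα.ne'] at hkey
  have h2 : (∫ u in q⁻¹..p⁻¹, (p⁻¹ - u) ^ α * (f' u⁻¹ / u ^ 2))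
      = α * ∫ u in q⁻¹..p⁻¹, (p⁻¹ - u) ^ α / α * (f' u⁻¹ / u ^ 2) := by
    rw [← intervalIntegral.integral_const_mul]
    congr 1; funext u; field_simp
  have hftc := ftc_inv hp hpq hf hint
  rw [intervalIntegral.integral_neg] at hftc
  have hRL : Real.Gamma (α + 1) * RLplus α (1 / q) (1 / p) (fun u => f (1 / u))
      = α * ∫ u in q⁻¹..p⁻¹, (p⁻¹ - u) ^ (α - 1) * f u⁻¹ := by
    simp only [RLplus, one_div]
    rw [Real.Gamma_add_one hα.ne']
    field_simp
  have hRHS : (∫ u in q⁻¹..p⁻¹,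
        ((p⁻¹ - u) ^ α - lam * ((q - p) / (p * q)) ^ α) * (f' u⁻¹ / u ^ 2))
      = (∫ u in q⁻¹..p⁻¹, (p⁻¹ - u) ^ α * (f' u⁻¹ / u ^ 2))
        - lam * ((q - p) / (p * q)) ^ α * ∫ u in q⁻¹..p⁻¹, f' u⁻¹ / u ^ 2 := by
    rw [← intervalIntegral.integral_const_mul,
      ← intervalIntegral.integral_sub i2' ((psi_II hp hpq hint).const_mul _)]
    congr 1; funext u; ring
  rw [hRHS, hRL, hK, h2]
  linear_combination - hkey - lam * (p⁻¹ - q⁻¹) ^ α * hftc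

lemma identity_right {f f' : ℝ → ℝ} {p q α lam : ℝ} (hp : 0 < p) (hpq : p ≤ q) (hα : 0 < α)
    (hf : ∀ u ∈ Icc p q, HasDerivAt f (f' u) u)
    (hint : IntervalIntegrable f' volume p q) :
    ((q - p) / (q * p)) ^ α * ((1 - lam) * f p + lam * f q)
        - Real.Gamma (α + 1) * RLminus α (1 / p) (1 / q) (fun u => f (1 / u))
      = ∫ u in q⁻¹..p⁻¹,
          (lam * ((q - p) / (q * p)) ^ α - (u - q⁻¹) ^ α) * (f' u⁻¹ / u ^ 2) := by
  have hq : 0 < q := lt_of_lt_of_le hp hpq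
  have hcd : q⁻¹ ≤ p⁻¹ := inv_anti₀ hp hpq
  have hΓ : Real.Gamma α ≠ 0 := (Real.Gamma_pos_of_pos hα).ne'
  have hK : (q - p) / (q * p) = p⁻¹ - q⁻¹ := by rw [mul_comm]; field_simp
  have hψc : ContinuousOn (fun u : ℝ => (u - q⁻¹) ^ α) (Icc q⁻¹ p⁻¹) :=
    (continuous_id.sub continuous_const).continuousOn.rpow_const (fun u _ => Or.inr hα.le)
  have i1 : IntervalIntegrable (fun u : ℝ => (u - q⁻¹) ^ (α - 1) * f u⁻¹) volume q⁻¹ p⁻¹ :=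
    (kernel_right_II hα).mul_continuousOn (by rw [uIcc_of_le hcd]; exact cont_f_inv hp hpq hf)
  have i2 : IntervalIntegrable (fun u : ℝ => (u - q⁻¹) ^ α / α * (f' u⁻¹ / u ^ 2))
      volume q⁻¹ p⁻¹ :=
    (psi_II hp hpq hint).continuousOn_mul
      (by rw [uIcc_of_le hcd]; exact hψc.div_const α)
  have i2' : IntervalIntegrable (fun u : ℝ => (u - q⁻¹) ^ α * (f' u⁻¹ / u ^ 2))
      volume q⁻¹ p⁻¹ :=
    (psi_II hp hpq hint).continuousOn_mul (by rw [uIcc_of_le hcd]; exact hψc)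
  have hkey := key_right hp hpq hα hf hint
  rw [intervalIntegral.integral_sub i1 i2, eq_div_iff hα.ne'] at hkey
  have h2 : (∫ u in q⁻¹..p⁻¹, (u - q⁻¹) ^ α * (f' u⁻¹ / u ^ 2))
      = α * ∫ u in q⁻¹..p⁻¹, (u - q⁻¹) ^ α / α * (f' u⁻¹ / u ^ 2) := by
    rw [← intervalIntegral.integral_const_mul]
    congr 1; funext u; field_simp
  have hftc := ftc_inv hp hpq hf hint
  rw [intervalIntegral.integral_neg] at hftc
  have hRL : Real.Gamma (α + 1) * RLminus α (1 / p) (1 / q) (fun u => f (1 / u))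
      = α * ∫ u in q⁻¹..p⁻¹, (u - q⁻¹) ^ (α - 1) * f u⁻¹ := by
    simp only [RLminus, one_div]
    rw [Real.Gamma_add_one hα.ne']
    rw [mul_assoc, mul_inv_cancel_left₀ hΓ]
  have hRHS : (∫ u in q⁻¹..p⁻¹,
        (lam * ((q - p) / (q * p)) ^ α - (u - q⁻¹) ^ α) * (f' u⁻¹ / u ^ 2))
      = lam * ((q - p) / (q * p)) ^ α * (∫ u in q⁻¹..p⁻¹, f' u⁻¹ / u ^ 2)
        - ∫ u in q⁻¹..p⁻¹, (u - q⁻¹) ^ α * (f' u⁻¹ / u ^ 2) := by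
    rw [← intervalIntegral.integral_const_mul,
      ← intervalIntegral.integral_sub ((psi_II hp hpq hint).const_mul _) i2']
    congr 1; funext u; ring
  rw [hRHS, hRL, hK, h2]
  linear_combination - hkey + lam * (p⁻¹ - q⁻¹) ^ α * hftc

lemma bound_int {f' : ℝ → ℝ} {p q M : ℝ} (hp : 0 < p) (hpq : p ≤ q)
    (hint : IntervalIntegrable f' volume p q)
    {w : ℝ → ℝ} (hw : ContinuousOn w (Icc q⁻¹ p⁻¹))
    (hM : ∀ v ∈ Icc p q, |f' v| ≤ M) :
    |∫ u in q⁻¹..p⁻¹, w u * (f' u⁻¹ / u ^ 2)| ≤ M * ∫ u in q⁻¹..p⁻¹, |w u| / u ^ 2 := by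
  have hq : 0 < q := lt_of_lt_of_le hp hpq
  have hcd : q⁻¹ ≤ p⁻¹ := inv_anti₀ hp hpq
  have hi1 : IntervalIntegrable (fun u => w u * (f' u⁻¹ / u ^ 2)) volume q⁻¹ p⁻¹ :=
    (psi_II hp hpq hint).continuousOn_mul (by rwa [uIcc_of_le hcd])
  have hi2 : IntervalIntegrable (fun u => M * (|w u| / u ^ 2)) volume q⁻¹ p⁻¹ := by
    apply ContinuousOn.intervalIntegrable
    rw [uIcc_of_le hcd]
    refine ContinuousOn.const_smul ?_ M
    refine ContinuousOn.div hw.abs (continuous_pow 2).continuousOn ?_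
    intro u hu
    exact pow_ne_zero 2 (mem_Icc_inv hp hpq hu).1.ne'
  calc |∫ u in q⁻¹..p⁻¹, w u * (f' u⁻¹ / u ^ 2)|
      ≤ ∫ u in q⁻¹..p⁻¹, |w u * (f' u⁻¹ / u ^ 2)| :=
        intervalIntegral.abs_integral_le_integral_abs hcd
    _ ≤ ∫ u in q⁻¹..p⁻¹, M * (|w u| / u ^ 2) := by
        apply intervalIntegral.integral_mono_on hcd hi1.abs hi2
        intro u hu
        obtain ⟨hu0, hui⟩ := mem_Icc_inv hp hpq hu
        have hu2 : (0:ℝ) < u ^ 2 := by positivity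
        rw [abs_mul, abs_div, abs_pow, abs_of_pos hu0]
        rw [mul_div_assoc'] at *
        calc |w u| * |f' u⁻¹| / u ^ 2 ≤ |w u| * M / u ^ 2 := by
              gcongr
              exact hM _ hui
          _ = M * (|w u| / u ^ 2) := by ring
    _ = M * ∫ u in q⁻¹..p⁻¹, |w u| / u ^ 2 := intervalIntegral.integral_const_mul M _

lemma sub_left {p q α lam : ℝ} (hp : 0 < p) (hpq : p < q) (hα : 0 < α) :
    ∫ t in (0:ℝ)..1, |t ^ α - lam| * (t * p + (1 - t) * q) ^ (-2 : ℝ)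
      = (((q - p) / (p * q))⁻¹ * ((((q - p) / (p * q)) ^ α)⁻¹ * ((p * q) ^ 2)⁻¹))
        * ∫ u in q⁻¹..p⁻¹, |(p⁻¹ - u) ^ α - lam * ((q - p) / (p * q)) ^ α| / u ^ 2 := by
  have hq : 0 < q := hp.trans hpq
  set K : ℝ := (q - p) / (p * q) with hKdef
  have hK0 : 0 < K := by
    apply div_pos (by linarith) (by positivity)
  have hKd : K = p⁻¹ - q⁻¹ := by rw [hKdef]; field_simp
  have hKα : (0:ℝ) < K ^ α := Real.rpow_pos_of_pos hK0 α
  clear_value K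
  set Φ : ℝ → ℝ := fun u => (K ^ α)⁻¹ * ((p * q) ^ 2)⁻¹ *
    (|(p⁻¹ - u) ^ α - lam * K ^ α| / u ^ 2) with hΦdef
  have h1 : (∫ t in (0:ℝ)..1, |t ^ α - lam| * (t * p + (1 - t) * q) ^ (-2 : ℝ))
      = ∫ t in (0:ℝ)..1, Φ (-K * t + p⁻¹) := by
    apply intervalIntegral.integral_congr
    intro t ht
    rw [uIcc_of_le (by norm_num : (0:ℝ) ≤ 1)] at ht
    obtain ⟨ht0, ht1⟩ := ht
    have hu : p⁻¹ - (-K * t + p⁻¹) = K * t := by ring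
    have hupos : 0 < -K * t + p⁻¹ := by
      have h2 : K * t ≤ K := by nlinarith
      have h3 : (0:ℝ) < q⁻¹ := inv_pos.2 hq
      nlinarith [hKd]
    have e1 : t * p + (1 - t) * q = (p * q) * (-K * t + p⁻¹) := by
      rw [hKdef]; field_simp; ring
    have e2 : (t * p + (1 - t) * q) ^ (-2 : ℝ)
        = ((p * q) ^ 2 * (-K * t + p⁻¹) ^ 2)⁻¹ := by
      rw [e1, Real.rpow_neg (by positivity), Real.rpow_two, mul_pow]
    have e3 : (p⁻¹ - (-K * t + p⁻¹)) ^ α = K ^ α * t ^ α := by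
      rw [hu, Real.mul_rpow hK0.le ht0]
    simp only [hΦdef]
    rw [e2, e3, show K ^ α * t ^ α - lam * K ^ α = K ^ α * (t ^ α - lam) by ring,
      abs_mul, abs_of_pos hKα]
    generalize (-K * t + p⁻¹) = u
    rw [show (K ^ α)⁻¹ * ((p * q) ^ 2)⁻¹ * (K ^ α * |t ^ α - lam| / u ^ 2)
        = (K ^ α)⁻¹ * K ^ α * (|t ^ α - lam| * ((p * q) ^ 2 * u ^ 2)⁻¹) from by ring,
      inv_mul_cancel₀ hKα.ne', one_mul]
  rw [h1, intervalIntegral.integral_comp_mul_add Φ (neg_ne_zero.2 hK0.ne') p⁻¹,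
    show (-K * 0 + p⁻¹ : ℝ) = p⁻¹ by ring,
    show (-K * 1 + p⁻¹ : ℝ) = q⁻¹ by rw [hKd]; ring,
    intervalIntegral.integral_symm]
  simp only [hΦdef]
  rw [intervalIntegral.integral_const_mul, smul_eq_mul, inv_neg]
  ring

lemma sub_right {p q α lam : ℝ} (hp : 0 < p) (hpq : p < q) (hα : 0 < α) :
    ∫ t in (0:ℝ)..1, |t ^ α - lam| * (t * q + (1 - t) * p) ^ (-2 : ℝ)
      = (((q - p) / (q * p))⁻¹ * ((((q - p) / (q * p)) ^ α)⁻¹ * ((q * p) ^ 2)⁻¹))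
        * ∫ u in q⁻¹..p⁻¹, |(u - q⁻¹) ^ α - lam * ((q - p) / (q * p)) ^ α| / u ^ 2 := by
  have hq : 0 < q := hp.trans hpq
  set K : ℝ := (q - p) / (q * p) with hKdef
  have hK0 : 0 < K := by
    apply div_pos (by linarith) (by positivity)
  have hKd : K = p⁻¹ - q⁻¹ := by rw [hKdef, mul_comm]; field_simp
  have hKα : (0:ℝ) < K ^ α := Real.rpow_pos_of_pos hK0 α
  clear_value K
  set Φ : ℝ → ℝ := fun u => (K ^ α)⁻¹ * ((q * p) ^ 2)⁻¹ *
    (|(u - q⁻¹) ^ α - lam * K ^ α| / u ^ 2) with hΦdef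
  have h1 : (∫ t in (0:ℝ)..1, |t ^ α - lam| * (t * q + (1 - t) * p) ^ (-2 : ℝ))
      = ∫ t in (0:ℝ)..1, Φ (K * t + q⁻¹) := by
    apply intervalIntegral.integral_congr
    intro t ht
    rw [uIcc_of_le (by norm_num : (0:ℝ) ≤ 1)] at ht
    obtain ⟨ht0, ht1⟩ := ht
    have hu : (K * t + q⁻¹) - q⁻¹ = K * t := by ring
    have hupos : 0 < K * t + q⁻¹ := by
      have h3 : (0:ℝ) < q⁻¹ := inv_pos.2 hq
      nlinarith
    have e1 : t * q + (1 - t) * p = (q * p) * (K * t + q⁻¹) := by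
      rw [hKdef]; field_simp; ring
    have e2 : (t * q + (1 - t) * p) ^ (-2 : ℝ)
        = ((q * p) ^ 2 * (K * t + q⁻¹) ^ 2)⁻¹ := by
      rw [e1, Real.rpow_neg (by positivity), Real.rpow_two, mul_pow]
    have e3 : ((K * t + q⁻¹) - q⁻¹) ^ α = K ^ α * t ^ α := by
      rw [hu, Real.mul_rpow hK0.le ht0]
    simp only [hΦdef]
    rw [e2, e3, show K ^ α * t ^ α - lam * K ^ α = K ^ α * (t ^ α - lam) by ring,
      abs_mul, abs_of_pos hKα]
    generalize (K * t + q⁻¹) = u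
    rw [show (K ^ α)⁻¹ * ((q * p) ^ 2)⁻¹ * (K ^ α * |t ^ α - lam| / u ^ 2)
        = (K ^ α)⁻¹ * K ^ α * (|t ^ α - lam| * ((q * p) ^ 2 * u ^ 2)⁻¹) from by ring,
      inv_mul_cancel₀ hKα.ne', one_mul]
  rw [h1, intervalIntegral.integral_comp_mul_add Φ hK0.ne' q⁻¹,
    show (K * 0 + q⁻¹ : ℝ) = q⁻¹ by ring,
    show (K * 1 + q⁻¹ : ℝ) = p⁻¹ by rw [hKd]; ring]
  simp only [hΦdef]
  rw [intervalIntegral.integral_const_mul, smul_eq_mul]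
  ring

lemma qc_max {f' : ℝ → ℝ} {a b : ℝ} (ha : 0 < a)
    (hqc : HarmQuasiConvexOn a b (fun u => |f' u|))
    {p q : ℝ} (hpm : p ∈ Icc a b) (hqm : q ∈ Icc a b) :
    ∀ v ∈ Icc p q, |f' v| ≤ max |f' p| |f' q| := by
  intro v hv
  have hp0 : 0 < p := lt_of_lt_of_le ha hpm.1
  have hpq : p ≤ q := le_trans hv.1 hv.2
  have hq0 : 0 < q := lt_of_lt_of_le hp0 hpq
  have hv0 : 0 < v := lt_of_lt_of_le hp0 hv.1
  rcases eq_or_lt_of_le hpq with h | h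
  · have : v = p := le_antisymm (h ▸ hv.2) hv.1
    subst this
    exact le_max_left _ _
  · set t : ℝ := q * (v - p) / (v * (q - p)) with htdef
    have ht0 : 0 ≤ t :=
      div_nonneg (mul_nonneg hq0.le (sub_nonneg.2 hv.1)) (mul_pos hv0 (sub_pos.2 h)).le
    have ht1 : t ≤ 1 := by
      rw [div_le_one (mul_pos hv0 (sub_pos.2 h))]
      nlinarith [hv.2, hp0]
    have hne1 : v * (q - p) ≠ 0 := (mul_pos hv0 (sub_pos.2 h)).ne'
    have hden : t * p + (1 - t) * q = p * q / v := by
      rw [htdef]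
      field_simp
      ring
    have heq : p * q / (t * p + (1 - t) * q) = v := by
      rw [hden, div_div_eq_mul_div, mul_comm (p * q) v, mul_div_assoc,
        div_self (by positivity : (p * q : ℝ) ≠ 0), mul_one]
    have := hqc p hpm q hqm t ⟨ht0, ht1⟩
    rw [heq] at this
    simpa using this

theorem stmt_2 (f f' : ℝ → ℝ) (a b : ℝ) (ha : 0 < a) (hab : a < b)
    (hf : ∀ u ∈ Icc a b, HasDerivAt f (f' u) u)
    (hint : IntervalIntegrable f' volume a b)
    (hqc : HarmQuasiConvexOn a b (fun u => |f' u|))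
    (x : ℝ) (hx : x ∈ Icc a b) (lam : ℝ) (hlam : lam ∈ Icc (0:ℝ) 1) (α : ℝ) (hα : 0 < α) :
    |Ifg f x lam α a b| ≤
      (x - a) ^ (α + 1) / ((a * x) ^ (α - 1) * x ^ 2) *
        max |f' x| |f' a| * C2 α lam 1 a x
      + (b - x) ^ (α + 1) / ((b * x) ^ (α - 1) * b ^ 2) *
        max |f' x| |f' b| * C3 α lam 1 x b := by
  have hb : 0 < b := ha.trans hab
  have hx0 : 0 < x := lt_of_lt_of_le ha hx.1
  have hsplit : Ifg f x lam α a b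
      = (((x - a) / (a * x)) ^ α * ((1 - lam) * f x + lam * f a)
          - Real.Gamma (α + 1) * RLplus α (1 / x) (1 / a) (fun u => f (1 / u)))
        + (((b - x) / (b * x)) ^ α * ((1 - lam) * f x + lam * f b)
          - Real.Gamma (α + 1) * RLminus α (1 / x) (1 / b) (fun u => f (1 / u))) := by
    simp only [Ifg]; ring
  have hA : |((x - a) / (a * x)) ^ α * ((1 - lam) * f x + lam * f a)
          - Real.Gamma (α + 1) * RLplus α (1 / x) (1 / a) (fun u => f (1 / u))|
      ≤ (x - a) ^ (α + 1) / ((a * x) ^ (α - 1) * x ^ 2) *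
        max |f' x| |f' a| * C2 α lam 1 a x := by
    rcases eq_or_lt_of_le hx.1 with h1 | h1
    · -- degenerate case x = a
      have hxa : x - a = 0 := by rw [← h1]; ring
      have e0 : ((x - a) / (a * x) : ℝ) ^ α = 0 := by
        rw [hxa, zero_div, Real.zero_rpow hα.ne']
      have e1 : RLplus α (1 / x) (1 / a) (fun u => f (1 / u)) = 0 := by
        rw [← h1]; simp [RLplus]
      have eT : (x - a : ℝ) ^ (α + 1) = 0 := by
        rw [hxa, Real.zero_rpow (by linarith : α + 1 ≠ 0)]
      rw [e0, e1, eT]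
      simp
    · -- main case a < x
      have hf1 : ∀ u ∈ Icc a x, HasDerivAt f (f' u) u :=
        fun u hu => hf u ⟨hu.1, hu.2.trans hx.2⟩
      have hint1 : IntervalIntegrable f' volume a x := by
        refine hint.mono_set ?_
        rw [uIcc_of_le h1.le, uIcc_of_le hab.le]
        exact Icc_subset_Icc le_rfl hx.2
      have hB1 : ∀ v ∈ Icc a x, |f' v| ≤ max |f' x| |f' a| := by
        intro v hv
        rw [max_comm]
        exact qc_max ha hqc ⟨le_rfl, hab.le⟩ hx v hv
      have hw1 : ContinuousOn
          (fun u : ℝ => (a⁻¹ - u) ^ α - lam * ((x - a) / (a * x)) ^ α) (Icc x⁻¹ a⁻¹) :=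
        (((continuous_const.sub continuous_id).continuousOn.rpow_const
          (fun u _ => Or.inr hα.le)).sub continuousOn_const)
      have hid := identity_left (lam := lam) ha h1.le hα hf1 hint1
      have hbd := bound_int ha h1.le hint1 hw1 hB1
      have hscalar : (x - a) ^ (α + 1) / ((a * x) ^ (α - 1) * x ^ 2) *
          (x ^ (2:ℝ) * (((x - a) / (a * x))⁻¹ *
            ((((x - a) / (a * x)) ^ α)⁻¹ * ((a * x) ^ 2)⁻¹))) = 1 := by
        set K : ℝ := (x - a) / (a * x) with hKdef
        have hK0 : 0 < K := div_pos (sub_pos.2 h1) (by positivity)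
        have hKdiv : K ^ (α + 1) = (x - a) ^ (α + 1) / (a * x) ^ (α + 1) :=
          Real.div_rpow (sub_pos.2 h1).le (by positivity) _
        clear_value K
        have hax2 : ((a * x) : ℝ) ^ (α + 1) = (a * x) ^ (α - 1) * (a * x) ^ 2 := by
          rw [show α + 1 = (α - 1) + 2 by ring, Real.rpow_add (by positivity), Real.rpow_two]
        have e2 : K ^ α * K * (a * x) ^ 2 = (x - a) ^ (α + 1) / (a * x) ^ (α - 1) := by
          rw [← Real.rpow_add_one hK0.ne' α, hKdiv, hax2]
          field_simp
        rw [Real.rpow_two,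
          show K⁻¹ * ((K ^ α)⁻¹ * ((a * x) ^ 2)⁻¹) = (K ^ α * K * (a * x) ^ 2)⁻¹ from by ring,
          e2]
        have hT : (0:ℝ) < (x - a) ^ (α + 1) := Real.rpow_pos_of_pos (sub_pos.2 h1) _
        have hS : (0:ℝ) < ((a * x) : ℝ) ^ (α - 1) := Real.rpow_pos_of_pos (by positivity) _
        rw [inv_div]
        field_simp
      have hC2 : C2 α lam 1 a x = x ^ (2:ℝ) * ((((x - a) / (a * x))⁻¹ *
          ((((x - a) / (a * x)) ^ α)⁻¹ * ((a * x) ^ 2)⁻¹)) *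
          ∫ u in x⁻¹..a⁻¹, |(a⁻¹ - u) ^ α - lam * ((x - a) / (a * x)) ^ α| / u ^ 2) := by
        simp only [C2, mul_one]
        rw [sub_left ha h1 hα]
      calc |((x - a) / (a * x)) ^ α * ((1 - lam) * f x + lam * f a)
          - Real.Gamma (α + 1) * RLplus α (1 / x) (1 / a) (fun u => f (1 / u))|
          = |∫ u in x⁻¹..a⁻¹,
              ((a⁻¹ - u) ^ α - lam * ((x - a) / (a * x)) ^ α) * (f' u⁻¹ / u ^ 2)| := by
            rw [hid]
        _ ≤ max |f' x| |f' a| * ∫ u in x⁻¹..a⁻¹,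
              |(a⁻¹ - u) ^ α - lam * ((x - a) / (a * x)) ^ α| / u ^ 2 := hbd
        _ = (x - a) ^ (α + 1) / ((a * x) ^ (α - 1) * x ^ 2) *
              max |f' x| |f' a| * C2 α lam 1 a x := by
            rw [hC2]
            linear_combination (-(max |f' x| |f' a| *
              ∫ u in x⁻¹..a⁻¹,
                |(a⁻¹ - u) ^ α - lam * ((x - a) / (a * x)) ^ α| / u ^ 2)) * hscalar
  have hB : |((b - x) / (b * x)) ^ α * ((1 - lam) * f x + lam * f b)
          - Real.Gamma (α + 1) * RLminus α (1 / x) (1 / b) (fun u => f (1 / u))|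
      ≤ (b - x) ^ (α + 1) / ((b * x) ^ (α - 1) * b ^ 2) *
        max |f' x| |f' b| * C3 α lam 1 x b := by
    rcases eq_or_lt_of_le hx.2 with h2 | h2
    · -- degenerate case x = b
      have hxb : b - x = 0 := by rw [h2]; ring
      have e0 : ((b - x) / (b * x) : ℝ) ^ α = 0 := by
        rw [hxb, zero_div, Real.zero_rpow hα.ne']
      have e1 : RLminus α (1 / x) (1 / b) (fun u => f (1 / u)) = 0 := by
        rw [h2]; simp [RLminus]
      have eT : (b - x : ℝ) ^ (α + 1) = 0 := by
        rw [hxb, Real.zero_rpow (by linarith : α + 1 ≠ 0)]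
      rw [e0, e1, eT]
      simp
    · -- main case x < b
      have hf2 : ∀ u ∈ Icc x b, HasDerivAt f (f' u) u :=
        fun u hu => hf u ⟨hx.1.trans hu.1, hu.2⟩
      have hint2 : IntervalIntegrable f' volume x b := by
        refine hint.mono_set ?_
        rw [uIcc_of_le h2.le, uIcc_of_le hab.le]
        exact Icc_subset_Icc hx.1 le_rfl
      have hB2 : ∀ v ∈ Icc x b, |f' v| ≤ max |f' x| |f' b| :=
        fun v hv => qc_max ha hqc hx ⟨hab.le, le_rfl⟩ v hv
      have hw2 : ContinuousOn
          (fun u : ℝ => lam * ((b - x) / (b * x)) ^ α - (u - b⁻¹) ^ α) (Icc b⁻¹ x⁻¹) :=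
        (continuousOn_const.sub ((continuous_id.sub continuous_const).continuousOn.rpow_const
          (fun u _ => Or.inr hα.le)))
      have hid := identity_right (lam := lam) hx0 h2.le hα hf2 hint2
      have hbd := bound_int hx0 h2.le hint2 hw2 hB2
      have habs : (∫ u in b⁻¹..x⁻¹,
            |lam * ((b - x) / (b * x)) ^ α - (u - b⁻¹) ^ α| / u ^ 2)
          = ∫ u in b⁻¹..x⁻¹,
            |(u - b⁻¹) ^ α - lam * ((b - x) / (b * x)) ^ α| / u ^ 2 := by
        apply intervalIntegral.integral_congr
        intro u _
        show |lam * ((b - x) / (b * x)) ^ α - (u - b⁻¹) ^ α| / u ^ 2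
            = |(u - b⁻¹) ^ α - lam * ((b - x) / (b * x)) ^ α| / u ^ 2
        rw [abs_sub_comm]
      have hscalar : (b - x) ^ (α + 1) / ((b * x) ^ (α - 1) * b ^ 2) *
          (b ^ (2:ℝ) * (((b - x) / (b * x))⁻¹ *
            ((((b - x) / (b * x)) ^ α)⁻¹ * ((b * x) ^ 2)⁻¹))) = 1 := by
        set K : ℝ := (b - x) / (b * x) with hKdef
        have hK0 : 0 < K := div_pos (sub_pos.2 h2) (by positivity)
        have hKdiv : K ^ (α + 1) = (b - x) ^ (α + 1) / (b * x) ^ (α + 1) :=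
          Real.div_rpow (sub_pos.2 h2).le (by positivity) _
        clear_value K
        have hax2 : ((b * x) : ℝ) ^ (α + 1) = (b * x) ^ (α - 1) * (b * x) ^ 2 := by
          rw [show α + 1 = (α - 1) + 2 by ring, Real.rpow_add (by positivity), Real.rpow_two]
        have e2 : K ^ α * K * (b * x) ^ 2 = (b - x) ^ (α + 1) / (b * x) ^ (α - 1) := by
          rw [← Real.rpow_add_one hK0.ne' α, hKdiv, hax2]
          field_simp
        rw [Real.rpow_two,
          show K⁻¹ * ((K ^ α)⁻¹ * ((b * x) ^ 2)⁻¹) = (K ^ α * K * (b * x) ^ 2)⁻¹ from by ring,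
          e2]
        have hT : (0:ℝ) < (b - x) ^ (α + 1) := Real.rpow_pos_of_pos (sub_pos.2 h2) _
        have hS : (0:ℝ) < ((b * x) : ℝ) ^ (α - 1) := Real.rpow_pos_of_pos (by positivity) _
        rw [inv_div]
        field_simp
      have hC3 : C3 α lam 1 x b = b ^ (2:ℝ) * ((((b - x) / (b * x))⁻¹ *
          ((((b - x) / (b * x)) ^ α)⁻¹ * ((b * x) ^ 2)⁻¹)) *
          ∫ u in b⁻¹..x⁻¹, |(u - b⁻¹) ^ α - lam * ((b - x) / (b * x)) ^ α| / u ^ 2) := by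
        simp only [C3, mul_one]
        rw [sub_right hx0 h2 hα]
      calc |((b - x) / (b * x)) ^ α * ((1 - lam) * f x + lam * f b)
          - Real.Gamma (α + 1) * RLminus α (1 / x) (1 / b) (fun u => f (1 / u))|
          = |∫ u in b⁻¹..x⁻¹,
              (lam * ((b - x) / (b * x)) ^ α - (u - b⁻¹) ^ α) * (f' u⁻¹ / u ^ 2)| := by
            rw [hid]
        _ ≤ max |f' x| |f' b| * ∫ u in b⁻¹..x⁻¹,
              |lam * ((b - x) / (b * x)) ^ α - (u - b⁻¹) ^ α| / u ^ 2 := hbd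
        _ = max |f' x| |f' b| * ∫ u in b⁻¹..x⁻¹,
              |(u - b⁻¹) ^ α - lam * ((b - x) / (b * x)) ^ α| / u ^ 2 := by rw [habs]
        _ = (b - x) ^ (α + 1) / ((b * x) ^ (α - 1) * b ^ 2) *
              max |f' x| |f' b| * C3 α lam 1 x b := by
            rw [hC3]
            linear_combination (-(max |f' x| |f' b| *
              ∫ u in b⁻¹..x⁻¹,
                |(u - b⁻¹) ^ α - lam * ((b - x) / (b * x)) ^ α| / u ^ 2)) * hscalar
  calc |Ifg f x lam α a b|
      ≤ |((x - a) / (a * x)) ^ α * ((1 - lam) * f x + lam * f a)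
          - Real.Gamma (α + 1) * RLplus α (1 / x) (1 / a) (fun u => f (1 / u))|
        + |((b - x) / (b * x)) ^ α * ((1 - lam) * f x + lam * f b)
          - Real.Gamma (α + 1) * RLminus α (1 / x) (1 / b) (fun u => f (1 / u))| := by
        rw [hsplit]; exact abs_add_le _ _
    _ ≤ _ := add_le_add hA hB
end

section
/- If |f'|^q is harmonically quasi-convex on [a,b] for some fixed q ≥ 1 and H = 2ab/(a+b), then for all λ ∈ [0,1]: |(1−λ) f(H) + λ (f(a) + f(b))/2 − (ab/(b−a)) ∫_a^b f(u)/u² du| ≤ ((b−a)/(4ab)) { a² C₂(1,λ,1,a,H) (max{|f'(H)|^q, |f'(a)|^q})^{1/q} + H² C₃(1,λ,1,H,b) (max{|f'(H)|^q, |f'(b)|^q})^{1/q} }. -/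
open Real MeasureTheory Set intervalIntegral

private def Dl (p X t : ℝ) : ℝ := t * p + (1 - t) * X

private noncomputable def cl (p X t : ℝ) : ℝ := p * X / Dl p X t

private lemma Dl_mem {p X : ℝ} (hp0 : 0 < p) (hX0 : 0 < X) {t : ℝ} (ht : t ∈ Icc (0:ℝ) 1) :
    Dl p X t ∈ Icc (min p X) (max p X) := by
  have h1 : t * min p X ≤ t * p := mul_le_mul_of_nonneg_left (min_le_left p X) ht.1
  have h2 : (1 - t) * min p X ≤ (1 - t) * X :=
    mul_le_mul_of_nonneg_left (min_le_right p X) (sub_nonneg.2 ht.2)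
  have h3 : t * p ≤ t * max p X := mul_le_mul_of_nonneg_left (le_max_left p X) ht.1
  have h4 : (1 - t) * X ≤ (1 - t) * max p X :=
    mul_le_mul_of_nonneg_left (le_max_right p X) (sub_nonneg.2 ht.2)
  simp only [Dl]
  constructor
  · nlinarith
  · nlinarith

private lemma Dl_pos {p X : ℝ} (hp0 : 0 < p) (hX0 : 0 < X) {t : ℝ} (ht : t ∈ Icc (0:ℝ) 1) :
    0 < Dl p X t := lt_of_lt_of_le (lt_min hp0 hX0) (Dl_mem hp0 hX0 ht).1

private lemma Dl_cont (p X : ℝ) : Continuous (Dl p X) := by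
  unfold Dl; fun_prop

private lemma cl_mem {p X : ℝ} (hp0 : 0 < p) (hX0 : 0 < X) {t : ℝ} (ht : t ∈ Icc (0:ℝ) 1) :
    cl p X t ∈ Icc (min p X) (max p X) := by
  have hD := Dl_mem hp0 hX0 ht
  have hDpos := Dl_pos hp0 hX0 ht
  have hmm : min p X * max p X = p * X := min_mul_max p X
  simp only [cl]
  constructor
  · rw [le_div_iff₀ hDpos]
    calc min p X * Dl p X t ≤ min p X * max p X :=
          mul_le_mul_of_nonneg_left hD.2 (le_of_lt (lt_min hp0 hX0))
      _ = p * X := hmm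
  · rw [div_le_iff₀ hDpos]
    calc p * X = min p X * max p X := hmm.symm
      _ ≤ Dl p X t * max p X :=
          mul_le_mul_of_nonneg_right hD.1 (le_of_lt (lt_of_lt_of_le hp0 (le_max_left p X)))
      _ = max p X * Dl p X t := mul_comm _ _

private lemma cl_deriv {p X : ℝ} (hp0 : 0 < p) (hX0 : 0 < X) {t : ℝ} (ht : t ∈ Icc (0:ℝ) 1) :
    HasDerivAt (cl p X) (p * X * (X - p) / (Dl p X t) ^ 2) t := by
  have hDt := (Dl_pos hp0 hX0 ht).ne'
  have hDd : HasDerivAt (Dl p X) (p - X) t := by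
    have h := ((hasDerivAt_id t).const_mul (p - X)).add_const X
    simp only [id_eq, mul_one] at h
    have he : (fun x : ℝ => (p - X) * x + X) = Dl p X := by funext x; simp only [Dl]; ring
    rw [he] at h
    exact h
  have h2 := (hasDerivAt_const t (p * X)).div hDd hDt
  convert h2 using 1
  · rfl
  · rfl
  · rfl
  rw [div_eq_div_iff (pow_ne_zero 2 hDt) (pow_ne_zero 2 hDt)]
  ring

private lemma cl_inj {p X : ℝ} (hp0 : 0 < p) (hX0 : 0 < X) (hpX : p ≠ X) :
    InjOn (cl p X) (Icc (0:ℝ) 1) := by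
  intro t1 h1 t2 h2 he
  have hD1 := Dl_pos hp0 hX0 h1
  have hD2 := Dl_pos hp0 hX0 h2
  have hpX0 : p * X ≠ 0 := (mul_pos hp0 hX0).ne'
  simp only [cl] at he
  rw [div_eq_div_iff hD1.ne' hD2.ne'] at he
  have hDe : Dl p X t1 = Dl p X t2 := (mul_left_cancel₀ hpX0 he).symm
  have h3 : (p - X) * t1 = (p - X) * t2 := by
    simp only [Dl] at hDe; nlinarith [hDe]
  exact mul_left_cancel₀ (sub_ne_zero.2 hpX) h3

private lemma side_bound (f f' : ℝ → ℝ) (a b : ℝ) (ha : 0 < a)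
    (hf : ∀ u ∈ Icc a b, HasDerivAt f (f' u) u)
    (p X : ℝ) (hp : p ∈ Icc a b) (hX : X ∈ Icc a b) (hpX : p ≠ X)
    (hpq : IntervalIntegrable f' volume p X) (lam M : ℝ) (hM0 : 0 ≤ M)
    (hM : ∀ t ∈ Icc (0:ℝ) 1, |f' (p * X / (t * p + (1 - t) * X))| ≤ M) :
    |(lam - 1) * f X - lam * f p + (p * X / (X - p)) * ∫ u in p..X, f u / u ^ 2| ≤
      M * (p * X * |X - p|) * ∫ t in (0:ℝ)..1, |t - lam| / (t * p + (1 - t) * X) ^ 2 := by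
  have hp0 : 0 < p := ha.trans_le hp.1
  have hX0 : 0 < X := ha.trans_le hX.1
  have hpX0 : (0:ℝ) < p * X := mul_pos hp0 hX0
  have hXpne : X - p ≠ 0 := sub_ne_zero.2 (Ne.symm hpX)
  have habsne : |X - p| ≠ 0 := abs_ne_zero.2 hXpne
  have hsub : Icc (min p X) (max p X) ⊆ Icc a b :=
    Icc_subset_Icc (le_min hp.1 hX.1) (max_le hp.2 hX.2)
  set c' : ℝ → ℝ := fun t => p * X * (X - p) / (Dl p X t) ^ 2 with hc'
  set W : ℝ → ℝ := fun t => (lam - t) * c' t * f' (cl p X t) with hWdef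
  have hcab : ∀ t ∈ Icc (0:ℝ) 1, cl p X t ∈ Icc a b := fun t ht => hsub (cl_mem hp0 hX0 ht)
  have hfc : ContinuousOn f (Icc a b) := fun u hu => (hf u hu).continuousAt.continuousWithinAt
  have hccont : ContinuousOn (cl p X) (Icc (0:ℝ) 1) :=
    fun t ht => (cl_deriv hp0 hX0 ht).continuousAt.continuousWithinAt
  have hfccont : ContinuousOn (fun t => f (cl p X t)) (Icc (0:ℝ) 1) :=
    hfc.comp hccont (fun t ht => hcab t ht)
  have hfccont' : ContinuousOn (fun t => f (cl p X t)) (uIcc (0:ℝ) 1) := by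
    rw [uIcc_of_le zero_le_one]; exact hfccont
  -- integrability of W
  have hint2 : IntegrableOn f' (Icc (min p X) (max p X)) := by
    have h1 : IntervalIntegrable f' volume (min p X) (max p X) := by
      rcases le_total p X with h | h
      · simpa [min_eq_left h, max_eq_right h] using hpq
      · simpa [min_eq_right h, max_eq_left h] using hpq.symm
    exact (intervalIntegrable_iff_integrableOn_Icc_of_le min_le_max).mp h1
  have himg : cl p X '' Icc (0:ℝ) 1 ⊆ Icc (min p X) (max p X) := by
    rintro u ⟨t, ht, rfl⟩; exact cl_mem hp0 hX0 ht
  have habs : IntegrableOn (fun t => |c' t| • f' (cl p X t)) (Icc (0:ℝ) 1) :=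
    (integrableOn_image_iff_integrableOn_abs_deriv_smul measurableSet_Icc
      (fun t ht => (cl_deriv hp0 hX0 ht).hasDerivWithinAt) (cl_inj hp0 hX0 hpX) f').mp
      (hint2.mono_set himg)
  have habs' : IntervalIntegrable (fun t => |c' t| • f' (cl p X t)) volume 0 1 :=
    (intervalIntegrable_iff_integrableOn_Icc_of_le zero_le_one).mpr habs
  have hc'abs : ∀ t : ℝ, |c' t| = p * X * |X - p| / (Dl p X t) ^ 2 := by
    intro t
    rw [hc']
    rw [abs_div, abs_mul, abs_of_pos hpX0, abs_pow, sq_abs]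
  have hWint : IntervalIntegrable W volume 0 1 := by
    have hgc : ContinuousOn (fun t => (lam - t) * ((X - p) / |X - p|)) (uIcc (0:ℝ) 1) :=
      (Continuous.mul (by continuity) continuous_const).continuousOn
    have h2 := habs'.continuousOn_mul hgc
    have heq : W = fun t =>
        ((lam - t) * ((X - p) / |X - p|)) * (|c' t| • f' (cl p X t)) := by
      funext t
      rw [hWdef]
      simp only [smul_eq_mul, hc'abs t]
      simp only [hc']
      set A := |X - p| with hA
      have hA0 : A ≠ 0 := habsne
      have hAc : (X - p) / A * (p * X * A / Dl p X t ^ 2) = p * X * (X - p) / Dl p X t ^ 2 := by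
        have h9 : (X - p) / A * (p * X * A / Dl p X t ^ 2)
            = p * X * (X - p) / Dl p X t ^ 2 * (A / A) := by ring
        rw [h9, div_self hA0, mul_one]
      calc (lam - t) * (p * X * (X - p) / Dl p X t ^ 2) * f' (cl p X t)
          = (lam - t) * ((X - p) / A * (p * X * A / Dl p X t ^ 2)) * f' (cl p X t) := by
            rw [hAc]
        _ = (lam - t) * ((X - p) / A) * (p * X * A / Dl p X t ^ 2 * f' (cl p X t)) := by
            ring
    rw [heq]
    exact h2
  -- FTC part
  have hFder : ∀ t ∈ uIcc (0:ℝ) 1, HasDerivAt (fun t => (lam - t) * f (cl p X t))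
      (W t - f (cl p X t)) t := by
    intro t ht
    rw [uIcc_of_le zero_le_one] at ht
    have h1 : HasDerivAt (fun t : ℝ => lam - t) (-1) t := by
      simpa using (hasDerivAt_id t).const_sub lam
    have h2 : HasDerivAt (fun t => f (cl p X t)) (f' (cl p X t) * c' t) t :=
      (hf _ (hcab t ht)).comp t (cl_deriv hp0 hX0 ht)
    have h3 := h1.mul h2
    convert h3 using 1
    · rfl
    · rfl
    · rfl
    rw [hWdef]
    ring
  have hFint : IntervalIntegrable (fun t => W t - f (cl p X t)) volume 0 1 :=
    hWint.sub hfccont'.intervalIntegrable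
  have hc0 : cl p X 0 = p := by
    simp only [cl, Dl]
    rw [zero_mul, zero_add, sub_zero, one_mul, mul_div_assoc, div_self hX0.ne', mul_one]
  have hc1 : cl p X 1 = X := by
    simp only [cl, Dl]
    rw [one_mul, sub_self, zero_mul, add_zero, mul_comm, mul_div_assoc, div_self hp0.ne', mul_one]
  have hFTC : ∫ t in (0:ℝ)..1, (W t - f (cl p X t)) = (lam - 1) * f X - lam * f p := by
    rw [intervalIntegral.integral_eq_sub_of_hasDerivAt hFder hFint, hc0, hc1]
    ring
  -- change of variables
  have hCOV : ((X - p) / (p * X)) * ∫ t in (0:ℝ)..1, f (cl p X t)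
      = ∫ u in p..X, f u / u ^ 2 := by
    have hg : ContinuousOn (fun u => f u / u ^ 2) (cl p X '' (uIcc (0:ℝ) 1)) := by
      rw [uIcc_of_le zero_le_one]
      have hsub2 : cl p X '' Icc (0:ℝ) 1 ⊆ Icc a b := himg.trans hsub
      apply ContinuousOn.div (hfc.mono hsub2) (by fun_prop)
      intro u hu
      exact pow_ne_zero 2 (ne_of_gt (lt_of_lt_of_le ha (hsub2 hu).1))
    have hc'cont : ContinuousOn c' (uIcc (0:ℝ) 1) := by
      rw [uIcc_of_le zero_le_one]
      intro t ht
      apply ContinuousWithinAt.div continuousWithinAt_const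
      · exact (((Dl_cont p X).pow 2).continuousAt).continuousWithinAt
      · exact pow_ne_zero 2 (Dl_pos hp0 hX0 ht).ne'
    have h := intervalIntegral.integral_comp_smul_deriv'
        (f := cl p X) (f' := c') (g := fun u => f u / u ^ 2)
        (fun t ht => cl_deriv hp0 hX0 (by rwa [uIcc_of_le zero_le_one] at ht)) hc'cont hg
    rw [hc0, hc1] at h
    rw [← h, ← intervalIntegral.integral_const_mul]
    apply intervalIntegral.integral_congr
    intro t ht
    rw [uIcc_of_le zero_le_one] at ht
    have hD := (Dl_pos hp0 hX0 ht).ne'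
    simp only [Function.comp, smul_eq_mul, cl, hc']
    field_simp
  have hfcint : IntervalIntegrable (fun t => f (cl p X t)) volume 0 1 :=
    hfccont'.intervalIntegrable
  -- main identity
  have hA : ∫ t in (0:ℝ)..1, W t =
      (lam - 1) * f X - lam * f p + (p * X / (X - p)) * ∫ u in p..X, f u / u ^ 2 := by
    have hsubint := intervalIntegral.integral_sub hWint hfcint
    have h5 : ∫ t in (0:ℝ)..1, f (cl p X t)
        = (p * X / (X - p)) * ∫ u in p..X, f u / u ^ 2 := by
      rw [← hCOV]
      field_simp
    rw [hFTC] at hsubint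
    rw [← h5]
    linarith [hsubint]
  -- bound
  rw [← hA]
  have hDlpow : ∀ t : ℝ, (t * p + (1 - t) * X) ^ 2 = (Dl p X t) ^ 2 := fun t => rfl
  calc |∫ t in (0:ℝ)..1, W t| ≤ ∫ t in (0:ℝ)..1, |W t| :=
        intervalIntegral.abs_integral_le_integral_abs zero_le_one
    _ ≤ ∫ t in (0:ℝ)..1, M * (p * X * |X - p|) * (|t - lam| / (Dl p X t) ^ 2) := by
        apply intervalIntegral.integral_mono_on zero_le_one hWint.abs
        · apply ContinuousOn.intervalIntegrable
          apply ContinuousOn.mul continuousOn_const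
          rw [uIcc_of_le zero_le_one]
          intro t ht
          apply ContinuousWithinAt.div
          · exact ((continuous_abs.comp (continuous_id.sub continuous_const)).continuousAt).continuousWithinAt
          · exact (((Dl_cont p X).pow 2).continuousAt).continuousWithinAt
          · exact pow_ne_zero 2 (Dl_pos hp0 hX0 ht).ne'
        · intro t ht
          have hD := Dl_pos hp0 hX0 ht
          have hMt := hM t ht
          have he1 : |W t| = |t - lam| * (p * X * |X - p| / (Dl p X t) ^ 2) * |f' (cl p X t)| := by
            rw [hWdef]
            simp only [abs_mul]
            rw [abs_sub_comm lam t, hc'abs t]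
          rw [he1]
          have hMt' : |f' (cl p X t)| ≤ M := hMt
          have hnn : 0 ≤ |t - lam| * (p * X * |X - p| / (Dl p X t) ^ 2) :=
            mul_nonneg (abs_nonneg _)
              (div_nonneg (mul_nonneg hpX0.le (abs_nonneg _)) (sq_nonneg _))
          calc |t - lam| * (p * X * |X - p| / (Dl p X t) ^ 2) * |f' (cl p X t)|
              ≤ |t - lam| * (p * X * |X - p| / (Dl p X t) ^ 2) * M := by
                exact mul_le_mul_of_nonneg_left hMt' hnn
            _ = M * (p * X * |X - p|) * (|t - lam| / (Dl p X t) ^ 2) := by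
                ring
    _ = M * (p * X * |X - p|) * ∫ t in (0:ℝ)..1, |t - lam| / (t * p + (1 - t) * X) ^ 2 := by
        rw [← intervalIntegral.integral_const_mul]
        apply intervalIntegral.integral_congr
        intro t _
        simp only [Dl]

theorem stmt_10 (f f' : ℝ → ℝ) (a b : ℝ) (ha : 0 < a) (hab : a < b)
    (hf : ∀ u ∈ Icc a b, HasDerivAt f (f' u) u)
    (hint : IntervalIntegrable f' volume a b)
    (q : ℝ) (hq : 1 ≤ q)
    (hqc : HarmQuasiConvexOn a b (fun u => |f' u| ^ q))
    (H : ℝ) (hH : H = 2 * a * b / (a + b)) (lam : ℝ) (hlam : lam ∈ Icc (0:ℝ) 1) :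
    |(1 - lam) * f H + lam * ((f a + f b) / 2) - (a * b / (b - a)) * ∫ u in a..b, f u / u ^ 2| ≤
      (b - a) / (4 * a * b) *
        (a ^ 2 * C2 1 lam 1 a H * max (|f' H| ^ q) (|f' a| ^ q) ^ (1 / q)
          + H ^ 2 * C3 1 lam 1 H b * max (|f' H| ^ q) (|f' b| ^ q) ^ (1 / q)) := by
  have hb0 : 0 < b := ha.trans hab
  have hba : 0 < b - a := sub_pos.2 hab
  have hab0 : 0 < a + b := by linarith
  have hH0 : 0 < H := by rw [hH]; positivity
  have hH1 : a < H := by rw [hH, lt_div_iff₀ hab0]; nlinarith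
  have hH2 : H < b := by rw [hH, div_lt_iff₀ hab0]; nlinarith
  have hHmem : H ∈ Icc a b := ⟨hH1.le, hH2.le⟩
  have hamem : a ∈ Icc a b := ⟨le_rfl, hab.le⟩
  have hbmem : b ∈ Icc a b := ⟨hab.le, le_rfl⟩
  have hq0 : (0:ℝ) < q := lt_of_lt_of_le one_pos hq
  set J1 : ℝ := ∫ t in (0:ℝ)..1, |t - lam| / (t * a + (1 - t) * H) ^ 2 with hJ1
  set J2 : ℝ := ∫ t in (0:ℝ)..1, |t - lam| / (t * b + (1 - t) * H) ^ 2 with hJ2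
  set Ma : ℝ := max (|f' H| ^ q) (|f' a| ^ q) ^ (1 / q) with hMaS
  set Mb : ℝ := max (|f' H| ^ q) (|f' b| ^ q) ^ (1 / q) with hMbS
  have hMa0 : 0 ≤ Ma := Real.rpow_nonneg
    (le_trans (Real.rpow_nonneg (abs_nonneg _) q) (le_max_left _ _)) _
  have hMb0 : 0 ≤ Mb := Real.rpow_nonneg
    (le_trans (Real.rpow_nonneg (abs_nonneg _) q) (le_max_left _ _)) _
  have key : ∀ z : ℝ, (|f' z| ^ q) ^ (1 / q) = |f' z| := by
    intro z
    rw [← Real.rpow_mul (abs_nonneg _), mul_one_div, div_self hq0.ne', Real.rpow_one]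
  have hMa' : ∀ t ∈ Icc (0:ℝ) 1, |f' (a * H / (t * a + (1 - t) * H))| ≤ Ma := by
    intro t ht
    have h1 := hqc a hamem H hHmem t ht
    simp only at h1
    have h2 := Real.rpow_le_rpow (Real.rpow_nonneg (abs_nonneg _) q) h1
      (by positivity : (0:ℝ) ≤ 1 / q)
    rw [key] at h2
    rwa [hMaS, max_comm (|f' H| ^ q) (|f' a| ^ q)]
  have hMb' : ∀ t ∈ Icc (0:ℝ) 1, |f' (b * H / (t * b + (1 - t) * H))| ≤ Mb := by
    intro t ht
    have h1 := hqc b hbmem H hHmem t ht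
    simp only at h1
    have h2 := Real.rpow_le_rpow (Real.rpow_nonneg (abs_nonneg _) q) h1
      (by positivity : (0:ℝ) ≤ 1 / q)
    rw [key] at h2
    rwa [hMbS, max_comm (|f' H| ^ q) (|f' b| ^ q)]
  have hsubIcc : ∀ {c d : ℝ}, c ∈ Icc a b → d ∈ Icc a b → uIcc c d ⊆ uIcc a b := by
    intro c d hc hd
    rw [uIcc_of_le hab.le]
    exact uIcc_subset_Icc hc hd
  have hintaH : IntervalIntegrable f' volume a H := hint.mono_set (hsubIcc hamem hHmem)
  have hintbH : IntervalIntegrable f' volume b H := hint.mono_set (hsubIcc hbmem hHmem)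
  have S1 := side_bound f f' a b ha hf a H hamem hHmem (ne_of_lt hH1) hintaH lam Ma hMa0 hMa'
  have S2 := side_bound f f' a b ha hf b H hbmem hHmem (ne_of_gt hH2) hintbH lam Mb hMb0 hMb'
  rw [← hJ1] at S1
  rw [← hJ2] at S2
  -- integral splitting
  have hfc : ContinuousOn f (Icc a b) := fun u hu => (hf u hu).continuousAt.continuousWithinAt
  have hgcont : ContinuousOn (fun u => f u / u ^ 2) (Icc a b) := by
    apply ContinuousOn.div hfc (by fun_prop)
    intro u hu
    exact pow_ne_zero 2 (ne_of_gt (lt_of_lt_of_le ha hu.1))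
  have hg1 : IntervalIntegrable (fun u => f u / u ^ 2) volume a H := by
    apply ContinuousOn.intervalIntegrable
    exact hgcont.mono (by rw [uIcc_of_le hH1.le]; exact Icc_subset_Icc le_rfl hH2.le)
  have hg2 : IntervalIntegrable (fun u => f u / u ^ 2) volume H b := by
    apply ContinuousOn.intervalIntegrable
    exact hgcont.mono (by rw [uIcc_of_le hH2.le]; exact Icc_subset_Icc hH1.le le_rfl)
  have hsplit : (∫ u in a..H, f u / u ^ 2) + ∫ u in H..b, f u / u ^ 2
      = ∫ u in a..b, f u / u ^ 2 := intervalIntegral.integral_add_adjacent_intervals hg1 hg2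
  have hIb : (∫ u in b..H, f u / u ^ 2) = -∫ u in H..b, f u / u ^ 2 :=
    intervalIntegral.integral_symm H b
  have he1 : a * H / (H - a) = 2 * a * b / (b - a) := by
    rw [div_eq_div_iff (sub_ne_zero.2 (ne_of_gt hH1)) hba.ne', hH]
    field_simp
    ring
  have he2 : b * H / (H - b) = -(2 * a * b) / (b - a) := by
    rw [div_eq_div_iff (sub_ne_zero.2 (ne_of_lt hH2)) hba.ne', hH]
    field_simp
    ring
  have hmainEq : (1 - lam) * f H + lam * ((f a + f b) / 2)
        - (a * b / (b - a)) * ∫ u in a..b, f u / u ^ 2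
      = -(1/2) * (((lam - 1) * f H - lam * f a
            + a * H / (H - a) * ∫ u in a..H, f u / u ^ 2)
          + ((lam - 1) * f H - lam * f b
            + b * H / (H - b) * ∫ u in b..H, f u / u ^ 2)) := by
    rw [hIb, he1, he2, ← hsplit]
    ring
  -- rewrite C2, C3
  have hrpow2 : ∀ x : ℝ, 0 < x → x ^ (-(2 * (1:ℝ))) = (x ^ 2)⁻¹ := by
    intro x hx
    rw [show (-(2 * (1:ℝ))) = -(2:ℝ) by norm_num, Real.rpow_neg hx.le,
      show ((2:ℝ)) = ((2:ℕ):ℝ) by norm_num, Real.rpow_natCast]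
  have hC2 : C2 1 lam 1 a H = H ^ 2 * J1 := by
    rw [C2, hJ1]
    congr 1
    · rw [show (2 * (1:ℝ)) = ((2:ℕ):ℝ) by norm_num, Real.rpow_natCast]
    · apply intervalIntegral.integral_congr
      intro t ht
      rw [uIcc_of_le zero_le_one] at ht
      have hD : 0 < t * a + (1 - t) * H := Dl_pos ha hH0 ht
      beta_reduce
      rw [Real.rpow_one, hrpow2 _ hD, div_eq_mul_inv]
  have hC3 : C3 1 lam 1 H b = b ^ 2 * J2 := by
    rw [C3, hJ2]
    congr 1
    · rw [show (2 * (1:ℝ)) = ((2:ℕ):ℝ) by norm_num, Real.rpow_natCast]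
    · apply intervalIntegral.integral_congr
      intro t ht
      rw [uIcc_of_le zero_le_one] at ht
      have hD : 0 < t * b + (1 - t) * H := Dl_pos hb0 hH0 ht
      beta_reduce
      rw [Real.rpow_one, hrpow2 _ hD, div_eq_mul_inv]
  have hco1 : (1/2) * (a * H * (H - a)) = (b - a) / (4 * a * b) * (a ^ 2 * H ^ 2) := by
    rw [hH]
    field_simp
    ring
  have hco2 : (1/2) * (b * H * (b - H)) = (b - a) / (4 * a * b) * (H ^ 2 * b ^ 2) := by
    rw [hH]
    field_simp
    ring
  rw [hmainEq, abs_mul, show |(-(1/2) : ℝ)| = 1/2 by norm_num]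
  refine le_trans (mul_le_mul_of_nonneg_left
    (le_trans (abs_add_le _ _) (add_le_add S1 S2)) (by norm_num)) ?_
  apply le_of_eq
  rw [hC2, hC3, abs_of_pos (sub_pos.2 hH1),
    show |H - b| = b - H from by rw [abs_sub_comm]; exact abs_of_pos (sub_pos.2 hH2)]
  linear_combination (Ma * J1) * hco1 + (Mb * J2) * hco2
end

section
/- If |f'|^q is harmonically quasi-convex on [a,b] for some fixed q ≥ 1, α > 0 and H = 2ab/(a+b), then the following Simpson-type inequality holds: |(1/6)[f(a) + 4f(H) + f(b)] − (ab/(b−a))^α 2^{α−1} Γ(α+1) [J_{(1/H)+}^α (f∘g)(1/a) + J_{(1/H)−}^α (f∘g)(1/b)]| ≤ ((b−a)/(4ab)) { a² (max{|f'(H)|^q, |f'(a)|^q})^{1/q} C₂(α,1/3,1,a,H) + H² (max{|f'(H)|^q, |f'(b)|^q})^{1/q} C₃(α,1/3,1,H,b) }. -/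
open Real MeasureTheory Set intervalIntegral

-- positivity and membership helpers
lemma Dpos {a b c H : ℝ} (ha : 0 < a) (hc : c ∈ Icc a b) (hH : H ∈ Icc a b)
    {s : ℝ} (hs : s ∈ Icc (0:ℝ) 1) : 0 < s * c + (1 - s) * H := by
  obtain ⟨hs0, hs1⟩ := hs
  nlinarith [hc.1, hH.1, hc.2, hH.2]

lemma psimem {a b c H : ℝ} (ha : 0 < a) (hc : c ∈ Icc a b) (hH : H ∈ Icc a b)
    {s : ℝ} (hs : s ∈ Icc (0:ℝ) 1) : c * H / (s * c + (1 - s) * H) ∈ Icc a b := by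
  have hD := Dpos ha hc hH hs
  obtain ⟨hs0, hs1⟩ := hs
  constructor
  · rw [le_div_iff₀ hD]
    have h1 : 0 ≤ s * c * (H - a) := by
      apply mul_nonneg (mul_nonneg hs0 (by linarith [hc.1] : (0:ℝ) ≤ c)); linarith [hH.1]
    have h2 : 0 ≤ (1 - s) * H * (c - a) := by
      apply mul_nonneg (mul_nonneg (by linarith) (by linarith [hH.1] : (0:ℝ) ≤ H)); linarith [hc.1]
    nlinarith
  · rw [div_le_iff₀ hD]
    have h1 : 0 ≤ s * c * (b - H) := by
      apply mul_nonneg (mul_nonneg hs0 (by linarith [hc.1] : (0:ℝ) ≤ c)); linarith [hH.2]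
    have h2 : 0 ≤ (1 - s) * H * (b - c) := by
      apply mul_nonneg (mul_nonneg (by linarith) (by linarith [hH.1] : (0:ℝ) ≤ H)); linarith [hc.2]
    nlinarith

lemma psi_hasDeriv {a b c H : ℝ} (ha : 0 < a) (hc : c ∈ Icc a b) (hH : H ∈ Icc a b)
    {s : ℝ} (hs : s ∈ Icc (0:ℝ) 1) :
    HasDerivAt (fun s => c * H / (s * c + (1 - s) * H))
      (c * H * (H - c) / (s * c + (1 - s) * H) ^ 2) s := by
  have hD := Dpos ha hc hH hs
  have hden : HasDerivAt (fun s : ℝ => s * c + (1 - s) * H) (c - H) s := by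
    have h1 : HasDerivAt (fun s : ℝ => s * c) c s := by
      simpa using (hasDerivAt_id s).mul_const c
    have h2 : HasDerivAt (fun s : ℝ => (1 - s) * H) (-H) s := by
      simpa using (((hasDerivAt_id s).const_sub 1)).mul_const H
    exact (h1.add h2).congr_deriv (by ring)
  have := (hasDerivAt_const s (c * H)).div hden hD.ne'
  exact this.congr_deriv (by ring)

-- integrability of the substituted derivative
set_option maxHeartbeats 1000000 in
lemma w_integrable (f' : ℝ → ℝ) {a b c H : ℝ} (ha : 0 < a) (hab : a < b)
    (hint : IntervalIntegrable f' volume a b)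
    (hc : c ∈ Icc a b) (hH : H ∈ Icc a b) (hne : c ≠ H) :
    IntervalIntegrable
      (fun s => f' (c * H / (s * c + (1 - s) * H)) * (c * H * (H - c) / (s * c + (1 - s) * H) ^ 2))
      volume 0 1 := by
  set ψ : ℝ → ℝ := fun s => c * H / (s * c + (1 - s) * H) with hψ
  set ψ' : ℝ → ℝ := fun s => c * H * (H - c) / (s * c + (1 - s) * H) ^ 2 with hψ'
  have hc0 : 0 < c := lt_of_lt_of_le ha hc.1
  have hH0 : 0 < H := lt_of_lt_of_le ha hH.1
  have hderiv : ∀ s ∈ Icc (0:ℝ) 1, HasDerivWithinAt ψ (ψ' s) (Icc (0:ℝ) 1) s :=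
    fun s hs => (psi_hasDeriv ha hc hH hs).hasDerivWithinAt
  have hinj : InjOn ψ (Icc (0:ℝ) 1) := by
    intro s1 hs1 s2 hs2 heq
    have hD1 := Dpos ha hc hH hs1
    have hD2 := Dpos ha hc hH hs2
    have hcH : 0 < c * H := mul_pos hc0 hH0
    simp only [hψ] at heq
    rw [div_eq_div_iff hD1.ne' hD2.ne'] at heq
    have : (s1 - s2) * (c * H * (c - H)) = 0 := by linear_combination -heq
    rcases mul_eq_zero.1 this with h | h
    · linarith [sub_eq_zero.1 h]
    · exfalso
      have : c - H ≠ 0 := sub_ne_zero.2 hne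
      have := mul_ne_zero hcH.ne' this
      exact this h
  have himg : ψ '' (Icc (0:ℝ) 1) ⊆ Icc a b := by
    rintro _ ⟨s, hs, rfl⟩; exact psimem ha hc hH hs
  have hf'ab : IntegrableOn f' (Icc a b) := by
    rw [← intervalIntegrable_iff_integrableOn_Icc_of_le hab.le]; exact hint
  have h1 : IntegrableOn f' (ψ '' Icc (0:ℝ) 1) := hf'ab.mono_set himg
  have h2 : IntegrableOn (fun s => |ψ' s| • f' (ψ s)) (Icc (0:ℝ) 1) :=
    (integrableOn_image_iff_integrableOn_abs_deriv_smul measurableSet_Icc hderiv hinj f').1 h1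
  rw [intervalIntegrable_iff_integrableOn_Icc_of_le (by norm_num : (0:ℝ) ≤ 1)]
  have key : ∀ s ∈ Icc (0:ℝ) 1,
      f' (ψ s) * ψ' s = ((H - c) / |H - c|) * (|ψ' s| • f' (ψ s)) := by
    intro s hs
    have hD := Dpos ha hc hH hs
    have habs : |ψ' s| = (c * H * |H - c|) / (s * c + (1 - s) * H) ^ 2 := by
      simp only [hψ', abs_div, abs_mul, abs_of_pos hc0, abs_of_pos hH0,
        abs_of_pos (pow_pos hD 2)]
    have hne' : H - c ≠ 0 := sub_ne_zero.2 (Ne.symm hne)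
    have habs0 : |H - c| ≠ 0 := abs_ne_zero.2 hne'
    have hdm : (H - c) / |H - c| * |H - c| = H - c := div_mul_cancel₀ _ habs0
    calc f' (ψ s) * ψ' s
        = ((H - c) / |H - c| * |H - c|) * (c * H / (s * c + (1 - s) * H) ^ 2 * f' (ψ s)) := by
          rw [hdm]; simp only [hψ']; ring
      _ = (H - c) / |H - c| * (|ψ' s| • f' (ψ s)) := by rw [habs, smul_eq_mul]; ring
  have h3 : IntegrableOn (fun s => (H - c) / |H - c| * (|ψ' s| • f' (ψ s))) (Icc (0:ℝ) 1) :=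
    h2.const_mul _
  exact h3.congr_fun (fun s hs => (key s hs).symm) measurableSet_Icc

lemma ftc_key (f f' : ℝ → ℝ) {a b : ℝ} (ha : 0 < a) (hab : a < b)
    (hf : ∀ u ∈ Icc a b, HasDerivAt f (f' u) u)
    (hint : IntervalIntegrable f' volume a b)
    {α : ℝ} (hα : 0 < α) {c H : ℝ} (hc : c ∈ Icc a b) (hH : H ∈ Icc a b)
    (hne : c ≠ H) (lam : ℝ) :
    α * ∫ s in (0:ℝ)..1, s ^ (α - 1) * f (c * H / (s * c + (1 - s) * H))
      = (1 - lam) * f H + lam * f c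
        - ∫ s in (0:ℝ)..1,
            (s ^ α - lam) *
              (f' (c * H / (s * c + (1 - s) * H)) * (c * H * (H - c) / (s * c + (1 - s) * H) ^ 2)) := by
  have hc0 : 0 < c := lt_of_lt_of_le ha hc.1
  have hH0 : 0 < H := lt_of_lt_of_le ha hH.1
  set ψ : ℝ → ℝ := fun s => c * H / (s * c + (1 - s) * H) with hψ
  set w : ℝ → ℝ :=
    fun s => f' (ψ s) * (c * H * (H - c) / (s * c + (1 - s) * H) ^ 2) with hw
  -- F has a derivative everywhere on [0,1]
  have hF : ∀ s ∈ Icc (0:ℝ) 1, HasDerivAt (fun t => f (ψ t)) (w s) s := by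
    intro s hs
    exact (hf _ (psimem ha hc hH hs)).comp s (psi_hasDeriv ha hc hH hs)
  -- continuity of P on [0,1]
  have hFcont : ContinuousOn (fun t => f (ψ t)) (Icc (0:ℝ) 1) :=
    fun s hs => (hF s hs).continuousAt.continuousWithinAt
  have hrpowcont : ContinuousOn (fun t : ℝ => t ^ α - lam) (Icc (0:ℝ) 1) :=
    ((Real.continuous_rpow_const hα.le).sub continuous_const).continuousOn
  have hPcont : ContinuousOn (fun t => (t ^ α - lam) * f (ψ t)) (Icc (0:ℝ) 1) :=
    hrpowcont.mul hFcont
  -- derivative of P on the interior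
  have hPderiv : ∀ t ∈ Ioo (0:ℝ) 1,
      HasDerivWithinAt (fun t => (t ^ α - lam) * f (ψ t))
        ((α * t ^ (α - 1)) * f (ψ t) + (t ^ α - lam) * w t) (Ioi t) t := by
    intro t ht
    have h1 : HasDerivAt (fun t : ℝ => t ^ α - lam) (α * t ^ (α - 1)) t := by
      simpa using (Real.hasDerivAt_rpow_const (p := α) (Or.inl ht.1.ne')).sub_const lam
    exact ((h1.mul (hF t ⟨ht.1.le, ht.2.le⟩))).hasDerivWithinAt
  -- integrability of the two parts
  have hwi : IntervalIntegrable w volume 0 1 := w_integrable f' ha hab hint hc hH hne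
  have hg1 : IntervalIntegrable (fun t => (α * t ^ (α - 1)) * f (ψ t)) volume 0 1 := by
    have : IntervalIntegrable (fun t : ℝ => α * t ^ (α - 1)) volume 0 1 :=
      (intervalIntegral.intervalIntegrable_rpow' (by linarith)).const_mul α
    exact this.mul_continuousOn (by rwa [uIcc_of_le (by norm_num : (0:ℝ) ≤ 1)])
  have hg2 : IntervalIntegrable (fun t => (t ^ α - lam) * w t) volume 0 1 :=
    hwi.continuousOn_mul (by rwa [uIcc_of_le (by norm_num : (0:ℝ) ≤ 1)])
  have hsum := intervalIntegral.integral_eq_sub_of_hasDeriv_right_of_le (by norm_num : (0:ℝ) ≤ 1)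
    hPcont hPderiv (hg1.add hg2)
  rw [intervalIntegral.integral_add hg1 hg2] at hsum
  have hψ1 : ψ 1 = H := by simp only [hψ]; field_simp; ring
  have hψ0 : ψ 0 = c := by simp only [hψ]; field_simp; ring
  have hend : ((1:ℝ) ^ α - lam) * f (ψ 1) - ((0:ℝ) ^ α - lam) * f (ψ 0)
      = (1 - lam) * f H + lam * f c := by
    rw [hψ1, hψ0, Real.one_rpow, Real.zero_rpow hα.ne']; ring
  have hpull : ∫ t in (0:ℝ)..1, (α * t ^ (α - 1)) * f (ψ t)
      = α * ∫ t in (0:ℝ)..1, t ^ (α - 1) * f (ψ t) := by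
    rw [← intervalIntegral.integral_const_mul]
    congr 1; ext t; ring
  rw [hpull, hend] at hsum
  linarith [hsum]

lemma subL (f : ℝ → ℝ) {a b α : ℝ} (ha : 0 < a) (hab : a < b) (hα : 0 < α) :
    ∫ u in (1/(2*a*b/(a+b)))..(1/a), (1/a - u) ^ (α-1) * f (1/u)
      = ((b-a)/(2*a*b)) ^ α *
          ∫ s in (0:ℝ)..1, s ^ (α-1) * f (a*(2*a*b/(a+b))/(s*a+(1-s)*(2*a*b/(a+b)))) := by
  have hb : 0 < b := ha.trans hab
  set H : ℝ := 2*a*b/(a+b) with hH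
  set δ : ℝ := (b-a)/(2*a*b) with hδ
  have hδ0 : 0 < δ := by
    apply div_pos (by linarith) (by positivity)
  have hsum : (0:ℝ) < a + b := by linarith
  have e1 : 1/a - δ = 1/H := by
    rw [hδ, hH]; field_simp; ring
  set g0 : ℝ → ℝ := fun u => (1/a - u) ^ (α-1) * f (1/u) with hg0
  have h := intervalIntegral.integral_comp_mul_add (a := (0:ℝ)) (b := 1) (f := g0)
    (neg_ne_zero.2 hδ0.ne') (1/a)
  have hend : -δ * 1 + 1/a = 1/H := by rw [← e1]; ring
  have hend0 : -δ * 0 + 1/a = 1/a := by ring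
  rw [hend, hend0, smul_eq_mul] at h
  have h3 : ∫ x in (1/a)..(1/H), g0 x = - ∫ u in (1/H)..(1/a), g0 u :=
    intervalIntegral.integral_symm _ _
  have h2 : ∫ u in (1/H)..(1/a), g0 u = δ * ∫ x in (0:ℝ)..1, g0 (-δ * x + 1/a) := by
    rw [h, h3]; field_simp
  rw [h2]
  have hcongr : ∀ x ∈ uIcc (0:ℝ) 1,
      g0 (-δ * x + 1/a) = δ ^ (α-1) * (x ^ (α-1) * f (a*H/(x*a+(1-x)*H))) := by
    intro x hx
    rw [uIcc_of_le (by norm_num : (0:ℝ) ≤ 1)] at hx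
    have hx0 : 0 ≤ x := hx.1
    have hD : 0 < x*a+(1-x)*H := Dpos ha ⟨le_refl a, hab.le⟩
      ⟨by rw [hH]; rw [le_div_iff₀ hsum]; nlinarith, by rw [hH]; rw [div_le_iff₀ hsum]; nlinarith⟩ hx
    have hkey : 1/a - δ*x = (x*a+(1-x)*H)/(a*H) := by
      rw [hδ, hH]; field_simp; ring
    have harg : -δ * x + 1/a = (x*a+(1-x)*H)/(a*H) := by rw [← hkey]; ring
    simp only [hg0, harg]
    have hfrac : 1/a - (x*a+(1-x)*H)/(a*H) = δ*x := by rw [← hkey]; ring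
    rw [hfrac, one_div_div, Real.mul_rpow hδ0.le hx0]
    ring
  rw [intervalIntegral.integral_congr hcongr, intervalIntegral.integral_const_mul]
  have hpow : δ ^ α = δ * δ ^ (α-1) := by
    nth_rewrite 1 [show α = 1 + (α-1) by ring]
    rw [Real.rpow_add hδ0, Real.rpow_one]
  rw [hpow]; ring

lemma subR (f : ℝ → ℝ) {a b α : ℝ} (ha : 0 < a) (hab : a < b) (hα : 0 < α) :
    ∫ u in (1/b)..(1/(2*a*b/(a+b))), (u - 1/b) ^ (α-1) * f (1/u)
      = ((b-a)/(2*a*b)) ^ α *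
          ∫ s in (0:ℝ)..1, s ^ (α-1) * f (b*(2*a*b/(a+b))/(s*b+(1-s)*(2*a*b/(a+b)))) := by
  have hb : 0 < b := ha.trans hab
  set H : ℝ := 2*a*b/(a+b) with hH
  set δ : ℝ := (b-a)/(2*a*b) with hδ
  have hδ0 : 0 < δ := by
    apply div_pos (by linarith) (by positivity)
  have hsum : (0:ℝ) < a + b := by linarith
  have e2 : 1/b + δ = 1/H := by
    rw [hδ, hH]; field_simp; ring
  set g0 : ℝ → ℝ := fun u => (u - 1/b) ^ (α-1) * f (1/u) with hg0
  have h := intervalIntegral.integral_comp_mul_add (a := (0:ℝ)) (b := 1) (f := g0)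
    hδ0.ne' (1/b)
  have hend : δ * 1 + 1/b = 1/H := by rw [← e2]; ring
  have hend0 : δ * 0 + 1/b = 1/b := by ring
  rw [hend, hend0, smul_eq_mul] at h
  have h2 : ∫ u in (1/b)..(1/H), g0 u = δ * ∫ x in (0:ℝ)..1, g0 (δ * x + 1/b) := by
    rw [h]; field_simp
  rw [h2]
  have hcongr : ∀ x ∈ uIcc (0:ℝ) 1,
      g0 (δ * x + 1/b) = δ ^ (α-1) * (x ^ (α-1) * f (b*H/(x*b+(1-x)*H))) := by
    intro x hx
    rw [uIcc_of_le (by norm_num : (0:ℝ) ≤ 1)] at hx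
    have hx0 : 0 ≤ x := hx.1
    have hD : 0 < x*b+(1-x)*H := Dpos ha ⟨hab.le, le_refl b⟩
      ⟨by rw [hH]; rw [le_div_iff₀ hsum]; nlinarith, by rw [hH]; rw [div_le_iff₀ hsum]; nlinarith⟩ hx
    have hkey : 1/b + δ*x = (x*b+(1-x)*H)/(b*H) := by
      rw [hδ, hH]; field_simp; ring
    have harg : δ * x + 1/b = (x*b+(1-x)*H)/(b*H) := by rw [← hkey]; ring
    simp only [hg0, harg]
    have hfrac : (x*b+(1-x)*H)/(b*H) - 1/b = δ*x := by rw [← hkey]; ring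
    rw [hfrac, one_div_div, Real.mul_rpow hδ0.le hx0]
    ring
  rw [intervalIntegral.integral_congr hcongr, intervalIntegral.integral_const_mul]
  have hpow : δ ^ α = δ * δ ^ (α-1) := by
    nth_rewrite 1 [show α = 1 + (α-1) by ring]
    rw [Real.rpow_add hδ0, Real.rpow_one]
  rw [hpow]; ring

lemma bound_key (f' : ℝ → ℝ) {a b : ℝ} (ha : 0 < a) (hab : a < b)
    (hint : IntervalIntegrable f' volume a b)
    {α : ℝ} (hα : 0 < α) {c H : ℝ} (hc : c ∈ Icc a b) (hH : H ∈ Icc a b)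
    (hne : c ≠ H) {M : ℝ} (hM : 0 ≤ M)
    (hbd : ∀ s ∈ Icc (0:ℝ) 1, |f' (c * H / (s * c + (1 - s) * H))| ≤ M) :
    |∫ s in (0:ℝ)..1, (s ^ α - 1/3) *
        (f' (c * H / (s * c + (1 - s) * H)) * (c * H * (H - c) / (s * c + (1 - s) * H) ^ 2))|
      ≤ (M * (c * H * |H - c|)) *
          ∫ s in (0:ℝ)..1, |s ^ α - 1/3| * ((s * c + (1 - s) * H) ^ 2)⁻¹ := by
  have hc0 : 0 < c := lt_of_lt_of_le ha hc.1
  have hH0 : 0 < H := lt_of_lt_of_le ha hH.1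
  have huIcc : uIcc (0:ℝ) 1 = Icc 0 1 := uIcc_of_le (by norm_num)
  have hrcont : ContinuousOn (fun s : ℝ => s ^ α - 1/3) (Icc (0:ℝ) 1) :=
    ((Real.continuous_rpow_const hα.le).sub continuous_const).continuousOn
  have hgi : IntervalIntegrable (fun s => (s ^ α - 1/3) *
      (f' (c * H / (s * c + (1 - s) * H)) * (c * H * (H - c) / (s * c + (1 - s) * H) ^ 2)))
      volume 0 1 :=
    (w_integrable f' ha hab hint hc hH hne).continuousOn_mul (by rwa [huIcc])
  have hDcont : ContinuousOn (fun s : ℝ => ((s * c + (1 - s) * H) ^ 2)⁻¹) (Icc (0:ℝ) 1) := by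
    apply ContinuousOn.inv₀
    · fun_prop
    · intro s hs; exact (pow_pos (Dpos ha hc hH hs) 2).ne'
  have hbcont : ContinuousOn
      (fun s : ℝ => (M * (c * H * |H - c|)) * (|s ^ α - 1/3| * ((s * c + (1 - s) * H) ^ 2)⁻¹))
      (Icc (0:ℝ) 1) :=
    continuousOn_const.mul (hrcont.abs.mul hDcont)
  have hbint : IntervalIntegrable
      (fun s : ℝ => (M * (c * H * |H - c|)) * (|s ^ α - 1/3| * ((s * c + (1 - s) * H) ^ 2)⁻¹))
      volume 0 1 := by
    apply ContinuousOn.intervalIntegrable; rwa [huIcc]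
  calc |∫ s in (0:ℝ)..1, (s ^ α - 1/3) *
        (f' (c * H / (s * c + (1 - s) * H)) * (c * H * (H - c) / (s * c + (1 - s) * H) ^ 2))|
      ≤ ∫ s in (0:ℝ)..1, |(s ^ α - 1/3) *
        (f' (c * H / (s * c + (1 - s) * H)) * (c * H * (H - c) / (s * c + (1 - s) * H) ^ 2))| :=
        intervalIntegral.abs_integral_le_integral_abs (by norm_num)
    _ ≤ ∫ s in (0:ℝ)..1,
        (M * (c * H * |H - c|)) * (|s ^ α - 1/3| * ((s * c + (1 - s) * H) ^ 2)⁻¹) := by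
        apply intervalIntegral.integral_mono_on (by norm_num) hgi.abs hbint
        intro s hs
        have hD := Dpos ha hc hH hs
        have hD2 : (0:ℝ) < (s * c + (1 - s) * H) ^ 2 := pow_pos hD 2
        have heq : |(s ^ α - 1/3) *
            (f' (c * H / (s * c + (1 - s) * H)) * (c * H * (H - c) / (s * c + (1 - s) * H) ^ 2))|
            = |s ^ α - 1/3| * (|f' (c * H / (s * c + (1 - s) * H))| *
                (c * H * |H - c| * ((s * c + (1 - s) * H) ^ 2)⁻¹)) := by
          rw [abs_mul, abs_mul, abs_div, abs_mul, abs_mul, abs_of_pos hc0, abs_of_pos hH0,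
            abs_of_pos hD2]
          ring
        rw [heq]
        have hK : 0 ≤ c * H * |H - c| * ((s * c + (1 - s) * H) ^ 2)⁻¹ := by positivity
        have h1 : |f' (c * H / (s * c + (1 - s) * H))| *
              (c * H * |H - c| * ((s * c + (1 - s) * H) ^ 2)⁻¹)
            ≤ M * (c * H * |H - c| * ((s * c + (1 - s) * H) ^ 2)⁻¹) :=
          mul_le_mul_of_nonneg_right (hbd s hs) hK
        calc |s ^ α - 1/3| * (|f' (c * H / (s * c + (1 - s) * H))| *
              (c * H * |H - c| * ((s * c + (1 - s) * H) ^ 2)⁻¹))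
            ≤ |s ^ α - 1/3| * (M * (c * H * |H - c| * ((s * c + (1 - s) * H) ^ 2)⁻¹)) :=
              mul_le_mul_of_nonneg_left h1 (abs_nonneg _)
          _ = (M * (c * H * |H - c|)) * (|s ^ α - 1/3| * ((s * c + (1 - s) * H) ^ 2)⁻¹) := by ring
    _ = (M * (c * H * |H - c|)) *
          ∫ s in (0:ℝ)..1, |s ^ α - 1/3| * ((s * c + (1 - s) * H) ^ 2)⁻¹ :=
        intervalIntegral.integral_const_mul _ _

theorem stmt_11 (f f' : ℝ → ℝ) (a b : ℝ) (ha : 0 < a) (hab : a < b)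
    (hf : ∀ u ∈ Icc a b, HasDerivAt f (f' u) u)
    (hint : IntervalIntegrable f' volume a b)
    (q : ℝ) (hq : 1 ≤ q)
    (hqc : HarmQuasiConvexOn a b (fun u => |f' u| ^ q))
    (α : ℝ) (hα : 0 < α) (H : ℝ) (hH : H = 2 * a * b / (a + b)) :
    |1 / 6 * (f a + 4 * f H + f b) - (a * b / (b - a)) ^ α * 2 ^ (α - 1) * Real.Gamma (α + 1) * (RLplus α (1 / H) (1 / a) (fun u => f (1 / u)) + RLminus α (1 / H) (1 / b) (fun u => f (1 / u)))| ≤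
      (b - a) / (4 * a * b) *
        (a ^ 2 * max (|f' H| ^ q) (|f' a| ^ q) ^ (1 / q) * C2 α (1 / 3) 1 a H
          + H ^ 2 * max (|f' H| ^ q) (|f' b| ^ q) ^ (1 / q) * C3 α (1 / 3) 1 H b) := by
  have hb : 0 < b := ha.trans hab
  have hsum : (0:ℝ) < a + b := by linarith
  have hδ0 : (0:ℝ) < (b - a) / (2 * a * b) := div_pos (by linarith) (by positivity)
  set δ : ℝ := (b - a) / (2 * a * b) with hδ
  have hH0 : 0 < H := by rw [hH]; positivity
  have haH : a < H := by rw [hH, lt_div_iff₀ hsum]; nlinarith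
  have hHb : H < b := by rw [hH, div_lt_iff₀ hsum]; nlinarith
  have hHmem : H ∈ Icc a b := ⟨haH.le, hHb.le⟩
  have hamem : a ∈ Icc a b := ⟨le_refl a, hab.le⟩
  have hbmem : b ∈ Icc a b := ⟨hab.le, le_refl b⟩
  have hΓ : Real.Gamma α ≠ 0 := (Real.Gamma_pos_of_pos hα).ne'
  have huIcc : uIcc (0:ℝ) 1 = Icc 0 1 := uIcc_of_le (by norm_num)
  -- RLplus computation
  have hplus : Real.Gamma (α + 1) * RLplus α (1 / H) (1 / a) (fun u => f (1 / u))
      = δ ^ α * (2/3 * f H + 1/3 * f a) - δ ^ α *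
          ∫ s in (0:ℝ)..1, (s ^ α - 1/3) *
            (f' (a * H / (s * a + (1 - s) * H)) * (a * H * (H - a) / (s * a + (1 - s) * H) ^ 2)) := by
    have hs := subL f ha hab hα
    rw [← hH, ← hδ] at hs
    have hftc := ftc_key f f' ha hab hf hint hα hamem hHmem haH.ne (1/3)
    rw [RLplus, Real.Gamma_add_one hα.ne', hs]
    have hcl : ∀ X : ℝ, α * Real.Gamma α * (1 / Real.Gamma α * (δ ^ α * X))
        = δ ^ α * (α * X) := by
      intro X; field_simp
    rw [hcl, hftc]
    ring
  -- RLminus computation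
  have hminus : Real.Gamma (α + 1) * RLminus α (1 / H) (1 / b) (fun u => f (1 / u))
      = δ ^ α * (2/3 * f H + 1/3 * f b) - δ ^ α *
          ∫ s in (0:ℝ)..1, (s ^ α - 1/3) *
            (f' (b * H / (s * b + (1 - s) * H)) * (b * H * (H - b) / (s * b + (1 - s) * H) ^ 2)) := by
    have hs := subR f ha hab hα
    rw [← hH, ← hδ] at hs
    have hftc := ftc_key f f' ha hab hf hint hα hbmem hHmem (ne_of_gt hHb) (1/3)
    rw [RLminus, Real.Gamma_add_one hα.ne', hs]
    have hcl : ∀ X : ℝ, α * Real.Gamma α * (1 / Real.Gamma α * (δ ^ α * X))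
        = δ ^ α * (α * X) := by
      intro X; field_simp
    rw [hcl, hftc]
    ring
  set La : ℝ := ∫ s in (0:ℝ)..1, (s ^ α - 1/3) *
      (f' (a * H / (s * a + (1 - s) * H)) * (a * H * (H - a) / (s * a + (1 - s) * H) ^ 2)) with hLa
  set Lb : ℝ := ∫ s in (0:ℝ)..1, (s ^ α - 1/3) *
      (f' (b * H / (s * b + (1 - s) * H)) * (b * H * (H - b) / (s * b + (1 - s) * H) ^ 2)) with hLb
  -- the constant
  have h2α : (0:ℝ) < (2:ℝ) ^ α := Real.rpow_pos_of_pos two_pos α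
  have hK : (a * b / (b - a)) ^ α * 2 ^ (α - 1) * δ ^ α = 1/2 := by
    have h1 : (a * b / (b - a)) ^ α * δ ^ α = ((1:ℝ)/2) ^ α := by
      have hba : (0:ℝ) < b - a := by linarith
      rw [← Real.mul_rpow (le_of_lt (div_pos (by positivity) hba)) hδ0.le]
      congr 1
      rw [hδ, div_mul_div_comm,
        div_eq_div_iff (by positivity) (by norm_num : (2:ℝ) ≠ 0)]
      ring
    calc (a * b / (b - a)) ^ α * 2 ^ (α - 1) * δ ^ α
        = ((a * b / (b - a)) ^ α * δ ^ α) * 2 ^ (α - 1) := by ring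
      _ = ((1:ℝ)/2) ^ α * 2 ^ (α - 1) := by rw [h1]
      _ = 1/2 := by
          rw [show ((1:ℝ)/2) = 2⁻¹ by norm_num, Real.inv_rpow (by norm_num),
            Real.rpow_sub two_pos, Real.rpow_one]
          field_simp
  -- the main identity
  have hinner : 1 / 6 * (f a + 4 * f H + f b) - (a * b / (b - a)) ^ α * 2 ^ (α - 1) *
        Real.Gamma (α + 1) * (RLplus α (1 / H) (1 / a) (fun u => f (1 / u))
          + RLminus α (1 / H) (1 / b) (fun u => f (1 / u)))
      = (La + Lb) / 2 := by
    have hsplit : (a * b / (b - a)) ^ α * 2 ^ (α - 1) * Real.Gamma (α + 1) *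
        (RLplus α (1 / H) (1 / a) (fun u => f (1 / u))
          + RLminus α (1 / H) (1 / b) (fun u => f (1 / u)))
        = ((a * b / (b - a)) ^ α * 2 ^ (α - 1) * δ ^ α) *
            ((2/3 * f H + 1/3 * f a) + (2/3 * f H + 1/3 * f b) - La - Lb) := by
      rw [mul_assoc, mul_add, hplus, hminus]; ring
    rw [hsplit, hK]; ring
  rw [hinner]
  -- pointwise bound from harmonic quasiconvexity
  have hq0 : (0:ℝ) < q := lt_of_lt_of_le one_pos hq
  have hpt : ∀ c ∈ Icc a b, ∀ s ∈ Icc (0:ℝ) 1,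
      |f' (c * H / (s * c + (1 - s) * H))| ≤ max (|f' H| ^ q) (|f' c| ^ q) ^ (1/q) := by
    intro c hc s hs
    have h1 : |f' (c * H / (s * c + (1 - s) * H))| ^ q ≤ max (|f' c| ^ q) (|f' H| ^ q) :=
      hqc c hc H hHmem s hs
    have h2 : |f' (c * H / (s * c + (1 - s) * H))|
        = (|f' (c * H / (s * c + (1 - s) * H))| ^ q) ^ (1/q) := by
      rw [← Real.rpow_mul (abs_nonneg _), mul_one_div_cancel hq0.ne', Real.rpow_one]
    rw [h2, max_comm (|f' H| ^ q)]
    exact Real.rpow_le_rpow (Real.rpow_nonneg (abs_nonneg _) q) h1 (by positivity)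
  have hMa0 : (0:ℝ) ≤ max (|f' H| ^ q) (|f' a| ^ q) ^ (1/q) := by positivity
  have hMb0 : (0:ℝ) ≤ max (|f' H| ^ q) (|f' b| ^ q) ^ (1/q) := by positivity
  have hba := bound_key f' ha hab hint hα hamem hHmem haH.ne hMa0 (hpt a hamem)
  have hbb := bound_key f' ha hab hint hα hbmem hHmem (ne_of_gt hHb) hMb0 (hpt b hbmem)
  rw [← hLa] at hba
  rw [← hLb] at hbb
  set Ia : ℝ := ∫ s in (0:ℝ)..1, |s ^ α - 1/3| * ((s * a + (1 - s) * H) ^ 2)⁻¹ with hIa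
  set Ib : ℝ := ∫ s in (0:ℝ)..1, |s ^ α - 1/3| * ((s * b + (1 - s) * H) ^ 2)⁻¹ with hIb
  rw [abs_of_pos (show (0:ℝ) < H - a by linarith)] at hba
  rw [show |H - b| = b - H by rw [abs_of_neg (show H - b < 0 by linarith)]; ring] at hbb
  -- identify C2 and C3
  have h21 : (2:ℝ) * 1 = 2 := by norm_num
  have hC2 : C2 α (1/3) 1 a H = H ^ 2 * Ia := by
    rw [C2, h21, Real.rpow_two]
    congr 1
    rw [hIa]
    apply intervalIntegral.integral_congr
    intro s hs
    rw [huIcc] at hs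
    have hD := Dpos ha hamem hHmem hs
    show |s ^ α - 1/3| * (s * a + (1 - s) * H) ^ (-(2:ℝ))
        = |s ^ α - 1/3| * ((s * a + (1 - s) * H) ^ 2)⁻¹
    rw [Real.rpow_neg hD.le, Real.rpow_two]
  have hC3 : C3 α (1/3) 1 H b = b ^ 2 * Ib := by
    rw [C3, h21, Real.rpow_two]
    congr 1
    rw [hIb]
    apply intervalIntegral.integral_congr
    intro s hs
    rw [huIcc] at hs
    have hD := Dpos ha hbmem hHmem hs
    show |s ^ α - 1/3| * (s * b + (1 - s) * H) ^ (-(2:ℝ))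
        = |s ^ α - 1/3| * ((s * b + (1 - s) * H) ^ 2)⁻¹
    rw [Real.rpow_neg hD.le, Real.rpow_two]
  have hHa : H - a = a * H * δ := by rw [hH, hδ]; field_simp; ring
  have hbH2 : b - H = b * H * δ := by rw [hH, hδ]; field_simp; ring
  calc |(La + Lb) / 2| ≤ (|La| + |Lb|) / 2 := by
        rw [abs_div, abs_two]
        linarith [abs_add_le La Lb]
    _ ≤ (max (|f' H| ^ q) (|f' a| ^ q) ^ (1/q) * (a * H * (H - a)) * Ia
          + max (|f' H| ^ q) (|f' b| ^ q) ^ (1/q) * (b * H * (b - H)) * Ib) / 2 := by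
        linarith [hba, hbb]
    _ = (b - a) / (4 * a * b) *
        (a ^ 2 * max (|f' H| ^ q) (|f' a| ^ q) ^ (1 / q) * C2 α (1 / 3) 1 a H
          + H ^ 2 * max (|f' H| ^ q) (|f' b| ^ q) ^ (1 / q) * C3 α (1 / 3) 1 H b) := by
        rw [hC2, hC3, hHa, hbH2, hδ]
        field_simp
        ring
end

section
/- If |f'|^q is harmonically quasi-convex on [a,b] for some fixed q ≥ 1, α > 0 and H = 2ab/(a+b), then the following midpoint-type inequality holds: |f(H) − (ab/(b−a))^α 2^{α−1} Γ(α+1) [J_{(1/H)+}^α (f∘g)(1/a) + J_{(1/H)−}^α (f∘g)(1/b)]| ≤ ((b−a)/(4ab)) { a² C₂(α,0,1,a,H) (max{|f'(H)|^q, |f'(a)|^q})^{1/q} + H² C₃(α,0,1,H,b) (max{|f'(H)|^q, |f'(b)|^q})^{1/q} }. -/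
open Real MeasureTheory Set intervalIntegral

lemma hasDerivAt_psi (c H t : ℝ) (hD : t*c + (1-t)*H ≠ 0) :
    HasDerivAt (fun s => c*H/(s*c+(1-s)*H)) (c*H*(H-c)/(t*c+(1-t)*H)^2) t := by
  have hden : HasDerivAt (fun s : ℝ => s*c+(1-s)*H) (c - H) t := by
    have h1 : HasDerivAt (fun s : ℝ => s*c) (1*c) t := (hasDerivAt_id t).mul_const c
    have h2 : HasDerivAt (fun s : ℝ => (1-s)*H) ((0-1)*H) t :=
      ((hasDerivAt_const t (1:ℝ)).sub (hasDerivAt_id t)).mul_const H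
    have := h1.add h2
    refine this.congr_deriv ?_
    ring
  have := (hasDerivAt_const t (c*H)).div hden hD
  refine this.congr_deriv ?_
  ring

lemma aux_key (f f' : ℝ → ℝ) (a b : ℝ) (ha : 0 < a) (hab : a < b)
    (hf : ∀ u ∈ Icc a b, HasDerivAt f (f' u) u)
    (hint : IntervalIntegrable f' volume a b)
    (α : ℝ) (hα : 0 < α) (c H : ℝ) (hc : c ∈ Icc a b) (hHm : H ∈ Icc a b) (hcH : c ≠ H) :
    IntervalIntegrable (fun t => t ^ α * (f' (c*H/(t*c+(1-t)*H)) * (c*H*(H-c)/(t*c+(1-t)*H)^2))) volume 0 1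
    ∧ α * ∫ t in (0:ℝ)..1, t ^ (α-1) * f (c*H/(t*c+(1-t)*H))
      = f H - ∫ t in (0:ℝ)..1, t ^ α * (f' (c*H/(t*c+(1-t)*H)) * (c*H*(H-c)/(t*c+(1-t)*H)^2)) := by
  have hc0 : 0 < c := lt_of_lt_of_le ha hc.1
  have hH0 : 0 < H := lt_of_lt_of_le ha hHm.1
  have hD : ∀ t ∈ Icc (0:ℝ) 1, 0 < t*c+(1-t)*H := by
    intro t ht
    nlinarith [ht.1, ht.2, hc.1, hHm.1, mul_nonneg ht.1 (sub_nonneg.2 hc.1),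
      mul_nonneg (sub_nonneg.2 ht.2) (sub_nonneg.2 hHm.1)]
  have hψm : ∀ t ∈ Icc (0:ℝ) 1, c*H/(t*c+(1-t)*H) ∈ Icc a b := by
    intro t ht
    have hDt := hD t ht
    constructor
    · rw [le_div_iff₀ hDt]
      nlinarith [mul_nonneg ht.1 (mul_nonneg hc0.le (sub_nonneg.2 hHm.1)),
        mul_nonneg (sub_nonneg.2 ht.2) (mul_nonneg hH0.le (sub_nonneg.2 hc.1))]
    · rw [div_le_iff₀ hDt]
      nlinarith [mul_nonneg ht.1 (mul_nonneg hc0.le (sub_nonneg.2 hHm.2)),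
        mul_nonneg (sub_nonneg.2 ht.2) (mul_nonneg hH0.le (sub_nonneg.2 hc.2))]
  have hψd : ∀ t ∈ Icc (0:ℝ) 1, HasDerivAt (fun s => c*H/(s*c+(1-s)*H))
      (c*H*(H-c)/(t*c+(1-t)*H)^2) t := fun t ht => hasDerivAt_psi c H t (hD t ht).ne'
  have hinj : InjOn (fun s => c*H/(s*c+(1-s)*H)) (Icc 0 1) := by
    intro t1 h1 t2 h2 heq
    have hD1 := hD t1 h1
    have hD2 := hD t2 h2
    simp only at heq
    have h3 : t1*c+(1-t1)*H = t2*c+(1-t2)*H := by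
      field_simp [hD1.ne', hD2.ne'] at heq
      rw [one_div, one_div, inv_inj] at heq
      linarith
    have : t1 * (c - H) = t2 * (c - H) := by linarith
    exact mul_right_cancel₀ (sub_ne_zero.2 hcH) this
  have hIab : IntegrableOn f' (Icc a b) :=
    (intervalIntegrable_iff_integrableOn_Icc_of_le hab.le).1 hint
  have himg : IntegrableOn f' ((fun s => c*H/(s*c+(1-s)*H)) '' (Icc 0 1)) :=
    hIab.mono_set (image_subset_iff.2 hψm)
  have h2 : IntegrableOn (fun t => |c*H*(H-c)/(t*c+(1-t)*H)^2| • f' (c*H/(t*c+(1-t)*H))) (Icc 0 1) :=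
    (integrableOn_image_iff_integrableOn_abs_deriv_smul measurableSet_Icc
      (fun t ht => (hψd t ht).hasDerivWithinAt) hinj f').1 himg
  have h2' : IntervalIntegrable (fun t => |c*H*(H-c)/(t*c+(1-t)*H)^2| * f' (c*H/(t*c+(1-t)*H))) volume 0 1 := by
    rw [intervalIntegrable_iff_integrableOn_Icc_of_le zero_le_one]
    simpa [smul_eq_mul] using h2
  have hcont_rpow : ContinuousOn (fun t : ℝ => t ^ α) (Icc (0:ℝ) 1) :=
    continuousOn_id.rpow_const (fun x _ => Or.inr hα.le)
  have h3 : IntervalIntegrable (fun t => (|c*H*(H-c)/(t*c+(1-t)*H)^2| * f' (c*H/(t*c+(1-t)*H)))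
      * (t ^ α * ((H-c)/|H-c|))) volume 0 1 := by
    apply h2'.mul_continuousOn
    rw [uIcc_of_le zero_le_one]
    exact (hcont_rpow.mul continuousOn_const)
  have hBint : IntervalIntegrable (fun t => t ^ α * (f' (c*H/(t*c+(1-t)*H)) * (c*H*(H-c)/(t*c+(1-t)*H)^2))) volume 0 1 := by
    apply h3.congr
    have hsub : uIoc (0:ℝ) 1 ⊆ Icc 0 1 := by
      rw [uIoc_of_le zero_le_one]; exact Ioc_subset_Icc_self
    intro t ht
    have hDt := hD t (hsub ht)
    have hHc : |H - c| ≠ 0 := abs_ne_zero.2 (sub_ne_zero.2 (Ne.symm hcH))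
    have habs : |c*H*(H-c)/(t*c+(1-t)*H)^2| = c*H*|H-c|/(t*c+(1-t)*H)^2 := by
      rw [abs_div, abs_mul, abs_mul, abs_of_pos hc0, abs_of_pos hH0,
        abs_of_pos (by positivity : (0:ℝ) < (t*c+(1-t)*H)^2)]
    dsimp only
    rw [habs]
    field_simp
  refine ⟨hBint, ?_⟩
  have hψcont : ContinuousOn (fun s => c*H/(s*c+(1-s)*H)) (Icc (0:ℝ) 1) :=
    fun t ht => ((hψd t ht).continuousAt).continuousWithinAt
  have hfψcont : ContinuousOn (fun t => f (c*H/(t*c+(1-t)*H))) (Icc (0:ℝ) 1) := by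
    intro t ht
    have := ContinuousAt.comp_continuousWithinAt (x := t)
      (hf _ (hψm t ht)).continuousAt (hψcont t ht)
    exact this
  have hΦcont : ContinuousOn (fun t => t ^ α * (f (c*H/(t*c+(1-t)*H)) - f H)) (Icc (0:ℝ) 1) :=
    hcont_rpow.mul (hfψcont.sub continuousOn_const)
  have hAint : IntervalIntegrable (fun t => t ^ (α-1) * (f (c*H/(t*c+(1-t)*H)) - f H)) volume 0 1 := by
    apply (intervalIntegrable_rpow' (by linarith)).mul_continuousOn
    rw [uIcc_of_le zero_le_one]
    exact hfψcont.sub continuousOn_const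
  have hAint' : IntervalIntegrable (fun t => t ^ (α-1) * f (c*H/(t*c+(1-t)*H))) volume 0 1 := by
    apply (intervalIntegrable_rpow' (by linarith)).mul_continuousOn
    rw [uIcc_of_le zero_le_one]; exact hfψcont
  have key : (∫ t in (0:ℝ)..1, (α * (t ^ (α-1) * (f (c*H/(t*c+(1-t)*H)) - f H))
      + t ^ α * (f' (c*H/(t*c+(1-t)*H)) * (c*H*(H-c)/(t*c+(1-t)*H)^2)))) = 0 := by
    have hderiv : ∀ t ∈ Ioo (0:ℝ) 1,
        HasDerivWithinAt (fun t => t ^ α * (f (c*H/(t*c+(1-t)*H)) - f H))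
          (α * (t ^ (α-1) * (f (c*H/(t*c+(1-t)*H)) - f H))
            + t ^ α * (f' (c*H/(t*c+(1-t)*H)) * (c*H*(H-c)/(t*c+(1-t)*H)^2))) (Ioi t) t := by
      intro t ht
      have htI : t ∈ Icc (0:ℝ) 1 := Ioo_subset_Icc_self ht
      have h1 : HasDerivAt (fun s : ℝ => s ^ α) (α * t ^ (α-1)) t :=
        Real.hasDerivAt_rpow_const (Or.inl ht.1.ne')
      have h2 : HasDerivAt (fun s => f (c*H/(s*c+(1-s)*H)))
          (f' (c*H/(t*c+(1-t)*H)) * (c*H*(H-c)/(t*c+(1-t)*H)^2)) t := by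
        exact (hf _ (hψm t htI)).comp t (hψd t htI)
      have h3 := h1.mul (h2.sub_const (f H))
      have h4 : α * t ^ (α - 1) * (f (c*H/(t*c+(1-t)*H)) - f H)
          + t ^ α * (f' (c*H/(t*c+(1-t)*H)) * (c*H*(H-c)/(t*c+(1-t)*H)^2))
          = α * (t ^ (α-1) * (f (c*H/(t*c+(1-t)*H)) - f H))
            + t ^ α * (f' (c*H/(t*c+(1-t)*H)) * (c*H*(H-c)/(t*c+(1-t)*H)^2)) := by ring
      rw [← h4]
      exact h3.hasDerivWithinAt
    have hiint : IntervalIntegrable (fun t => α * (t ^ (α-1) * (f (c*H/(t*c+(1-t)*H)) - f H))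
        + t ^ α * (f' (c*H/(t*c+(1-t)*H)) * (c*H*(H-c)/(t*c+(1-t)*H)^2))) volume 0 1 :=
      (hAint.const_mul α).add hBint
    have := integral_eq_sub_of_hasDeriv_right_of_le zero_le_one hΦcont hderiv hiint
    rw [this]
    have hψ1 : c*H/((1:ℝ)*c+(1-1)*H) = H := by
      field_simp
      ring
    have hψ0record : (0:ℝ) ^ α = 0 := Real.zero_rpow hα.ne'
    rw [hψ1]
    simp [hψ0record, Real.one_rpow]
  have hsplit := integral_add (hAint.const_mul α) hBint
  rw [hsplit] at key
  have hconstint : IntervalIntegrable (fun t : ℝ => t ^ (α-1) * f H) volume 0 1 :=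
    (intervalIntegrable_rpow' (by linarith)).mul_const (f H)
  have hA : (∫ t in (0:ℝ)..1, α * (t ^ (α-1) * (f (c*H/(t*c+(1-t)*H)) - f H)))
      = α * ((∫ t in (0:ℝ)..1, t ^ (α-1) * f (c*H/(t*c+(1-t)*H))) - (1/α) * f H) := by
    rw [intervalIntegral.integral_const_mul]
    congr 1
    have : (fun t : ℝ => t ^ (α-1) * (f (c*H/(t*c+(1-t)*H)) - f H))
        = fun t : ℝ => t ^ (α-1) * f (c*H/(t*c+(1-t)*H)) - t ^ (α-1) * f H := by
      funext t; ring
    rw [this, integral_sub hAint' hconstint, intervalIntegral.integral_mul_const]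
    congr 1
    rw [integral_rpow (Or.inl (by linarith))]
    have h5 : α - 1 + 1 = α := by ring
    rw [h5, Real.one_rpow, Real.zero_rpow hα.ne']
    ring
  rw [hA] at key
  rw [mul_sub, show α * (1/α * f H) = f H by field_simp] at key
  linarith

lemma RL_left (f : ℝ → ℝ) (α : ℝ) (hα : 0 < α) (a H : ℝ) (ha : 0 < a) (haH : a < H) :
    ∫ u in (1/H)..(1/a), (1/a - u) ^ (α-1) * f (1/u)
      = ((H-a)/(a*H)) ^ α * ∫ t in (0:ℝ)..1, t ^ (α-1) * f (a*H/(t*a+(1-t)*H)) := by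
  set κ := (H-a)/(a*H) with hκdef
  have hH0 : 0 < H := ha.trans haH
  have hκ : 0 < κ := div_pos (by linarith) (by positivity)
  have h := integral_comp_mul_add (a := (0:ℝ)) (b := 1)
    (f := fun u => (1/a - u) ^ (α-1) * f (1/u)) (c := -κ) (neg_ne_zero.2 hκ.ne') (1/a)
  have he0 : -κ * 0 + 1/a = 1/a := by ring
  have he1 : -κ * 1 + 1/a = 1/H := by
    rw [hκdef]; field_simp; ring
  rw [he0, he1] at h
  have h2 : (∫ u in (1/H)..(1/a), (1/a - u) ^ (α-1) * f (1/u))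
      = κ * ∫ x in (0:ℝ)..1, (1/a - (-κ * x + 1/a)) ^ (α-1) * f (1/(-κ * x + 1/a)) := by
    rw [integral_symm (1/a) (1/H), h, smul_eq_mul, ← mul_assoc,
      show κ * (-κ)⁻¹ = -1 by field_simp, neg_one_mul]
  rw [h2]
  have h3 : ∀ x ∈ uIcc (0:ℝ) 1, (1/a - (-κ * x + 1/a)) ^ (α-1) * f (1/(-κ * x + 1/a))
      = κ ^ (α-1) * (x ^ (α-1) * f (a*H/(x*a+(1-x)*H))) := by
    intro x hx
    rw [uIcc_of_le zero_le_one] at hx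
    have hD : 0 < x*a+(1-x)*H := by nlinarith [hx.1, hx.2]
    have e1 : 1/a - (-κ * x + 1/a) = κ * x := by ring
    have e2 : 1/(-κ * x + 1/a) = a*H/(x*a+(1-x)*H) := by
      rw [hκdef]
      rw [show -((H-a)/(a*H)) * x + 1/a = (x*a+(1-x)*H)/(a*H) by field_simp; ring]
      rw [one_div_div]
    rw [e1, e2, Real.mul_rpow hκ.le hx.1]
    ring
  rw [integral_congr h3, intervalIntegral.integral_const_mul, ← mul_assoc]
  congr 1
  have h4 := Real.rpow_add hκ 1 (α-1)
  rw [Real.rpow_one, show (1:ℝ)+(α-1) = α by ring] at h4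
  exact h4.symm

lemma RL_right (f : ℝ → ℝ) (α : ℝ) (hα : 0 < α) (b H : ℝ) (hH : 0 < H) (hHb : H < b) :
    ∫ u in (1/b)..(1/H), (u - 1/b) ^ (α-1) * f (1/u)
      = ((b-H)/(b*H)) ^ α * ∫ t in (0:ℝ)..1, t ^ (α-1) * f (b*H/(t*b+(1-t)*H)) := by
  set κ := (b-H)/(b*H) with hκdef
  have hb0 : 0 < b := hH.trans hHb
  have hκ : 0 < κ := div_pos (by linarith) (by positivity)
  have h := integral_comp_mul_add (a := (0:ℝ)) (b := 1)
    (f := fun u => (u - 1/b) ^ (α-1) * f (1/u)) (c := κ) hκ.ne' (1/b)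
  have he0 : κ * 0 + 1/b = 1/b := by ring
  have he1 : κ * 1 + 1/b = 1/H := by
    rw [hκdef]; field_simp; ring
  rw [he0, he1] at h
  have h2 : (∫ u in (1/b)..(1/H), (u - 1/b) ^ (α-1) * f (1/u))
      = κ * ∫ x in (0:ℝ)..1, (κ * x + 1/b - 1/b) ^ (α-1) * f (1/(κ * x + 1/b)) := by
    rw [h, smul_eq_mul, ← mul_assoc, mul_inv_cancel₀ hκ.ne', one_mul]
  rw [h2]
  have h3 : ∀ x ∈ uIcc (0:ℝ) 1, (κ * x + 1/b - 1/b) ^ (α-1) * f (1/(κ * x + 1/b))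
      = κ ^ (α-1) * (x ^ (α-1) * f (b*H/(x*b+(1-x)*H))) := by
    intro x hx
    rw [uIcc_of_le zero_le_one] at hx
    have hD : 0 < x*b+(1-x)*H := by nlinarith [hx.1, hx.2]
    have e1 : κ * x + 1/b - 1/b = κ * x := by ring
    have e2 : 1/(κ * x + 1/b) = b*H/(x*b+(1-x)*H) := by
      rw [hκdef]
      rw [show (b-H)/(b*H) * x + 1/b = (x*b+(1-x)*H)/(b*H) by field_simp; ring]
      rw [one_div_div]
    rw [e1, e2, Real.mul_rpow hκ.le hx.1]
    ring
  rw [integral_congr h3, intervalIntegral.integral_const_mul, ← mul_assoc]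
  congr 1
  have h4 := Real.rpow_add hκ 1 (α-1)
  rw [Real.rpow_one, show (1:ℝ)+(α-1) = α by ring] at h4
  exact h4.symm

lemma aux_bound (f' : ℝ → ℝ) (c H α q M : ℝ) (hc0 : 0 < c) (hH0 : 0 < H)
    (hα : 0 < α) (hq : 1 ≤ q)
    (hD : ∀ t ∈ Icc (0:ℝ) 1, 0 < t*c+(1-t)*H)
    (hM : ∀ t ∈ Icc (0:ℝ) 1, |f' (c*H/(t*c+(1-t)*H))| ^ q ≤ M)
    (hBint : IntervalIntegrable (fun t => t ^ α * (f' (c*H/(t*c+(1-t)*H)) * (c*H*(H-c)/(t*c+(1-t)*H)^2))) volume 0 1) :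
    |∫ t in (0:ℝ)..1, t ^ α * (f' (c*H/(t*c+(1-t)*H)) * (c*H*(H-c)/(t*c+(1-t)*H)^2))|
      ≤ (c*H*|H-c| * M^(1/q)) * ∫ t in (0:ℝ)..1, t ^ α * ((t*c+(1-t)*H)^2)⁻¹ := by
  have hq0 : 0 < q := lt_of_lt_of_le one_pos hq
  have hfb : ∀ t ∈ Icc (0:ℝ) 1, |f' (c*H/(t*c+(1-t)*H))| ≤ M^(1/q) := by
    intro t ht
    have h1 := hM t ht
    have h2 := Real.rpow_le_rpow (by positivity) h1 (by positivity : (0:ℝ) ≤ 1/q)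
    rwa [← Real.rpow_mul (abs_nonneg _), mul_one_div_cancel hq0.ne', Real.rpow_one] at h2
  have hMnn : 0 ≤ M := le_trans (by positivity) (hM 0 ⟨le_refl 0, zero_le_one⟩)
  have hM0 : 0 ≤ M ^ (1/q) := Real.rpow_nonneg hMnn _
  have hDcont : ContinuousOn (fun t : ℝ => t*c+(1-t)*H) (Icc (0:ℝ) 1) := by
    fun_prop
  have hRcont : ContinuousOn (fun t : ℝ => (c*H*|H-c| * M^(1/q)) * (t ^ α * ((t*c+(1-t)*H)^2)⁻¹))
      (Icc (0:ℝ) 1) := by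
    apply continuousOn_const.mul
    apply ContinuousOn.mul (continuousOn_id.rpow_const (fun x _ => Or.inr hα.le))
    exact ((hDcont.pow 2).inv₀ (fun t ht => pow_ne_zero 2 (hD t ht).ne'))
  have hRint : IntervalIntegrable (fun t : ℝ => (c*H*|H-c| * M^(1/q)) * (t ^ α * ((t*c+(1-t)*H)^2)⁻¹)) volume 0 1 := by
    apply ContinuousOn.intervalIntegrable
    rwa [uIcc_of_le zero_le_one]
  calc |∫ t in (0:ℝ)..1, t ^ α * (f' (c*H/(t*c+(1-t)*H)) * (c*H*(H-c)/(t*c+(1-t)*H)^2))|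
      ≤ ∫ t in (0:ℝ)..1, |t ^ α * (f' (c*H/(t*c+(1-t)*H)) * (c*H*(H-c)/(t*c+(1-t)*H)^2))| :=
        abs_integral_le_integral_abs zero_le_one
    _ ≤ ∫ t in (0:ℝ)..1, (c*H*|H-c| * M^(1/q)) * (t ^ α * ((t*c+(1-t)*H)^2)⁻¹) := by
        apply integral_mono_on zero_le_one hBint.abs hRint
        intro t ht
        have hDt := hD t ht
        have hrt : (0:ℝ) ≤ t ^ α := Real.rpow_nonneg ht.1 α
        have e1 : |t ^ α * (f' (c*H/(t*c+(1-t)*H)) * (c*H*(H-c)/(t*c+(1-t)*H)^2))|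
            = (t ^ α * (c*H*|H-c| * ((t*c+(1-t)*H)^2)⁻¹)) * |f' (c*H/(t*c+(1-t)*H))| := by
          rw [abs_mul, abs_mul, abs_div, abs_mul, abs_mul, abs_of_nonneg hrt,
            abs_of_pos hc0, abs_of_pos hH0, abs_of_pos (by positivity : (0:ℝ) < (t*c+(1-t)*H)^2)]
          field_simp
        rw [e1]
        calc (t ^ α * (c*H*|H-c| * ((t*c+(1-t)*H)^2)⁻¹)) * |f' (c*H/(t*c+(1-t)*H))|
            ≤ (t ^ α * (c*H*|H-c| * ((t*c+(1-t)*H)^2)⁻¹)) * M^(1/q) := by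
              apply mul_le_mul_of_nonneg_left (hfb t ht)
              positivity
          _ = (c*H*|H-c| * M^(1/q)) * (t ^ α * ((t*c+(1-t)*H)^2)⁻¹) := by ring
    _ = (c*H*|H-c| * M^(1/q)) * ∫ t in (0:ℝ)..1, t ^ α * ((t*c+(1-t)*H)^2)⁻¹ :=
        intervalIntegral.integral_const_mul _ _

set_option maxHeartbeats 1000000 in
theorem stmt_12 (f f' : ℝ → ℝ) (a b : ℝ) (ha : 0 < a) (hab : a < b)
    (hf : ∀ u ∈ Icc a b, HasDerivAt f (f' u) u)
    (hint : IntervalIntegrable f' volume a b)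
    (q : ℝ) (hq : 1 ≤ q)
    (hqc : HarmQuasiConvexOn a b (fun u => |f' u| ^ q))
    (α : ℝ) (hα : 0 < α) (H : ℝ) (hH : H = 2 * a * b / (a + b)) :
    |f H - (a * b / (b - a)) ^ α * 2 ^ (α - 1) * Real.Gamma (α + 1) * (RLplus α (1 / H) (1 / a) (fun u => f (1 / u)) + RLminus α (1 / H) (1 / b) (fun u => f (1 / u)))| ≤
      (b - a) / (4 * a * b) *
        (a ^ 2 * C2 α 0 1 a H * max (|f' H| ^ q) (|f' a| ^ q) ^ (1 / q)
          + H ^ 2 * C3 α 0 1 H b * max (|f' H| ^ q) (|f' b| ^ q) ^ (1 / q)) := by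
  have hb : 0 < b := ha.trans hab
  have hHa : a < H := by
    rw [hH, lt_div_iff₀ (by positivity)]
    nlinarith [mul_pos ha (sub_pos.2 hab)]
  have hHb : H < b := by
    rw [hH, div_lt_iff₀ (by positivity)]
    nlinarith [mul_pos hb (sub_pos.2 hab)]
  have hH0 : 0 < H := ha.trans hHa
  have hHm : H ∈ Icc a b := ⟨hHa.le, hHb.le⟩
  have hamem : a ∈ Icc a b := ⟨le_refl a, hab.le⟩
  have hbmem : b ∈ Icc a b := ⟨hab.le, le_refl b⟩
  have hΓ : 0 < Real.Gamma α := Real.Gamma_pos_of_pos hα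
  have hκa : (H - a)/(a*H) = (b-a)/(2*a*b) := by
    rw [hH]; field_simp; ring
  have hκb : (b - H)/(b*H) = (b-a)/(2*a*b) := by
    rw [hH]; field_simp; ring
  set κ : ℝ := (b-a)/(2*a*b) with hκdef
  have hκ : 0 < κ := div_pos (by linarith) (by positivity)
  set Xa : ℝ := ∫ t in (0:ℝ)..1, t ^ (α-1) * f (a*H/(t*a+(1-t)*H)) with hXa
  set Xb : ℝ := ∫ t in (0:ℝ)..1, t ^ (α-1) * f (b*H/(t*b+(1-t)*H)) with hXb
  have hRL1 : RLplus α (1/H) (1/a) (fun u => f (1/u)) = (1/Real.Gamma α) * (κ ^ α * Xa) := by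
    simp only [RLplus]
    rw [RL_left f α hα a H ha hHa, hκa]
  have hRL2 : RLminus α (1/H) (1/b) (fun u => f (1/u)) = (1/Real.Gamma α) * (κ ^ α * Xb) := by
    simp only [RLminus]
    rw [RL_right f α hα b H hH0 hHb, hκb]
  have keyA := aux_key f f' a b ha hab hf hint α hα a H hamem hHm hHa.ne
  have keyB := aux_key f f' a b ha hab hf hint α hα b H hbmem hHm hHb.ne'
  set Ba : ℝ := ∫ t in (0:ℝ)..1, t ^ α * (f' (a*H/(t*a+(1-t)*H)) * (a*H*(H-a)/(t*a+(1-t)*H)^2)) with hBa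
  set Bb : ℝ := ∫ t in (0:ℝ)..1, t ^ α * (f' (b*H/(t*b+(1-t)*H)) * (b*H*(H-b)/(t*b+(1-t)*H)^2)) with hBb
  have hpre : (a*b/(b-a)) ^ α * 2 ^ (α-1) * Real.Gamma (α+1) * (1/Real.Gamma α) * κ ^ α = α/2 := by
    have h2κ : a*b/(b-a) = (2*κ)⁻¹ := by
      rw [hκdef, show 2*((b-a)/(2*a*b)) = (b-a)/(a*b) by field_simp, inv_div]
    rw [h2κ, Real.inv_rpow (by positivity), Real.mul_rpow (by norm_num) hκ.le,
      Real.Gamma_add_one hα.ne', Real.rpow_sub two_pos, Real.rpow_one]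
    have h2α : (2:ℝ) ^ α ≠ 0 := (Real.rpow_pos_of_pos two_pos α).ne'
    have hκα : κ ^ α ≠ 0 := (Real.rpow_pos_of_pos hκ α).ne'
    field_simp
  have hE : f H - (a * b / (b - a)) ^ α * 2 ^ (α - 1) * Real.Gamma (α + 1)
      * (RLplus α (1 / H) (1 / a) (fun u => f (1 / u)) + RLminus α (1 / H) (1 / b) (fun u => f (1 / u)))
      = (Ba + Bb)/2 := by
    rw [hRL1, hRL2]
    have hfact : (a*b/(b-a)) ^ α * 2 ^ (α-1) * Real.Gamma (α+1)
        * ((1/Real.Gamma α) * (κ ^ α * Xa) + (1/Real.Gamma α) * (κ ^ α * Xb))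
        = (1/2) * (α * Xa) + (1/2) * (α * Xb) := by
      linear_combination (Xa + Xb) * hpre
    rw [hfact, keyA.2, keyB.2]
    ring
  rw [hE]
  -- bounds
  have hq0 : 0 < q := lt_of_lt_of_le one_pos hq
  set Ma : ℝ := max (|f' H| ^ q) (|f' a| ^ q) with hMa
  set Mb : ℝ := max (|f' H| ^ q) (|f' b| ^ q) with hMb
  have hDa : ∀ t ∈ Icc (0:ℝ) 1, 0 < t*a+(1-t)*H := fun t ht => by
    nlinarith [ht.1, ht.2]
  have hDb : ∀ t ∈ Icc (0:ℝ) 1, 0 < t*b+(1-t)*H := fun t ht => by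
    nlinarith [ht.1, ht.2]
  have hMafact : ∀ t ∈ Icc (0:ℝ) 1, |f' (a*H/(t*a+(1-t)*H))| ^ q ≤ Ma := by
    intro t ht
    have := hqc a hamem H hHm t ht
    simp only at this
    rw [hMa, max_comm]
    exact this
  have hMbfact : ∀ t ∈ Icc (0:ℝ) 1, |f' (b*H/(t*b+(1-t)*H))| ^ q ≤ Mb := by
    intro t ht
    have := hqc b hbmem H hHm t ht
    simp only at this
    rw [hMb, max_comm]
    exact this
  have hba := aux_bound f' a H α q Ma ha hH0 hα hq hDa hMafact keyA.1
  have hbb := aux_bound f' b H α q Mb hb hH0 hα hq hDb hMbfact keyB.1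
  rw [abs_of_pos (sub_pos.2 hHa)] at hba
  rw [abs_of_neg (sub_neg.2 hHb)] at hbb
  set Ka : ℝ := ∫ t in (0:ℝ)..1, t ^ α * ((t*a+(1-t)*H)^2)⁻¹ with hKa
  set Kb : ℝ := ∫ t in (0:ℝ)..1, t ^ α * ((t*b+(1-t)*H)^2)⁻¹ with hKb
  -- C2/C3 conversions
  have hC2 : C2 α 0 1 a H = H^2 * Ka := by
    unfold C2
    congr 1
    · rw [show (2*(1:ℝ)) = ((2:ℕ):ℝ) by norm_num, Real.rpow_natCast]
    · apply integral_congr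
      intro t ht
      rw [uIcc_of_le zero_le_one] at ht
      have hDt := hDa t ht
      simp only [sub_zero]
      rw [ abs_of_nonneg (Real.rpow_nonneg ht.1 α),
        show -(2*(1:ℝ)) = -((2:ℕ):ℝ) by norm_num, Real.rpow_neg hDt.le, Real.rpow_natCast]
  have hC3 : C3 α 0 1 H b = b^2 * Kb := by
    unfold C3
    congr 1
    · rw [show (2*(1:ℝ)) = ((2:ℕ):ℝ) by norm_num, Real.rpow_natCast]
    · apply integral_congr
      intro t ht
      rw [uIcc_of_le zero_le_one] at ht
      have hDt := hDb t ht
      simp only [sub_zero]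
      rw [ abs_of_nonneg (Real.rpow_nonneg ht.1 α),
        show -(2*(1:ℝ)) = -((2:ℕ):ℝ) by norm_num, Real.rpow_neg hDt.le, Real.rpow_natCast]
  have hco1 : a*H*(H-a)/2 = (b-a)/(4*a*b)*(a^2*H^2) := by
    rw [hH]; field_simp; ring
  have hco2 : b*H*(b-H)/2 = (b-a)/(4*a*b)*(H^2*b^2) := by
    rw [hH]; field_simp; ring
  rw [neg_sub] at hbb
  calc |(Ba + Bb)/2| ≤ (|Ba| + |Bb|)/2 := by
        rw [abs_div, abs_two]
        linarith [abs_add_le Ba Bb]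
    _ ≤ ((a*H*(H-a) * Ma^(1/q)) * Ka + (b*H*(b-H) * Mb^(1/q)) * Kb)/2 := by
        linarith [hba, hbb]
    _ = (b - a) / (4 * a * b) *
        (a ^ 2 * C2 α 0 1 a H * Ma ^ (1 / q) + H ^ 2 * C3 α 0 1 H b * Mb ^ (1 / q)) := by
        rw [hC2, hC3]
        linear_combination (Ka * Ma^(1/q)) * hco1 + (Kb * Mb^(1/q)) * hco2
end

section
/- If |f'|^q is harmonically quasi-convex on [a,b] for some fixed q ≥ 1, α > 0 and H = 2ab/(a+b), then the following trapezoid-type inequality holds: |(f(a) + f(b))/2 − (ab/(b−a))^α 2^{α−1} Γ(α+1) [J_{(1/H)+}^α (f∘g)(1/a) + J_{(1/H)−}^α (f∘g)(1/b)]| ≤ ((b−a)/(4ab)) { a² C₂(α,1,1,a,H) (max{|f'(H)|^q, |f'(a)|^q})^{1/q} + H² C₃(α,1,1,H,b) (max{|f'(H)|^q, |f'(b)|^q})^{1/q} }. -/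
open Real MeasureTheory Set intervalIntegral

private lemma Ppos {u v : ℝ} (hu : 0 < u) (hv : 0 < v) {t : ℝ} (ht : t ∈ Icc (0:ℝ) 1) :
    0 < t * u + (1 - t) * v := by
  rcases eq_or_lt_of_le ht.1 with h | h
  · simpa [← h] using hv
  · have : 0 ≤ (1 - t) * v := mul_nonneg (by linarith [ht.2]) hv.le
    nlinarith

private lemma lmem {u v : ℝ} (hu : 0 < u) (hv : 0 < v) {t : ℝ} (ht : t ∈ Icc (0:ℝ) 1) :
    u * v / (t * u + (1 - t) * v) ∈ Set.uIcc u v := by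
  have hP := Ppos hu hv ht
  have hmin : min u v ≤ t * u + (1 - t) * v := by
    rcases le_total u v with h | h
    · simp only [min_eq_left h]
      nlinarith [ht.1, ht.2]
    · simp only [min_eq_right h]
      nlinarith [ht.1, ht.2]
  have hmax : t * u + (1 - t) * v ≤ max u v := by
    rcases le_total u v with h | h
    · simp only [max_eq_right h]; nlinarith [ht.1, ht.2]
    · simp only [max_eq_left h]; nlinarith [ht.1, ht.2]
  have huv : u * v = min u v * max u v := (min_mul_max u v).symm
  rw [← Set.Icc_min_max]
  constructor
  · rw [le_div_iff₀ hP, huv]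
    exact mul_le_mul_of_nonneg_left hmax (le_min hu.le hv.le)
  · rw [div_le_iff₀ hP, huv]
    have h0 : 0 < max u v := lt_max_of_lt_left hu
    calc min u v * max u v ≤ (t * u + (1 - t) * v) * max u v :=
          mul_le_mul_of_nonneg_right hmin h0.le
      _ = max u v * (t * u + (1 - t) * v) := by ring

private lemma lderiv {u v : ℝ} (hu : 0 < u) (hv : 0 < v) {t : ℝ} (ht : t ∈ Icc (0:ℝ) 1) :
    HasDerivAt (fun s => u * v / (s * u + (1 - s) * v))
      (u * v * (v - u) / (t * u + (1 - t) * v) ^ 2) t := by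
  have hP := Ppos hu hv ht
  have hPd : HasDerivAt (fun s => s * u + (1 - s) * v) (u - v) t := by
    have h1 : HasDerivAt (fun s : ℝ => s * u) u t := by
      simpa using (hasDerivAt_id t).mul_const u
    have h2 : HasDerivAt (fun s : ℝ => (1 - s) * v) (-v) t := by
      simpa using ((hasDerivAt_const t (1:ℝ)).sub (hasDerivAt_id t)).mul_const v
    exact (h1.add h2).congr_deriv (by ring)
  have := (hasDerivAt_const t (u * v)).div hPd hP.ne'
  refine this.congr_deriv ?_
  field_simp
  ring

private lemma linj {u v : ℝ} (hu : 0 < u) (hv : 0 < v) (huv : u ≠ v) :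
    Set.InjOn (fun s => u * v / (s * u + (1 - s) * v)) (Icc (0:ℝ) 1) := by
  intro t1 h1 t2 h2 h
  have hP1 := Ppos hu hv h1
  have hP2 := Ppos hu hv h2
  simp only at h
  have huv0 : 0 < u * v := mul_pos hu hv
  have hPP : t1 * u + (1 - t1) * v = t2 * u + (1 - t2) * v := by
    rw [div_eq_div_iff hP1.ne' hP2.ne'] at h
    have := mul_left_cancel₀ huv0.ne' h
    linarith
  have : t1 * (u - v) = t2 * (u - v) := by linarith
  have huv' : u - v ≠ 0 := sub_ne_zero.2 huv
  exact mul_right_cancel₀ huv' this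

private lemma Dint {f' : ℝ → ℝ} {u v : ℝ} (hu : 0 < u) (hv : 0 < v) (huv : u ≠ v)
    (hint : IntegrableOn f' (Set.uIcc u v)) :
    IntervalIntegrable
      (fun t => f' (u * v / (t * u + (1 - t) * v)) * (u * v * (v - u) / (t * u + (1 - t) * v) ^ 2))
      volume 0 1 := by
  rw [intervalIntegrable_iff_integrableOn_Icc_of_le zero_le_one]
  have hderiv : ∀ t ∈ Icc (0:ℝ) 1,
      HasDerivWithinAt (fun s => u * v / (s * u + (1 - s) * v))
        (u * v * (v - u) / (t * u + (1 - t) * v) ^ 2) (Icc (0:ℝ) 1) t :=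
    fun t ht => (lderiv hu hv ht).hasDerivWithinAt
  have himg : (fun s => u * v / (s * u + (1 - s) * v)) '' Icc (0:ℝ) 1 ⊆ Set.uIcc u v := by
    rintro x ⟨t, ht, rfl⟩
    exact lmem hu hv ht
  have h1 : IntegrableOn f' ((fun s => u * v / (s * u + (1 - s) * v)) '' Icc (0:ℝ) 1) :=
    hint.mono_set himg
  have h2 := (integrableOn_image_iff_integrableOn_abs_deriv_smul measurableSet_Icc hderiv
      (linj hu hv huv) f').mp h1
  rcases lt_or_gt_of_ne huv with h | h
  · -- u < v : derivative positive
    apply h2.congr_fun _ measurableSet_Icc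
    intro t ht
    have hP := Ppos hu hv ht
    have : 0 < u * v * (v - u) / (t * u + (1 - t) * v) ^ 2 :=
      div_pos (mul_pos (mul_pos hu hv) (sub_pos.2 h)) (by positivity)
    simp only [smul_eq_mul, abs_of_pos this]
    ring
  · -- v < u : derivative negative
    apply MeasureTheory.IntegrableOn.congr_fun (h2.neg) _ measurableSet_Icc
    intro t ht
    have hP := Ppos hu hv ht
    have hneg : u * v * (v - u) / (t * u + (1 - t) * v) ^ 2 < 0 := by
      apply div_neg_of_neg_of_pos _ (by positivity)
      have : 0 < u * v * (u - v) := mul_pos (mul_pos hu hv) (sub_pos.2 h)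
      nlinarith
    simp only [smul_eq_mul, Pi.neg_apply, abs_of_neg hneg]
    ring

private lemma contfl {f f' : ℝ → ℝ} {u v : ℝ} (hu : 0 < u) (hv : 0 < v)
    (hf : ∀ x ∈ Set.uIcc u v, HasDerivAt f (f' x) x) {t : ℝ} (ht : t ∈ Icc (0:ℝ) 1) :
    ContinuousAt (fun s => f (u * v / (s * u + (1 - s) * v))) t :=
  (((hf _ (lmem hu hv ht)).comp t (lderiv hu hv ht)).continuousAt)

private lemma key_lemma (f f' : ℝ → ℝ) (α : ℝ) (hα : 0 < α) {u v : ℝ}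
    (hu : 0 < u) (hv : 0 < v) (huv : u ≠ v)
    (hf : ∀ x ∈ Set.uIcc u v, HasDerivAt f (f' x) x)
    (hint : IntegrableOn f' (Set.uIcc u v)) :
    (α * ∫ t in (0:ℝ)..1, t ^ (α - 1) * f (u * v / (t * u + (1 - t) * v))
        = f v - ∫ t in (0:ℝ)..1,
            t ^ α * (f' (u * v / (t * u + (1 - t) * v)) * (u * v * (v - u) / (t * u + (1 - t) * v) ^ 2)))
    ∧ (f u = f v - ∫ t in (0:ℝ)..1,
            f' (u * v / (t * u + (1 - t) * v)) * (u * v * (v - u) / (t * u + (1 - t) * v) ^ 2)) := by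
  set D : ℝ → ℝ := fun t =>
    f' (u * v / (t * u + (1 - t) * v)) * (u * v * (v - u) / (t * u + (1 - t) * v) ^ 2) with hD
  have hDint : IntervalIntegrable D volume 0 1 := Dint hu hv huv hint
  have hderiv : ∀ t ∈ Icc (0:ℝ) 1,
      HasDerivAt (fun s => f (u * v / (s * u + (1 - s) * v))) (D t) t :=
    fun t ht => (hf _ (lmem hu hv ht)).comp t (lderiv hu hv ht)
  have hcont : ContinuousOn (fun s => f (u * v / (s * u + (1 - s) * v))) (Icc (0:ℝ) 1) :=
    fun t ht => (contfl hu hv hf ht).continuousWithinAt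
  have hl0 : u * v / (0 * u + (1 - 0) * v) = u := by field_simp; ring
  have hl1 : u * v / (1 * u + (1 - 1) * v) = v := by
    rw [show (1:ℝ) * u + (1 - 1) * v = u by ring]
    field_simp
  have hrpc : ContinuousOn (fun t : ℝ => t ^ α) (Icc (0:ℝ) 1) := by
    apply ContinuousOn.rpow_const continuousOn_id
    exact fun x _ => Or.inr hα.le
  have huIcc01 : Set.uIcc (0:ℝ) 1 = Icc (0:ℝ) 1 := Set.uIcc_of_le zero_le_one
  -- E2
  have hE2 : (∫ t in (0:ℝ)..1, D t) = f v - f u := by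
    have := intervalIntegral.integral_eq_sub_of_hasDerivAt (f := fun s => f (u * v / (s * u + (1 - s) * v)))
      (f' := D) (a := (0:ℝ)) (b := 1) (fun t ht => hderiv t (huIcc01 ▸ ht)) hDint
    rw [this]
    simp only [hl0, hl1]
  -- integrability of the two pieces
  have hint1 : IntervalIntegrable (fun t : ℝ => t ^ (α - 1) * f (u * v / (t * u + (1 - t) * v)))
      volume 0 1 := by
    apply IntervalIntegrable.mul_continuousOn
    · exact intervalIntegrable_rpow' (by linarith)
    · rw [huIcc01]; exact hcont
  have hint2 : IntervalIntegrable (fun t : ℝ => t ^ α * D t) volume 0 1 := by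
    apply IntervalIntegrable.continuousOn_mul hDint
    rw [huIcc01]; exact hrpc
  -- E1 via improper FTC
  have hE1 : (∫ t in (0:ℝ)..1, (α * (t ^ (α - 1) * f (u * v / (t * u + (1 - t) * v))) + t ^ α * D t))
      = f v - 0 := by
    apply intervalIntegral.integral_eq_sub_of_hasDerivAt_of_tendsto (f := fun t : ℝ => t ^ α * f (u * v / (t * u + (1 - t) * v))) zero_lt_one
    · intro t ht
      have h1 : HasDerivAt (fun s : ℝ => s ^ α) (α * t ^ (α - 1)) t :=
        Real.hasDerivAt_rpow_const (Or.inl ht.1.ne')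
      have h2 := hderiv t ⟨ht.1.le, ht.2.le⟩
      have := h1.mul h2
      refine this.congr_deriv ?_
      ring
    · exact ((hint1.const_mul α).add hint2)
    · have hc : ContinuousAt (fun t : ℝ => t ^ α * f (u * v / (t * u + (1 - t) * v))) 0 := by
        apply ContinuousAt.mul
        · exact Real.continuousAt_rpow_const 0 α (Or.inr hα.le)
        · exact contfl hu hv hf (by norm_num)
      simpa [Real.zero_rpow hα.ne'] using hc.tendsto.mono_left nhdsWithin_le_nhds
    · have hc : ContinuousAt (fun t : ℝ => t ^ α * f (u * v / (t * u + (1 - t) * v))) 1 := by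
        apply ContinuousAt.mul
        · exact Real.continuousAt_rpow_const 1 α (Or.inl one_ne_zero)
        · exact contfl hu hv hf (by norm_num)
      simpa [show u * v / u = v from by field_simp] using hc.tendsto.mono_left nhdsWithin_le_nhds
  rw [intervalIntegral.integral_add (hint1.const_mul α) hint2,
    intervalIntegral.integral_const_mul] at hE1
  simp only [hD] at hE1 hE2
  constructor
  · linarith [hE1]
  · linarith [hE2]

private lemma bound_lemma (f' : ℝ → ℝ) (α : ℝ) (hα : 0 < α) {u v M : ℝ}
    (hu : 0 < u) (hv : 0 < v) (huv : u ≠ v)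
    (hint : IntegrableOn f' (Set.uIcc u v))
    (hM : ∀ t ∈ Icc (0:ℝ) 1, |f' (u * v / (t * u + (1 - t) * v))| ≤ M) :
    |∫ t in (0:ℝ)..1, (t ^ α - 1) *
        (f' (u * v / (t * u + (1 - t) * v)) * (u * v * (v - u) / (t * u + (1 - t) * v) ^ 2))|
      ≤ (u * v * |v - u| * M) *
          ∫ t in (0:ℝ)..1, |t ^ α - 1| * ((t * u + (1 - t) * v) ^ 2)⁻¹ := by
  have huIcc01 : Set.uIcc (0:ℝ) 1 = Icc (0:ℝ) 1 := Set.uIcc_of_le zero_le_one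
  have hrpc : ContinuousOn (fun t : ℝ => t ^ α - 1) (Icc (0:ℝ) 1) := by
    apply ContinuousOn.sub _ continuousOn_const
    exact ContinuousOn.rpow_const continuousOn_id (fun x _ => Or.inr hα.le)
  have hPcont : ContinuousOn (fun t : ℝ => ((t * u + (1 - t) * v) ^ 2)⁻¹) (Icc (0:ℝ) 1) := by
    apply ContinuousOn.inv₀
    · exact (Continuous.continuousOn (by continuity))
    · intro t ht
      exact pow_ne_zero 2 (Ppos hu hv ht).ne'
  have hgint : IntervalIntegrable (fun t => (t ^ α - 1) *
      (f' (u * v / (t * u + (1 - t) * v)) * (u * v * (v - u) / (t * u + (1 - t) * v) ^ 2)))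
      volume 0 1 := by
    apply IntervalIntegrable.continuousOn_mul (Dint hu hv huv hint)
    rw [huIcc01]; exact hrpc
  have hbint : IntervalIntegrable
      (fun t => (u * v * |v - u| * M) * (|t ^ α - 1| * ((t * u + (1 - t) * v) ^ 2)⁻¹))
      volume 0 1 := by
    apply ContinuousOn.intervalIntegrable
    rw [huIcc01]
    exact (continuousOn_const.mul (hrpc.abs.mul hPcont))
  have hpt : ∀ t ∈ Icc (0:ℝ) 1, |(t ^ α - 1) *
      (f' (u * v / (t * u + (1 - t) * v)) * (u * v * (v - u) / (t * u + (1 - t) * v) ^ 2))|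
      ≤ (u * v * |v - u| * M) * (|t ^ α - 1| * ((t * u + (1 - t) * v) ^ 2)⁻¹) := by
    intro t ht
    have hP := Ppos hu hv ht
    have h1 : |(t ^ α - 1) * (f' (u * v / (t * u + (1 - t) * v)) *
        (u * v * (v - u) / (t * u + (1 - t) * v) ^ 2))|
        = |t ^ α - 1| * (|f' (u * v / (t * u + (1 - t) * v))| *
            (u * v * |v - u| * ((t * u + (1 - t) * v) ^ 2)⁻¹)) := by
      rw [abs_mul, abs_mul, abs_div, abs_mul, abs_mul,
        abs_of_pos hu, abs_of_pos hv, abs_of_pos (pow_pos hP 2)]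
      ring
    rw [h1]
    have h2 : |f' (u * v / (t * u + (1 - t) * v))| *
        (u * v * |v - u| * ((t * u + (1 - t) * v) ^ 2)⁻¹)
        ≤ M * (u * v * |v - u| * ((t * u + (1 - t) * v) ^ 2)⁻¹) := by
      apply mul_le_mul_of_nonneg_right (hM t ht)
      positivity
    calc |t ^ α - 1| * (|f' (u * v / (t * u + (1 - t) * v))| *
        (u * v * |v - u| * ((t * u + (1 - t) * v) ^ 2)⁻¹))
        ≤ |t ^ α - 1| * (M * (u * v * |v - u| * ((t * u + (1 - t) * v) ^ 2)⁻¹)) :=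
          mul_le_mul_of_nonneg_left h2 (abs_nonneg _)
      _ = (u * v * |v - u| * M) * (|t ^ α - 1| * ((t * u + (1 - t) * v) ^ 2)⁻¹) := by ring
  calc |∫ t in (0:ℝ)..1, (t ^ α - 1) *
        (f' (u * v / (t * u + (1 - t) * v)) * (u * v * (v - u) / (t * u + (1 - t) * v) ^ 2))|
      ≤ ∫ t in (0:ℝ)..1, |(t ^ α - 1) *
          (f' (u * v / (t * u + (1 - t) * v)) * (u * v * (v - u) / (t * u + (1 - t) * v) ^ 2))| :=
        intervalIntegral.abs_integral_le_integral_abs zero_le_one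
    _ ≤ ∫ t in (0:ℝ)..1, (u * v * |v - u| * M) * (|t ^ α - 1| * ((t * u + (1 - t) * v) ^ 2)⁻¹) := by
        apply intervalIntegral.integral_mono_on zero_le_one hgint.abs hbint hpt
    _ = (u * v * |v - u| * M) * ∫ t in (0:ℝ)..1, |t ^ α - 1| * ((t * u + (1 - t) * v) ^ 2)⁻¹ :=
        intervalIntegral.integral_const_mul _ _

private lemma subPlus (g : ℝ → ℝ) (y c : ℝ) (hc : c ≠ 0) :
    (∫ s in (y - c)..y, g s) = c • ∫ t in (0:ℝ)..1, g (y - c * t) := by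
  have h1 := intervalIntegral.integral_comp_mul_left (a := (0:ℝ)) (b := 1)
    (fun x => g (y - x)) hc
  have h2 := intervalIntegral.integral_comp_sub_left (a := (0:ℝ)) (b := c) g y
  simp only [mul_zero, mul_one, sub_zero] at h1 h2
  rw [show (∫ t in (0:ℝ)..1, g (y - c * t)) = ∫ t in (0:ℝ)..1, (fun x => g (y - x)) (c * t) from rfl,
    h1, smul_inv_smul₀ hc, h2]

private lemma subMinus (g : ℝ → ℝ) (y c : ℝ) (hc : c ≠ 0) :
    (∫ s in y..(y + c), g s) = c • ∫ t in (0:ℝ)..1, g (y + c * t) := by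
  have h1 := intervalIntegral.integral_comp_mul_left (a := (0:ℝ)) (b := 1)
    (fun x => g (y + x)) hc
  have h2 := intervalIntegral.integral_comp_add_left (a := (0:ℝ)) (b := c) g y
  simp only [mul_zero, mul_one, add_zero] at h1 h2
  rw [show (∫ t in (0:ℝ)..1, g (y + c * t)) = ∫ t in (0:ℝ)..1, (fun x => g (y + x)) (c * t) from rfl,
    h1, smul_inv_smul₀ hc, h2]

theorem stmt_13 (f f' : ℝ → ℝ) (a b : ℝ) (ha : 0 < a) (hab : a < b)
    (hf : ∀ u ∈ Icc a b, HasDerivAt f (f' u) u)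
    (hint : IntervalIntegrable f' volume a b)
    (q : ℝ) (hq : 1 ≤ q)
    (hqc : HarmQuasiConvexOn a b (fun u => |f' u| ^ q))
    (α : ℝ) (hα : 0 < α) (H : ℝ) (hH : H = 2 * a * b / (a + b)) :
    |(f a + f b) / 2 - (a * b / (b - a)) ^ α * 2 ^ (α - 1) * Real.Gamma (α + 1) * (RLplus α (1 / H) (1 / a) (fun u => f (1 / u)) + RLminus α (1 / H) (1 / b) (fun u => f (1 / u)))| ≤
      (b - a) / (4 * a * b) *
        (a ^ 2 * C2 α 1 1 a H * max (|f' H| ^ q) (|f' a| ^ q) ^ (1 / q)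
          + H ^ 2 * C3 α 1 1 H b * max (|f' H| ^ q) (|f' b| ^ q) ^ (1 / q)) := by
  have hb : 0 < b := lt_trans ha hab
  have hba : 0 < b - a := sub_pos.2 hab
  have hΓ : 0 < Real.Gamma α := Real.Gamma_pos_of_pos hα
  have hΓ1 : Real.Gamma (α + 1) = α * Real.Gamma α := Real.Gamma_add_one hα.ne'
  set c : ℝ := (b - a) / (2 * a * b) with hc
  have hc0 : 0 < c := by positivity
  have hH0 : 0 < H := by rw [hH]; positivity
  have hHa : a < H := by
    rw [hH, lt_div_iff₀ (by positivity)]; nlinarith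
  have hHb : H < b := by
    rw [hH, div_lt_iff₀ (by positivity)]; nlinarith
  have hq0 : 0 < q := lt_of_lt_of_le one_pos hq
  -- interval facts
  have hfA : ∀ x ∈ Set.uIcc a H, HasDerivAt f (f' x) x := by
    intro x hx
    rw [Set.uIcc_of_le hHa.le] at hx
    exact hf x ⟨hx.1, le_trans hx.2 hHb.le⟩
  have hfB : ∀ x ∈ Set.uIcc b H, HasDerivAt f (f' x) x := by
    intro x hx
    rw [Set.uIcc_of_ge hHb.le] at hx
    exact hf x ⟨le_trans hHa.le hx.1, hx.2⟩
  have hintIcc : IntegrableOn f' (Icc a b) :=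
    (intervalIntegrable_iff_integrableOn_Icc_of_le hab.le).1 hint
  have hintA : IntegrableOn f' (Set.uIcc a H) := by
    rw [Set.uIcc_of_le hHa.le]
    exact hintIcc.mono_set (Icc_subset_Icc le_rfl hHb.le)
  have hintB : IntegrableOn f' (Set.uIcc b H) := by
    rw [Set.uIcc_of_ge hHb.le]
    exact hintIcc.mono_set (Icc_subset_Icc hHa.le le_rfl)
  -- bounds from quasiconvexity
  have hMA : ∀ t ∈ Icc (0:ℝ) 1,
      |f' (a * H / (t * a + (1 - t) * H))| ≤ max (|f' H| ^ q) (|f' a| ^ q) ^ (1 / q) := by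
    intro t ht
    have h0 := hqc a ⟨le_rfl, hab.le⟩ H ⟨hHa.le, hHb.le⟩ t ht
    simp only at h0
    calc |f' (a * H / (t * a + (1 - t) * H))|
        = ((|f' (a * H / (t * a + (1 - t) * H))|) ^ q) ^ (1/q) := by
          rw [← Real.rpow_mul (abs_nonneg _), mul_one_div_cancel hq0.ne', Real.rpow_one]
      _ ≤ (max (|f' a| ^ q) (|f' H| ^ q)) ^ (1/q) :=
          Real.rpow_le_rpow (Real.rpow_nonneg (abs_nonneg _) _) h0 (by positivity)
      _ = max (|f' H| ^ q) (|f' a| ^ q) ^ (1 / q) := by rw [max_comm]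
  have hMB : ∀ t ∈ Icc (0:ℝ) 1,
      |f' (b * H / (t * b + (1 - t) * H))| ≤ max (|f' H| ^ q) (|f' b| ^ q) ^ (1 / q) := by
    intro t ht
    have h0 := hqc b ⟨hab.le, le_rfl⟩ H ⟨hHa.le, hHb.le⟩ t ht
    simp only at h0
    calc |f' (b * H / (t * b + (1 - t) * H))|
        = ((|f' (b * H / (t * b + (1 - t) * H))|) ^ q) ^ (1/q) := by
          rw [← Real.rpow_mul (abs_nonneg _), mul_one_div_cancel hq0.ne', Real.rpow_one]
      _ ≤ (max (|f' b| ^ q) (|f' H| ^ q)) ^ (1/q) :=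
          Real.rpow_le_rpow (Real.rpow_nonneg (abs_nonneg _) _) h0 (by positivity)
      _ = max (|f' H| ^ q) (|f' b| ^ q) ^ (1 / q) := by rw [max_comm]
  -- apply key lemmas
  obtain ⟨hE1A, hE2A⟩ := key_lemma f f' α hα ha hH0 (ne_of_lt hHa) hfA hintA
  obtain ⟨hE1B, hE2B⟩ := key_lemma f f' α hα hb hH0 (ne_of_gt hHb) hfB hintB
  have hboundA := bound_lemma f' α hα ha hH0 (ne_of_lt hHa) hintA hMA
  have hboundB := bound_lemma f' α hα hb hH0 (ne_of_gt hHb) hintB hMB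
  -- integrability needed to split integrals
  have huIcc01 : Set.uIcc (0:ℝ) 1 = Icc (0:ℝ) 1 := Set.uIcc_of_le zero_le_one
  have hrpc : ContinuousOn (fun t : ℝ => t ^ α) (Set.uIcc (0:ℝ) 1) := by
    rw [huIcc01]
    exact ContinuousOn.rpow_const continuousOn_id (fun x _ => Or.inr hα.le)
  have hDintA := Dint (f' := f') ha hH0 (ne_of_lt hHa) hintA
  have hDintB := Dint (f' := f') hb hH0 (ne_of_gt hHb) hintB
  have hXA : (∫ t in (0:ℝ)..1, (t ^ α - 1) *
      (f' (a * H / (t * a + (1 - t) * H)) * (a * H * (H - a) / (t * a + (1 - t) * H) ^ 2)))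
      = (∫ t in (0:ℝ)..1, t ^ α *
          (f' (a * H / (t * a + (1 - t) * H)) * (a * H * (H - a) / (t * a + (1 - t) * H) ^ 2)))
        - ∫ t in (0:ℝ)..1,
            f' (a * H / (t * a + (1 - t) * H)) * (a * H * (H - a) / (t * a + (1 - t) * H) ^ 2) := by
    rw [← intervalIntegral.integral_sub (hDintA.continuousOn_mul hrpc) hDintA]
    exact intervalIntegral.integral_congr (fun t _ => by ring)
  have hXB : (∫ t in (0:ℝ)..1, (t ^ α - 1) *
      (f' (b * H / (t * b + (1 - t) * H)) * (b * H * (H - b) / (t * b + (1 - t) * H) ^ 2)))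
      = (∫ t in (0:ℝ)..1, t ^ α *
          (f' (b * H / (t * b + (1 - t) * H)) * (b * H * (H - b) / (t * b + (1 - t) * H) ^ 2)))
        - ∫ t in (0:ℝ)..1,
            f' (b * H / (t * b + (1 - t) * H)) * (b * H * (H - b) / (t * b + (1 - t) * H) ^ 2) := by
    rw [← intervalIntegral.integral_sub (hDintB.continuousOn_mul hrpc) hDintB]
    exact intervalIntegral.integral_congr (fun t _ => by ring)
  -- rewrite the RL integrals
  have hccα : c ^ α = c * c ^ (α - 1) := by
    have h := Real.rpow_add hc0 1 (α - 1)
    rw [Real.rpow_one] at h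
    rw [show (1:ℝ) + (α - 1) = α from by ring] at h
    exact h
  have hRLp : Real.Gamma (α + 1) * RLplus α (1 / H) (1 / a) (fun u => f (1 / u))
      = α * c ^ α * ∫ t in (0:ℝ)..1, t ^ (α - 1) * f (a * H / (t * a + (1 - t) * H)) := by
    have hy : (1:ℝ) / H = 1 / a - c := by
      rw [hH, hc]; field_simp; ring
    have hcongr : Set.EqOn
        (fun t => (1 / a - (1 / a - c * t)) ^ (α - 1) * f (1 / (1 / a - c * t)))
        (fun t => c ^ (α - 1) * (t ^ (α - 1) * f (a * H / (t * a + (1 - t) * H))))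
        (Set.uIcc (0:ℝ) 1) := by
      intro t ht
      rw [huIcc01] at ht
      have harg : 1 / a - c * t = (t * a + (1 - t) * H) / (a * H) := by
        rw [hc, hH]; field_simp; ring
      simp only
      rw [show 1 / a - (1 / a - c * t) = c * t from by ring,
        Real.mul_rpow hc0.le ht.1, harg, one_div_div]
      ring
    rw [RLplus, hy, subPlus _ _ _ hc0.ne']
    rw [show (∫ t in (0:ℝ)..1, (1 / a - (1 / a - c * t)) ^ (α - 1) * f (1 / (1 / a - c * t)))
        = ∫ t in (0:ℝ)..1, c ^ (α - 1) * (t ^ (α - 1) * f (a * H / (t * a + (1 - t) * H)))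
      from intervalIntegral.integral_congr hcongr]
    rw [intervalIntegral.integral_const_mul, hΓ1, smul_eq_mul]
    rw [show α * Real.Gamma α * (1 / Real.Gamma α *
        (c * (c ^ (α - 1) * ∫ t in (0:ℝ)..1, t ^ (α - 1) * f (a * H / (t * a + (1 - t) * H)))))
        = α * (c * c ^ (α - 1)) * (∫ t in (0:ℝ)..1, t ^ (α - 1) * f (a * H / (t * a + (1 - t) * H)))
            * (Real.Gamma α / Real.Gamma α) from by ring]
    rw [div_self hΓ.ne', mul_one, hccα]
  have hRLm : Real.Gamma (α + 1) * RLminus α (1 / H) (1 / b) (fun u => f (1 / u))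
      = α * c ^ α * ∫ t in (0:ℝ)..1, t ^ (α - 1) * f (b * H / (t * b + (1 - t) * H)) := by
    have hy : (1:ℝ) / H = 1 / b + c := by
      rw [hH, hc]; field_simp; ring
    have hcongr : Set.EqOn
        (fun t => (1 / b + c * t - 1 / b) ^ (α - 1) * f (1 / (1 / b + c * t)))
        (fun t => c ^ (α - 1) * (t ^ (α - 1) * f (b * H / (t * b + (1 - t) * H))))
        (Set.uIcc (0:ℝ) 1) := by
      intro t ht
      rw [huIcc01] at ht
      have harg : 1 / b + c * t = (t * b + (1 - t) * H) / (b * H) := by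
        rw [hc, hH]; field_simp; ring
      simp only
      rw [show 1 / b + c * t - 1 / b = c * t from by ring,
        Real.mul_rpow hc0.le ht.1, harg, one_div_div]
      ring
    rw [RLminus, hy, subMinus _ _ _ hc0.ne']
    rw [show (∫ t in (0:ℝ)..1, (1 / b + c * t - 1 / b) ^ (α - 1) * f (1 / (1 / b + c * t)))
        = ∫ t in (0:ℝ)..1, c ^ (α - 1) * (t ^ (α - 1) * f (b * H / (t * b + (1 - t) * H)))
      from intervalIntegral.integral_congr hcongr]
    rw [intervalIntegral.integral_const_mul, hΓ1, smul_eq_mul]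
    rw [show α * Real.Gamma α * (1 / Real.Gamma α *
        (c * (c ^ (α - 1) * ∫ t in (0:ℝ)..1, t ^ (α - 1) * f (b * H / (t * b + (1 - t) * H)))))
        = α * (c * c ^ (α - 1)) * (∫ t in (0:ℝ)..1, t ^ (α - 1) * f (b * H / (t * b + (1 - t) * H)))
            * (Real.Gamma α / Real.Gamma α) from by ring]
    rw [div_self hΓ.ne', mul_one, hccα]
  -- the key coefficient identity
  have hK : (a * b / (b - a)) ^ α * 2 ^ (α - 1) * c ^ α = 1 / 2 := by
    have h1 : (a * b / (b - a)) ^ α * c ^ α = ((a * b / (b - a)) * c) ^ α :=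
      (Real.mul_rpow (by positivity) hc0.le).symm
    have h2 : (a * b / (b - a)) * c = 1 / 2 := by
      rw [hc]; field_simp
    have h3 : ((1:ℝ) / 2) ^ α = (2 ^ α)⁻¹ := by
      rw [one_div, Real.inv_rpow (by norm_num : (0:ℝ) ≤ 2)]
    have h4 : (2:ℝ) ^ (α - 1) = 2 ^ α / 2 := by
      rw [Real.rpow_sub (by norm_num : (0:ℝ) < 2), Real.rpow_one]
    have h5 : (0:ℝ) < 2 ^ α := Real.rpow_pos_of_pos (by norm_num) α
    calc (a * b / (b - a)) ^ α * 2 ^ (α - 1) * c ^ α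
        = ((a * b / (b - a)) ^ α * c ^ α) * 2 ^ (α - 1) := by ring
      _ = ((1:ℝ) / 2) ^ α * 2 ^ (α - 1) := by rw [h1, h2]
      _ = (2 ^ α)⁻¹ * (2 ^ α / 2) := by rw [h3, h4]
      _ = 1 / 2 := by field_simp
  -- main identity
  have hmain : (f a + f b) / 2 - (a * b / (b - a)) ^ α * 2 ^ (α - 1) * Real.Gamma (α + 1) *
      (RLplus α (1 / H) (1 / a) (fun u => f (1 / u))
        + RLminus α (1 / H) (1 / b) (fun u => f (1 / u)))
      = ((∫ t in (0:ℝ)..1, (t ^ α - 1) *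
          (f' (a * H / (t * a + (1 - t) * H)) * (a * H * (H - a) / (t * a + (1 - t) * H) ^ 2)))
        + ∫ t in (0:ℝ)..1, (t ^ α - 1) *
          (f' (b * H / (t * b + (1 - t) * H)) * (b * H * (H - b) / (t * b + (1 - t) * H) ^ 2))) / 2 := by
    have h2 : (a * b / (b - a)) ^ α * 2 ^ (α - 1) * Real.Gamma (α + 1) *
        (RLplus α (1 / H) (1 / a) (fun u => f (1 / u))
          + RLminus α (1 / H) (1 / b) (fun u => f (1 / u)))
        = (1 / 2) * ((α * ∫ t in (0:ℝ)..1, t ^ (α - 1) * f (a * H / (t * a + (1 - t) * H)))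
            + (α * ∫ t in (0:ℝ)..1, t ^ (α - 1) * f (b * H / (t * b + (1 - t) * H)))) := by
      calc (a * b / (b - a)) ^ α * 2 ^ (α - 1) * Real.Gamma (α + 1) *
          (RLplus α (1 / H) (1 / a) (fun u => f (1 / u))
            + RLminus α (1 / H) (1 / b) (fun u => f (1 / u)))
          = (a * b / (b - a)) ^ α * 2 ^ (α - 1) *
              ((Real.Gamma (α + 1) * RLplus α (1 / H) (1 / a) (fun u => f (1 / u)))
                + (Real.Gamma (α + 1) * RLminus α (1 / H) (1 / b) (fun u => f (1 / u)))) := by ring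
        _ = (a * b / (b - a)) ^ α * 2 ^ (α - 1) *
              ((α * c ^ α * ∫ t in (0:ℝ)..1, t ^ (α - 1) * f (a * H / (t * a + (1 - t) * H)))
                + (α * c ^ α * ∫ t in (0:ℝ)..1, t ^ (α - 1) * f (b * H / (t * b + (1 - t) * H)))) := by
            rw [hRLp, hRLm]
        _ = ((a * b / (b - a)) ^ α * 2 ^ (α - 1) * c ^ α) *
              ((α * ∫ t in (0:ℝ)..1, t ^ (α - 1) * f (a * H / (t * a + (1 - t) * H)))
                + (α * ∫ t in (0:ℝ)..1, t ^ (α - 1) * f (b * H / (t * b + (1 - t) * H)))) := by ring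
        _ = (1 / 2) * ((α * ∫ t in (0:ℝ)..1, t ^ (α - 1) * f (a * H / (t * a + (1 - t) * H)))
            + (α * ∫ t in (0:ℝ)..1, t ^ (α - 1) * f (b * H / (t * b + (1 - t) * H)))) := by
            rw [hK]
    rw [h2, hE1A, hE1B]
    linarith [hXA, hXB, hE2A, hE2B]
  rw [hmain]
  -- final estimates
  have habsA : |H - a| = H - a := abs_of_pos (sub_pos.2 hHa)
  have habsB : |H - b| = b - H := by rw [abs_of_neg (sub_neg.2 hHb), neg_sub]
  rw [habsA] at hboundA
  rw [habsB] at hboundB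
  have hC2 : C2 α 1 1 a H
      = H ^ 2 * ∫ t in (0:ℝ)..1, |t ^ α - 1| * ((t * a + (1 - t) * H) ^ 2)⁻¹ := by
    rw [C2, mul_one]
    congr 1
    · rw [← Real.rpow_natCast H 2]; norm_num
    · apply intervalIntegral.integral_congr
      intro t ht
      rw [huIcc01] at ht
      simp only
      rw [Real.rpow_neg (Ppos ha hH0 ht).le]
      congr 1
      rw [← Real.rpow_natCast (t * a + (1 - t) * H) 2]; norm_num
  have hC3 : C3 α 1 1 H b
      = b ^ 2 * ∫ t in (0:ℝ)..1, |t ^ α - 1| * ((t * b + (1 - t) * H) ^ 2)⁻¹ := by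
    rw [C3, mul_one]
    congr 1
    · rw [← Real.rpow_natCast b 2]; norm_num
    · apply intervalIntegral.integral_congr
      intro t ht
      rw [huIcc01] at ht
      simp only
      rw [Real.rpow_neg (Ppos hb hH0 ht).le]
      congr 1
      rw [← Real.rpow_natCast (t * b + (1 - t) * H) 2]; norm_num
  rw [hC2, hC3]
  set XA := ∫ t in (0:ℝ)..1, (t ^ α - 1) *
      (f' (a * H / (t * a + (1 - t) * H)) * (a * H * (H - a) / (t * a + (1 - t) * H) ^ 2)) with hXAdef
  set XB := ∫ t in (0:ℝ)..1, (t ^ α - 1) *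
      (f' (b * H / (t * b + (1 - t) * H)) * (b * H * (H - b) / (t * b + (1 - t) * H) ^ 2)) with hXBdef
  set JA := ∫ t in (0:ℝ)..1, |t ^ α - 1| * ((t * a + (1 - t) * H) ^ 2)⁻¹ with hJAdef
  set JB := ∫ t in (0:ℝ)..1, |t ^ α - 1| * ((t * b + (1 - t) * H) ^ 2)⁻¹ with hJBdef
  set MA := max (|f' H| ^ q) (|f' a| ^ q) ^ (1 / q) with hMAdef
  set MB := max (|f' H| ^ q) (|f' b| ^ q) ^ (1 / q) with hMBdef
  have h1 : |(XA + XB) / 2| ≤ (a * H * (H - a) * MA * JA + b * H * (b - H) * MB * JB) / 2 := by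
    rw [abs_div, abs_two]
    have := abs_add_le XA XB
    linarith
  refine le_trans h1 (le_of_eq ?_)
  rw [hH]
  field_simp
  ring
end

section
/- If |f'|^q is harmonically quasi-convex on [a,b] for some fixed q ≥ 1, α > 0, and |f'(u)| ≤ M for all u ∈ [a,b], then for all x ∈ [a,b] the following Ostrowski-type inequality holds: |[((x−a)/(ax))^α + ((b−x)/(bx))^α] f(x) − Γ(α+1) [J_{(1/x)+}^α (f∘g)(1/a) + J_{(1/x)−}^α (f∘g)(1/b)]| ≤ M [ ((x−a)^{α+1}/((ax)^{α−1} x²)) C₂(α,0,1,a,x) + ((b−x)^{α+1}/((bx)^{α−1} b²)) C₃(α,0,1,x,b) ]. -/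
open Real MeasureTheory Set intervalIntegral

private lemma cont_wA {α : ℝ} (hα : 0 < α) (d : ℝ) :
    Continuous fun s : ℝ => (d - s) ^ α := by
  refine continuous_iff_continuousAt.2 fun s => ?_
  exact (Real.continuousAt_rpow_const _ _ (Or.inr hα.le)).comp
    (continuous_const.sub continuous_id).continuousAt

private lemma cont_wB {α : ℝ} (hα : 0 < α) (e : ℝ) :
    Continuous fun s : ℝ => (s - e) ^ α := by
  refine continuous_iff_continuousAt.2 fun s => ?_
  exact (Real.continuousAt_rpow_const _ _ (Or.inr hα.le)).comp
    (continuous_id.sub continuous_const).continuousAt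

private lemma intInt_wA {α : ℝ} (hα : 0 < α) (c d : ℝ) :
    IntervalIntegrable (fun s => (d - s) ^ (α - 1)) volume c d := by
  have h := (intervalIntegrable_rpow' (a := d - c) (b := 0) (r := α - 1)
    (by linarith)).comp_sub_left d
  simpa using h

private lemma intInt_wB {α : ℝ} (hα : 0 < α) (e c : ℝ) :
    IntervalIntegrable (fun s => (s - e) ^ (α - 1)) volume e c := by
  have h := (intervalIntegrable_rpow' (a := 0) (b := c - e) (r := α - 1)
    (by linarith)).comp_sub_right e
  simpa using h

private lemma integral_wA {α : ℝ} (hα : 0 < α) {c d : ℝ} (hcd : c ≤ d) :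
    (∫ s in c..d, (d - s) ^ (α - 1)) = (d - c) ^ α / α := by
  rw [intervalIntegral.integral_comp_sub_left (fun u : ℝ => u ^ (α - 1)) d]
  rw [sub_self, integral_rpow (Or.inl (by linarith))]
  rw [sub_add_cancel, Real.zero_rpow hα.ne']
  ring

private lemma integral_wB {α : ℝ} (hα : 0 < α) {e c : ℝ} (hec : e ≤ c) :
    (∫ s in e..c, (s - e) ^ (α - 1)) = (c - e) ^ α / α := by
  rw [intervalIntegral.integral_comp_sub_right (fun u : ℝ => u ^ (α - 1)) e]
  rw [sub_self, integral_rpow (Or.inl (by linarith))]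
  rw [sub_add_cancel, Real.zero_rpow hα.ne']
  ring


private lemma coreA {α : ℝ} (hα : 0 < α) {c d : ℝ} (hcd : c ≤ d) (F G : ℝ → ℝ)
    (hF : ∀ s ∈ Icc c d, HasDerivAt F (G s) s)
    (hG : IntervalIntegrable G volume c d) :
    (d - c) ^ α * F c - α * ∫ s in c..d, (d - s) ^ (α - 1) * F s
      = - ∫ s in c..d, (d - s) ^ α * G s := by
  have hFcont : ContinuousOn F (Icc c d) := fun s hs =>
    ((hF s hs).continuousAt).continuousWithinAt
  have huIcc : uIcc c d = Icc c d := uIcc_of_le hcd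
  have hI1 : IntervalIntegrable (fun s => (d - s) ^ (α - 1) * F s) volume c d :=
    (intInt_wA hα c d).mul_continuousOn (huIcc ▸ hFcont)
  have hI1' : IntervalIntegrable (fun s => (d - s) ^ (α - 1) * (F s - F c)) volume c d :=
    (intInt_wA hα c d).mul_continuousOn (huIcc ▸ (hFcont.sub continuousOn_const))
  have hI2 : IntervalIntegrable (fun s => (d - s) ^ α * G s) volume c d :=
    hG.continuousOn_mul (cont_wA hα d).continuousOn
  have key : (∫ s in c..d,
      (α * ((d - s) ^ (α - 1) * (F s - F c)) - (d - s) ^ α * G s)) = 0 := by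
    have hH : ∀ s ∈ Ioo c d, HasDerivWithinAt (fun s => -((d - s) ^ α * (F s - F c)))
        (α * ((d - s) ^ (α - 1) * (F s - F c)) - (d - s) ^ α * G s) (Ioi s) s := by
      intro s hs
      have hds : d - s ≠ 0 := by have := hs.2; intro h; linarith [hs.2, sub_eq_zero.1 h]
      have h1 : HasDerivAt (fun s : ℝ => d - s) (-1) s := (hasDerivAt_id s).const_sub d
      have h2 := (Real.hasDerivAt_rpow_const (x := d - s) (p := α) (Or.inl hds)).comp s h1
      have h3 := (h2.mul ((hF s (Ioo_subset_Icc_self hs)).sub_const (F c))).neg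
      simp only [Function.comp_apply, Function.comp] at h3
      refine (HasDerivAt.hasDerivWithinAt ?_)
      convert h3 using 1
      · rfl
      ring
    have hcont : ContinuousOn (fun s => -((d - s) ^ α * (F s - F c))) (Icc c d) :=
      (((cont_wA hα d).continuousOn).mul (hFcont.sub continuousOn_const)).neg
    have hInt : IntervalIntegrable
        (fun s => α * ((d - s) ^ (α - 1) * (F s - F c)) - (d - s) ^ α * G s) volume c d :=
      (hI1'.const_mul α).sub hI2
    have hftc := integral_eq_sub_of_hasDeriv_right_of_le hcd hcont hH hInt
    rw [hftc]
    simp [Real.zero_rpow hα.ne']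
  rw [intervalIntegral.integral_sub (hI1'.const_mul α) hI2] at key
  rw [intervalIntegral.integral_const_mul] at key
  have e1 : (∫ s in c..d, (d - s) ^ (α - 1) * (F s - F c))
      = (∫ s in c..d, (d - s) ^ (α - 1) * F s) - F c * ((d - c) ^ α / α) := by
    have hcongr : (∫ s in c..d, (d - s) ^ (α - 1) * (F s - F c))
        = ∫ s in c..d, ((d - s) ^ (α - 1) * F s - F c * (d - s) ^ (α - 1)) := by
      refine intervalIntegral.integral_congr fun s _ => ?_
      ring
    rw [hcongr, intervalIntegral.integral_sub hI1 ((intInt_wA hα c d).const_mul (F c))]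
    rw [intervalIntegral.integral_const_mul, integral_wA hα hcd]
  rw [e1, mul_sub] at key
  have h2 : α * (F c * ((d - c) ^ α / α)) = F c * (d - c) ^ α := by
    field_simp
  rw [h2] at key
  linarith [key]


private lemma coreB {α : ℝ} (hα : 0 < α) {e c : ℝ} (hec : e ≤ c) (F G : ℝ → ℝ)
    (hF : ∀ s ∈ Icc e c, HasDerivAt F (G s) s)
    (hG : IntervalIntegrable G volume e c) :
    (c - e) ^ α * F c - α * ∫ s in e..c, (s - e) ^ (α - 1) * F s
      = ∫ s in e..c, (s - e) ^ α * G s := by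
  have hFcont : ContinuousOn F (Icc e c) := fun s hs =>
    ((hF s hs).continuousAt).continuousWithinAt
  have huIcc : uIcc e c = Icc e c := uIcc_of_le hec
  have hI1 : IntervalIntegrable (fun s => (s - e) ^ (α - 1) * F s) volume e c :=
    (intInt_wB hα e c).mul_continuousOn (huIcc ▸ hFcont)
  have hI1' : IntervalIntegrable (fun s => (s - e) ^ (α - 1) * (F s - F c)) volume e c :=
    (intInt_wB hα e c).mul_continuousOn (huIcc ▸ (hFcont.sub continuousOn_const))
  have hI2 : IntervalIntegrable (fun s => (s - e) ^ α * G s) volume e c :=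
    hG.continuousOn_mul (cont_wB hα e).continuousOn
  have key : (∫ s in e..c,
      (α * ((s - e) ^ (α - 1) * (F s - F c)) + (s - e) ^ α * G s)) = 0 := by
    have hH : ∀ s ∈ Ioo e c, HasDerivWithinAt (fun s => (s - e) ^ α * (F s - F c))
        (α * ((s - e) ^ (α - 1) * (F s - F c)) + (s - e) ^ α * G s) (Ioi s) s := by
      intro s hs
      have hds : s - e ≠ 0 := by have := hs.1; intro h; linarith [sub_eq_zero.1 h]
      have h1 : HasDerivAt (fun s : ℝ => s - e) (1) s := (hasDerivAt_id s).sub_const e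
      have h2 := (Real.hasDerivAt_rpow_const (x := s - e) (p := α) (Or.inl hds)).comp s h1
      have h3 := h2.mul ((hF s (Ioo_subset_Icc_self hs)).sub_const (F c))
      simp only [Function.comp_apply, Function.comp] at h3
      refine (HasDerivAt.hasDerivWithinAt ?_)
      exact h3.congr_deriv (by ring)
    have hcont : ContinuousOn (fun s => (s - e) ^ α * (F s - F c)) (Icc e c) :=
      ((cont_wB hα e).continuousOn).mul (hFcont.sub continuousOn_const)
    have hInt : IntervalIntegrable
        (fun s => α * ((s - e) ^ (α - 1) * (F s - F c)) + (s - e) ^ α * G s) volume e c :=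
      (hI1'.const_mul α).add hI2
    have hftc := integral_eq_sub_of_hasDeriv_right_of_le hec hcont hH hInt
    rw [hftc]
    simp [Real.zero_rpow hα.ne']
  rw [intervalIntegral.integral_add (hI1'.const_mul α) hI2] at key
  rw [intervalIntegral.integral_const_mul] at key
  have e1 : (∫ s in e..c, (s - e) ^ (α - 1) * (F s - F c))
      = (∫ s in e..c, (s - e) ^ (α - 1) * F s) - F c * ((c - e) ^ α / α) := by
    have hcongr : (∫ s in e..c, (s - e) ^ (α - 1) * (F s - F c))
        = ∫ s in e..c, ((s - e) ^ (α - 1) * F s - F c * (s - e) ^ (α - 1)) := by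
      refine intervalIntegral.integral_congr fun s _ => ?_
      ring
    rw [hcongr, intervalIntegral.integral_sub hI1 ((intInt_wB hα e c).const_mul (F c))]
    rw [intervalIntegral.integral_const_mul, integral_wB hα hec]
  rw [e1, mul_sub] at key
  have h2 : α * (F c * ((c - e) ^ α / α)) = F c * (c - e) ^ α := by
    field_simp
  rw [h2] at key
  linarith [key]


private lemma subA {α a x : ℝ} (hα : 0 < α) (ha : 0 < a) (hax : a ≤ x) :
    (∫ s in (1/x)..(1/a), (1/a - s) ^ α / s ^ 2)
      = (x - a) ^ (α + 1) * (a * x) ^ (1 - α) *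
          ∫ t in (0:ℝ)..1, t ^ α * ((t * a + (1 - t) * x) ^ 2)⁻¹ := by
  have hx : 0 < x := lt_of_lt_of_le ha hax
  have hda : 1/x ≤ 1/a := one_div_le_one_div_of_le ha hax
  set φ : ℝ → ℝ := fun t => 1/a + t * (1/x - 1/a) with hφ
  have hφd : ∀ t ∈ uIcc (0:ℝ) 1, HasDerivAt φ (1/x - 1/a) t := by
    intro t _
    have h := ((hasDerivAt_id t).mul_const (1/x - 1/a)).const_add (1/a)
    rw [one_mul] at h
    exact h
  have himg : φ '' uIcc (0:ℝ) 1 ⊆ Icc (1/x) (1/a) := by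
    rintro y ⟨t, ht, rfl⟩
    rw [uIcc_of_le zero_le_one] at ht
    constructor
    · simp only [hφ]; nlinarith [ht.1, ht.2]
    · simp only [hφ]; nlinarith [ht.1, ht.2]
  have hgc : ContinuousOn (fun s : ℝ => (1/a - s) ^ α / s ^ 2) (Icc (1/x) (1/a)) := by
    refine ((cont_wA hα (1/a)).continuousOn).div
      ((continuous_pow 2).continuousOn) fun s hs => ?_
    have : (0:ℝ) < s := lt_of_lt_of_le (by positivity) hs.1
    positivity
  have hsub := intervalIntegral.integral_comp_smul_deriv' hφd continuousOn_const
    (hgc.mono himg)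
  have hφ0 : φ 0 = 1/a := by simp [hφ]
  have hφ1 : φ 1 = 1/x := by simp [hφ]
  rw [hφ0, hφ1] at hsub
  have hpt : ∀ t ∈ uIcc (0:ℝ) 1, (1/x - 1/a) • ((fun s : ℝ => (1/a - s) ^ α / s ^ 2) ∘ φ) t
      = -((x - a) ^ (α + 1) * (a * x) ^ (1 - α) * (t ^ α * ((t * a + (1 - t) * x) ^ 2)⁻¹)) := by
    intro t ht
    rw [uIcc_of_le zero_le_one] at ht
    have hA : 0 < t * a + (1 - t) * x := by nlinarith [ht.1, ht.2]
    have hφt : φ t = (t * a + (1 - t) * x) / (a * x) := by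
      simp only [hφ]; field_simp; ring
    have h1aφ : 1/a - φ t = t * ((x - a) / (a * x)) := by
      simp only [hφ]; field_simp; ring
    rcases eq_or_lt_of_le hax with heq | hlt
    · subst heq
      simp [sub_self, Real.zero_rpow (show α + 1 ≠ 0 by positivity)]
    · have hP : (0:ℝ) < x - a := by linarith
      have hQ : (0:ℝ) < a * x := by positivity
      rw [smul_eq_mul, Function.comp_apply, h1aφ, hφt]
      rw [Real.mul_rpow ht.1 (by positivity : (0:ℝ) ≤ (x - a) / (a * x))]
      rw [Real.div_rpow hP.le hQ.le, div_pow]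
      rw [show (1:ℝ)/x - 1/a = -((x - a)/(a * x)) by
        rw [div_sub_div _ _ hx.ne' ha.ne', show (1*a - x*1 : ℝ) = -(x - a) by ring,
          show (x*a : ℝ) = a*x by ring, neg_div]]
      rw [Real.rpow_add_one hP.ne']
      have hQa : (a * x) ^ (1 - α) = (a * x) ^ 2 / ((a * x) * (a * x) ^ α) := by
        have h2 : ((a*x):ℝ)^2 = (a*x)^((2:ℕ):ℝ) := (Real.rpow_natCast _ 2).symm
        rw [h2, show (a*x) * (a*x)^α = (a*x)^(α+1) by rw [Real.rpow_add_one hQ.ne']; ring,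
          ← Real.rpow_sub hQ]
        congr 1
        push_cast
        ring
      rw [hQa]
      have h1 : ((a * x):ℝ) ^ α ≠ 0 := (Real.rpow_pos_of_pos hQ α).ne'
      field_simp
  rw [intervalIntegral.integral_congr hpt] at hsub
  rw [intervalIntegral.integral_neg, intervalIntegral.integral_const_mul] at hsub
  have hswap : (∫ s in (1/a)..(1/x), (1/a - s) ^ α / s ^ 2)
      = -∫ s in (1/x)..(1/a), (1/a - s) ^ α / s ^ 2 :=
    intervalIntegral.integral_symm _ _
  rw [hswap] at hsub
  linarith [hsub]

private lemma subB {α x b : ℝ} (hα : 0 < α) (hx : 0 < x) (hxb : x ≤ b) :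
    (∫ s in (1/b)..(1/x), (s - 1/b) ^ α / s ^ 2)
      = (b - x) ^ (α + 1) * (b * x) ^ (1 - α) *
          ∫ t in (0:ℝ)..1, t ^ α * ((t * b + (1 - t) * x) ^ 2)⁻¹ := by
  have hb : 0 < b := lt_of_lt_of_le hx hxb
  have hbx : 1/b ≤ 1/x := one_div_le_one_div_of_le hx hxb
  set φ : ℝ → ℝ := fun t => 1/b + t * (1/x - 1/b) with hφ
  have hφd : ∀ t ∈ uIcc (0:ℝ) 1, HasDerivAt φ (1/x - 1/b) t := by
    intro t _
    have h := ((hasDerivAt_id t).mul_const (1/x - 1/b)).const_add (1/b)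
    rw [one_mul] at h
    exact h
  have himg : φ '' uIcc (0:ℝ) 1 ⊆ Icc (1/b) (1/x) := by
    rintro y ⟨t, ht, rfl⟩
    rw [uIcc_of_le zero_le_one] at ht
    constructor
    · simp only [hφ]; nlinarith [ht.1, ht.2]
    · simp only [hφ]; nlinarith [ht.1, ht.2]
  have hgc : ContinuousOn (fun s : ℝ => (s - 1/b) ^ α / s ^ 2) (Icc (1/b) (1/x)) := by
    refine ((cont_wB hα (1/b)).continuousOn).div
      ((continuous_pow 2).continuousOn) fun s hs => ?_
    have : (0:ℝ) < s := lt_of_lt_of_le (by positivity) hs.1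
    positivity
  have hsub := intervalIntegral.integral_comp_smul_deriv' hφd continuousOn_const
    (hgc.mono himg)
  have hφ0 : φ 0 = 1/b := by simp [hφ]
  have hφ1 : φ 1 = 1/x := by simp [hφ]
  rw [hφ0, hφ1] at hsub
  have hpt : ∀ t ∈ uIcc (0:ℝ) 1, (1/x - 1/b) • ((fun s : ℝ => (s - 1/b) ^ α / s ^ 2) ∘ φ) t
      = (b - x) ^ (α + 1) * (b * x) ^ (1 - α) * (t ^ α * ((t * b + (1 - t) * x) ^ 2)⁻¹) := by
    intro t ht
    rw [uIcc_of_le zero_le_one] at ht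
    have hA : 0 < t * b + (1 - t) * x := by nlinarith [ht.1, ht.2]
    have hφt : φ t = (t * b + (1 - t) * x) / (b * x) := by
      simp only [hφ]; field_simp; ring
    have h1bφ : φ t - 1/b = t * ((b - x) / (b * x)) := by
      simp only [hφ]; field_simp; ring
    rcases eq_or_lt_of_le hxb with heq | hlt
    · subst heq
      simp [sub_self, Real.zero_rpow (show α + 1 ≠ 0 by positivity)]
    · have hP : (0:ℝ) < b - x := by linarith
      have hQ : (0:ℝ) < b * x := by positivity
      rw [smul_eq_mul, Function.comp_apply, h1bφ, hφt]
      rw [Real.mul_rpow ht.1 (by positivity : (0:ℝ) ≤ (b - x) / (b * x))]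
      rw [Real.div_rpow hP.le hQ.le, div_pow]
      rw [show (1:ℝ)/x - 1/b = (b - x)/(b * x) by
        rw [div_sub_div _ _ hx.ne' hb.ne', show (1*b - x*1 : ℝ) = b - x by ring,
          show (x*b : ℝ) = b*x by ring]]
      rw [Real.rpow_add_one hP.ne']
      have hQa : (b * x) ^ (1 - α) = (b * x) ^ 2 / ((b * x) * (b * x) ^ α) := by
        have h2 : ((b*x):ℝ)^2 = (b*x)^((2:ℕ):ℝ) := (Real.rpow_natCast _ 2).symm
        rw [h2, show (b*x) * (b*x)^α = (b*x)^(α+1) by rw [Real.rpow_add_one hQ.ne']; ring,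
          ← Real.rpow_sub hQ]
        congr 1
        push_cast
        ring
      rw [hQa]
      have h1 : ((b * x):ℝ) ^ α ≠ 0 := (Real.rpow_pos_of_pos hQ α).ne'
      field_simp
  rw [intervalIntegral.integral_congr hpt] at hsub
  rw [intervalIntegral.integral_const_mul] at hsub
  linarith [hsub]


private lemma Cgen {α : ℝ} (hα : 0 < α) {u v : ℝ} (hu : 0 < u) (hv : 0 < v) (y : ℝ) :
    y ^ ((2:ℝ) * 1) * (∫ t in (0:ℝ)..1, |t ^ α - 0| * (t * u + (1 - t) * v) ^ (-((2:ℝ) * 1)))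
      = y ^ 2 * ∫ t in (0:ℝ)..1, t ^ α * ((t * u + (1 - t) * v) ^ 2)⁻¹ := by
  congr 1
  · rw [show ((2:ℝ) * 1) = ((2:ℕ):ℝ) by norm_num, Real.rpow_natCast]
  · refine intervalIntegral.integral_congr fun t ht => ?_
    rw [uIcc_of_le zero_le_one] at ht
    have hA : 0 < t * u + (1 - t) * v := by
      rcases eq_or_lt_of_le ht.1 with h | h
      · rw [← h]; simpa using hv
      · nlinarith [mul_pos h hu, mul_nonneg (sub_nonneg.2 ht.2) hv.le]
    rw [sub_zero, abs_of_nonneg (Real.rpow_nonneg ht.1 α)]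
    congr 1
    rw [show (-((2:ℝ) * 1)) = -(((2:ℕ):ℝ)) by norm_num, Real.rpow_neg hA.le,
      Real.rpow_natCast]

private lemma sideA (f f' : ℝ → ℝ) {a b x α M : ℝ} (ha : 0 < a) (hax : a ≤ x) (hxb : x ≤ b)
    (hf : ∀ u ∈ Icc a b, HasDerivAt f (f' u) u)
    (hM : ∀ u ∈ Icc a b, |f' u| ≤ M) (hα : 0 < α) :
    |((x - a) / (a * x)) ^ α * f x
        - Real.Gamma (α + 1) * RLplus α (1 / x) (1 / a) (fun u => f (1 / u))|
      ≤ M * ((x - a) ^ (α + 1) / ((a * x) ^ (α - 1) * x ^ 2) * C2 α 0 1 a x) := by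
  have hx0 : 0 < x := lt_of_lt_of_le ha hax
  have hb0 : 0 < b := lt_of_lt_of_le hx0 hxb
  have hcd : 1/x ≤ 1/a := one_div_le_one_div_of_le ha hax
  have hc0 : 0 < 1/x := by positivity
  have hmem : ∀ s ∈ Icc (1/x) (1/a), 1/s ∈ Icc a b := by
    intro s hs
    have hs0 : 0 < s := lt_of_lt_of_le hc0 hs.1
    constructor
    · have h := one_div_le_one_div_of_le hs0 hs.2
      rwa [one_div_one_div] at h
    · have h := one_div_le_one_div_of_le hc0 hs.1
      rw [one_div_one_div] at h
      exact le_trans h hxb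
  have hFd : ∀ s ∈ Icc (1/x) (1/a),
      HasDerivAt (fun u : ℝ => f (1/u)) (-(f' (1/s) / s^2)) s := by
    intro s hs
    have hs0 : 0 < s := lt_of_lt_of_le hc0 hs.1
    have hinv : HasDerivAt (fun u : ℝ => 1/u) (-(s^2)⁻¹) s := by
      simpa [one_div] using hasDerivAt_inv hs0.ne'
    have h1 := (hf (1/s) (hmem s hs)).comp s hinv
    exact h1.congr_deriv (by ring)
  have hGbd : ∀ s ∈ Icc (1/x) (1/a), |(-(f' (1/s) / s^2))| ≤ M / s^2 := by
    intro s hs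
    have hs0 : 0 < s := lt_of_lt_of_le hc0 hs.1
    rw [abs_neg, abs_div, abs_of_pos (pow_pos hs0 2)]
    gcongr
    exact hM _ (hmem s hs)
  have hGint : IntervalIntegrable (fun s => -(f' (1/s) / s^2)) volume (1/x) (1/a) := by
    have hd0 : IntegrableOn (deriv (fun u : ℝ => f (1/u))) (Ioc (1/x) (1/a)) volume := by
      refine Integrable.mono' (g := fun _ => M / (1/x)^2)
        (integrableOn_const measure_Ioc_lt_top.ne)
        ((measurable_deriv _).aestronglyMeasurable.restrict) ?_
      refine (ae_restrict_iff' measurableSet_Ioc).2 (Filter.Eventually.of_forall fun s hs => ?_)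
      have hsIcc := Ioc_subset_Icc_self hs
      rw [Real.norm_eq_abs, (hFd s hsIcc).deriv]
      refine le_trans (hGbd s hsIcc) ?_
      have hs0 : 0 < s := lt_of_lt_of_le hc0 hsIcc.1
      have hM0 : 0 ≤ M := le_trans (abs_nonneg _) (hM a ⟨le_refl a, le_trans hax hxb⟩)
      exact div_le_div_of_nonneg_left hM0 (pow_pos hc0 2) (pow_le_pow_left₀ hc0.le hsIcc.1 2)
    refine (intervalIntegrable_iff_integrableOn_Ioc_of_le hcd).2 ?_
    exact hd0.congr_fun (fun s hs => (hFd s (Ioc_subset_Icc_self hs)).deriv) measurableSet_Ioc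
  have hcore := coreA hα hcd (fun u : ℝ => f (1/u)) (fun s => -(f' (1/s) / s^2)) hFd hGint
  beta_reduce at hcore
  rw [one_div_one_div x] at hcore
  have hK : (x - a) / (a * x) = 1/a - 1/x := by
    rw [div_sub_div _ _ ha.ne' hx0.ne', show (1*x - a*1 : ℝ) = x - a by ring]
  have hGam : Real.Gamma (α + 1) * RLplus α (1/x) (1/a) (fun u => f (1/u))
      = α * ∫ s in (1/x)..(1/a), (1/a - s) ^ (α - 1) * f (1/s) := by
    simp only [RLplus, Real.Gamma_add_one hα.ne']
    have hΓ : Real.Gamma α ≠ 0 := (Real.Gamma_pos_of_pos hα).ne'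
    field_simp
  calc |((x - a) / (a * x)) ^ α * f x
        - Real.Gamma (α + 1) * RLplus α (1 / x) (1 / a) (fun u => f (1 / u))|
      = |∫ s in (1/x)..(1/a), (1/a - s) ^ α * (-(f' (1/s) / s^2))| := by
        rw [hK, hGam, hcore, abs_neg]
    _ ≤ ∫ s in (1/x)..(1/a), |(1/a - s) ^ α * (-(f' (1/s) / s^2))| :=
        intervalIntegral.abs_integral_le_integral_abs hcd
    _ ≤ ∫ s in (1/x)..(1/a), (1/a - s) ^ α * (M / s^2) := by
        refine intervalIntegral.integral_mono_on hcd ?_ ?_ ?_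
        · exact (hGint.continuousOn_mul (cont_wA hα (1/a)).continuousOn).abs
        · refine ContinuousOn.intervalIntegrable ?_
          rw [uIcc_of_le hcd]
          refine ((cont_wA hα (1/a)).continuousOn).mul
            ((continuousOn_const).div ((continuous_pow 2).continuousOn) fun s hs => ?_)
          have hs0 : (0:ℝ) < s := lt_of_lt_of_le hc0 hs.1
          positivity
        · intro s hs
          rw [abs_mul, abs_of_nonneg (Real.rpow_nonneg (sub_nonneg.2 hs.2) α)]
          exact mul_le_mul_of_nonneg_left (hGbd s hs)
            (Real.rpow_nonneg (sub_nonneg.2 hs.2) α)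
    _ = M * ∫ s in (1/x)..(1/a), (1/a - s) ^ α / s^2 := by
        rw [← intervalIntegral.integral_const_mul]
        refine intervalIntegral.integral_congr fun s _ => ?_
        ring
    _ = M * ((x - a) ^ (α + 1) * (a * x) ^ (1 - α) *
          ∫ t in (0:ℝ)..1, t ^ α * ((t * a + (1 - t) * x) ^ 2)⁻¹) := by
        rw [subA hα ha hax]
    _ = M * ((x - a) ^ (α + 1) / ((a * x) ^ (α - 1) * x ^ 2) * C2 α 0 1 a x) := by
        have hC : C2 α 0 1 a x
            = x ^ 2 * ∫ t in (0:ℝ)..1, t ^ α * ((t * a + (1 - t) * x) ^ 2)⁻¹ := by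
          rw [C2]
          exact Cgen hα ha hx0 x
        rw [hC]
        have hQ : (0:ℝ) < a * x := by positivity
        have hinv : (a * x) ^ (1 - α) = ((a * x) ^ (α - 1))⁻¹ := by
          rw [show (1 - α : ℝ) = -(α - 1) by ring, Real.rpow_neg hQ.le]
        rw [hinv]
        have hne : ((a * x):ℝ) ^ (α - 1) ≠ 0 := (Real.rpow_pos_of_pos hQ _).ne'
        field_simp

private lemma sideB (f f' : ℝ → ℝ) {a b x α M : ℝ} (ha : 0 < a) (hax : a ≤ x) (hxb : x ≤ b)
    (hf : ∀ u ∈ Icc a b, HasDerivAt f (f' u) u)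
    (hM : ∀ u ∈ Icc a b, |f' u| ≤ M) (hα : 0 < α) :
    |((b - x) / (b * x)) ^ α * f x
        - Real.Gamma (α + 1) * RLminus α (1 / x) (1 / b) (fun u => f (1 / u))|
      ≤ M * ((b - x) ^ (α + 1) / ((b * x) ^ (α - 1) * b ^ 2) * C3 α 0 1 x b) := by
  have hx0 : 0 < x := lt_of_lt_of_le ha hax
  have hb0 : 0 < b := lt_of_lt_of_le hx0 hxb
  have hec : 1/b ≤ 1/x := one_div_le_one_div_of_le hx0 hxb
  have he0 : 0 < 1/b := by positivity
  have hmem : ∀ s ∈ Icc (1/b) (1/x), 1/s ∈ Icc a b := by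
    intro s hs
    have hs0 : 0 < s := lt_of_lt_of_le he0 hs.1
    constructor
    · have h := one_div_le_one_div_of_le hs0 hs.2
      rw [one_div_one_div] at h
      exact le_trans hax h
    · have h := one_div_le_one_div_of_le he0 hs.1
      rwa [one_div_one_div] at h
  have hFd : ∀ s ∈ Icc (1/b) (1/x),
      HasDerivAt (fun u : ℝ => f (1/u)) (-(f' (1/s) / s^2)) s := by
    intro s hs
    have hs0 : 0 < s := lt_of_lt_of_le he0 hs.1
    have hinv : HasDerivAt (fun u : ℝ => 1/u) (-(s^2)⁻¹) s := by
      simpa [one_div] using hasDerivAt_inv hs0.ne'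
    have h1 := (hf (1/s) (hmem s hs)).comp s hinv
    exact h1.congr_deriv (by ring)
  have hGbd : ∀ s ∈ Icc (1/b) (1/x), |(-(f' (1/s) / s^2))| ≤ M / s^2 := by
    intro s hs
    have hs0 : 0 < s := lt_of_lt_of_le he0 hs.1
    rw [abs_neg, abs_div, abs_of_pos (pow_pos hs0 2)]
    gcongr
    exact hM _ (hmem s hs)
  have hGint : IntervalIntegrable (fun s => -(f' (1/s) / s^2)) volume (1/b) (1/x) := by
    have hd0 : IntegrableOn (deriv (fun u : ℝ => f (1/u))) (Ioc (1/b) (1/x)) volume := by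
      refine Integrable.mono' (g := fun _ => M / (1/b)^2)
        (integrableOn_const measure_Ioc_lt_top.ne)
        ((measurable_deriv _).aestronglyMeasurable.restrict) ?_
      refine (ae_restrict_iff' measurableSet_Ioc).2 (Filter.Eventually.of_forall fun s hs => ?_)
      have hsIcc := Ioc_subset_Icc_self hs
      rw [Real.norm_eq_abs, (hFd s hsIcc).deriv]
      refine le_trans (hGbd s hsIcc) ?_
      have hs0 : 0 < s := lt_of_lt_of_le he0 hsIcc.1
      have hM0 : 0 ≤ M := le_trans (abs_nonneg _) (hM a ⟨le_refl a, le_trans hax hxb⟩)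
      exact div_le_div_of_nonneg_left hM0 (pow_pos he0 2) (pow_le_pow_left₀ he0.le hsIcc.1 2)
    refine (intervalIntegrable_iff_integrableOn_Ioc_of_le hec).2 ?_
    exact hd0.congr_fun (fun s hs => (hFd s (Ioc_subset_Icc_self hs)).deriv) measurableSet_Ioc
  have hcore := coreB hα hec (fun u : ℝ => f (1/u)) (fun s => -(f' (1/s) / s^2)) hFd hGint
  beta_reduce at hcore
  rw [one_div_one_div x] at hcore
  have hK : (b - x) / (b * x) = 1/x - 1/b := by
    rw [div_sub_div _ _ hx0.ne' hb0.ne', show (1*b - x*1 : ℝ) = b - x by ring,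
      show (x*b : ℝ) = b*x by ring]
  have hGam : Real.Gamma (α + 1) * RLminus α (1/x) (1/b) (fun u => f (1/u))
      = α * ∫ s in (1/b)..(1/x), (s - 1/b) ^ (α - 1) * f (1/s) := by
    simp only [RLminus, Real.Gamma_add_one hα.ne']
    have hΓ : Real.Gamma α ≠ 0 := (Real.Gamma_pos_of_pos hα).ne'
    field_simp
    refine intervalIntegral.integral_congr fun t _ => ?_
    ring_nf
  calc |((b - x) / (b * x)) ^ α * f x
        - Real.Gamma (α + 1) * RLminus α (1 / x) (1 / b) (fun u => f (1 / u))|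
      = |∫ s in (1/b)..(1/x), (s - 1/b) ^ α * (-(f' (1/s) / s^2))| := by
        rw [hK, hGam, hcore]
    _ ≤ ∫ s in (1/b)..(1/x), |(s - 1/b) ^ α * (-(f' (1/s) / s^2))| :=
        intervalIntegral.abs_integral_le_integral_abs hec
    _ ≤ ∫ s in (1/b)..(1/x), (s - 1/b) ^ α * (M / s^2) := by
        refine intervalIntegral.integral_mono_on hec ?_ ?_ ?_
        · exact (hGint.continuousOn_mul (cont_wB hα (1/b)).continuousOn).abs
        · refine ContinuousOn.intervalIntegrable ?_
          rw [uIcc_of_le hec]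
          refine ((cont_wB hα (1/b)).continuousOn).mul
            ((continuousOn_const).div ((continuous_pow 2).continuousOn) fun s hs => ?_)
          have hs0 : (0:ℝ) < s := lt_of_lt_of_le he0 hs.1
          positivity
        · intro s hs
          rw [abs_mul, abs_of_nonneg (Real.rpow_nonneg (sub_nonneg.2 hs.1) α)]
          exact mul_le_mul_of_nonneg_left (hGbd s hs)
            (Real.rpow_nonneg (sub_nonneg.2 hs.1) α)
    _ = M * ∫ s in (1/b)..(1/x), (s - 1/b) ^ α / s^2 := by
        rw [← intervalIntegral.integral_const_mul]
        refine intervalIntegral.integral_congr fun s _ => ?_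
        ring
    _ = M * ((b - x) ^ (α + 1) * (b * x) ^ (1 - α) *
          ∫ t in (0:ℝ)..1, t ^ α * ((t * b + (1 - t) * x) ^ 2)⁻¹) := by
        rw [subB hα hx0 hxb]
    _ = M * ((b - x) ^ (α + 1) / ((b * x) ^ (α - 1) * b ^ 2) * C3 α 0 1 x b) := by
        have hC : C3 α 0 1 x b
            = b ^ 2 * ∫ t in (0:ℝ)..1, t ^ α * ((t * b + (1 - t) * x) ^ 2)⁻¹ := by
          rw [C3]
          exact Cgen hα hb0 hx0 b
        rw [hC]
        have hQ : (0:ℝ) < b * x := by positivity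
        have hinv : (b * x) ^ (1 - α) = ((b * x) ^ (α - 1))⁻¹ := by
          rw [show (1 - α : ℝ) = -(α - 1) by ring, Real.rpow_neg hQ.le]
        rw [hinv]
        have hne : ((b * x):ℝ) ^ (α - 1) ≠ 0 := (Real.rpow_pos_of_pos hQ _).ne'
        field_simp


theorem stmt_14 (f f' : ℝ → ℝ) (a b : ℝ) (ha : 0 < a) (hab : a < b)
    (hf : ∀ u ∈ Icc a b, HasDerivAt f (f' u) u)
    (hint : IntervalIntegrable f' volume a b)
    (q : ℝ) (hq : 1 ≤ q)
    (hqc : HarmQuasiConvexOn a b (fun u => |f' u| ^ q))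
    (α : ℝ) (hα : 0 < α) (M : ℝ) (hM : ∀ u ∈ Icc a b, |f' u| ≤ M)
    (x : ℝ) (hx : x ∈ Icc a b) :
    |(((x - a) / (a * x)) ^ α + ((b - x) / (b * x)) ^ α) * f x - Real.Gamma (α + 1) * (RLplus α (1 / x) (1 / a) (fun u => f (1 / u)) + RLminus α (1 / x) (1 / b) (fun u => f (1 / u)))| ≤
      M * ((x - a) ^ (α + 1) / ((a * x) ^ (α - 1) * x ^ 2) * C2 α 0 1 a x
        + (b - x) ^ (α + 1) / ((b * x) ^ (α - 1) * b ^ 2) * C3 α 0 1 x b) := by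
  have hax : a ≤ x := hx.1
  have hxb : x ≤ b := hx.2
  have key : (((x - a) / (a * x)) ^ α + ((b - x) / (b * x)) ^ α) * f x
      - Real.Gamma (α + 1) * (RLplus α (1 / x) (1 / a) (fun u => f (1 / u))
        + RLminus α (1 / x) (1 / b) (fun u => f (1 / u)))
    = (((x - a) / (a * x)) ^ α * f x
        - Real.Gamma (α + 1) * RLplus α (1 / x) (1 / a) (fun u => f (1 / u)))
      + (((b - x) / (b * x)) ^ α * f x
        - Real.Gamma (α + 1) * RLminus α (1 / x) (1 / b) (fun u => f (1 / u))) := by ring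
  rw [key]
  refine le_trans (abs_add_le _ _) ?_
  rw [mul_add]
  exact add_le_add (sideA f f' ha hax hxb hf hM hα) (sideB f f' ha hax hxb hf hM hα)
end
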